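/- arXiv:1209.5454 — 8 statements merged into one kernel-verified Lean document; each statement's English description precedes it below -/
import Mathlib

section
/- Let X be a topological space and let F be a finite subset of X such that X ∖ F is disconnected. Then X is not (|F| + 2)-strongly arc connected. -/
open Set Topology

/-- `X` is `n`-strongly arc connected: for every `n` distinct points there is an
arc (topological embedding of `[0,1]`) visiting them in order. -/
def NSac (X : Type*) [TopologicalSpace X] (n : ℕ) : Prop :=
  ∀ x : Fin n → X, Function.Injective x →
    ∃ (α : unitInterval → X) (t : Fin n → unitInterval),
      Topology.IsEmbedding α ∧ StrictMono t ∧ ∀ i, α (t i) = x i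

/-- If `F` is a finite subset of `X` such that `X \ F` is disconnected,
then `X` is not `(|F| + 2)`-strongly arc connected. -/
theorem not_nsac_of_finite_cut (X : Type*) [TopologicalSpace X] (F : Set X)
    (hF : F.Finite) (hdis : ¬ IsPreconnected Fᶜ) :
    ¬ NSac X (F.ncard + 2) := by
  intro hsac
  rw [IsPreconnected] at hdis
  push_neg at hdis
  obtain ⟨U, V, hU, hV, hUV, ⟨a, haF, haU⟩, ⟨b, hbF, hbV⟩, hempty⟩ := hdis
  have hab : a ≠ b := by
    rintro rfl
    exact (Set.eq_empty_iff_forall_notMem.mp hempty) a ⟨haF, haU, hbV⟩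
  -- enumerate F
  haveI : Finite ↥F := hF.to_subtype
  obtain ⟨e⟩ : Nonempty (↥F ≃ Fin F.ncard) :=
    ⟨Finite.equivFinOfCardEq (Nat.card_coe_set_eq F)⟩
  set f : Fin F.ncard → X := fun i => (e.symm i : X) with hf
  have hfF : ∀ i, f i ∈ F := fun i => (e.symm i).2
  have hf_inj : Function.Injective f := fun i j h =>
    e.symm.injective (Subtype.ext h)
  have hf_surj : ∀ y ∈ F, ∃ i, f i = y := fun y hy =>
    ⟨e ⟨y, hy⟩, by simp [hf]⟩
  -- the tuple of points
  set x : Fin (F.ncard + 2) → X := Fin.cons a (Fin.cons b f) with hx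
  have hxinj : Function.Injective x := by
    rw [hx, Fin.cons_injective_iff, Fin.cons_injective_iff, Fin.range_cons]
    refine ⟨?_, ?_, hf_inj⟩
    · rintro (h | ⟨i, rfl⟩)
      · exact hab h
      · exact haF (hfF _)
    · rintro ⟨i, rfl⟩
      exact hbF (hfF _)
  obtain ⟨α, t, hemb, hmono, hαt⟩ := hsac x hxinj
  have h0 : α (t 0) = a := by
    have := hαt 0; rwa [hx, Fin.cons_zero] at this
  have h1 : α (t 1) = b := by
    have := hαt 1
    rwa [hx, ← Fin.succ_zero_eq_one, Fin.cons_succ, Fin.cons_zero] at this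
  have hFi : ∀ i : Fin F.ncard, α (t i.succ.succ) = f i := by
    intro i
    have := hαt i.succ.succ
    rwa [hx, Fin.cons_succ, Fin.cons_succ] at this
  have havoid : ∀ s ∈ Icc (t 0) (t 1), α s ∈ Fᶜ := by
    intro s hs hmem
    obtain ⟨i, hi⟩ := hf_surj _ hmem
    have hst : s = t i.succ.succ := hemb.injective (by rw [hFi i, hi])
    have hlt : t 1 < t i.succ.succ := by
      refine hmono ?_
      rw [Fin.lt_def]
      simp [Fin.val_succ]
    exact absurd (hst ▸ hs.2) (not_le.mpr hlt)
  have h01 : t 0 < t 1 := hmono (by simp [Fin.lt_def])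
  haveI : Fact ((0:ℝ) ≤ 1) := ⟨zero_le_one⟩
  have hK : IsPreconnected (α '' Icc (t 0) (t 1)) :=
    isPreconnected_Icc.image α hemb.continuous.continuousOn
  have hne1 : (α '' Icc (t 0) (t 1) ∩ U).Nonempty :=
    ⟨a, ⟨t 0, ⟨le_refl _, h01.le⟩, h0⟩, haU⟩
  have hne2 : (α '' Icc (t 0) (t 1) ∩ V).Nonempty :=
    ⟨b, ⟨t 1, ⟨h01.le, le_refl _⟩, h1⟩, hbV⟩
  have hsub : α '' Icc (t 0) (t 1) ⊆ U ∪ V := by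
    rintro y ⟨s, hs, rfl⟩
    exact hUV (havoid s hs)
  obtain ⟨y, ⟨s, hs, rfl⟩, hyUV⟩ := hK U V hU hV hsub hne1 hne2
  exact (Set.eq_empty_iff_forall_notMem.mp hempty) (α s) ⟨havoid s hs, hyUV⟩
end

section
/- Let X be a topological space and let U be a nonempty open subset of X whose closure is not all of X and whose topological boundary ∂U is finite. Then X is not (|∂U| + 2)-strongly arc connected. -/
open Set Topology

/-- A preconnected set meeting an open set `U` and the complement of its closure
meets the frontier of `U`. -/
lemma preconnected_inter_frontier {X : Type*} [TopologicalSpace X] {C U : Set X}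
    (hU : IsOpen U) (hC : IsPreconnected C) (h1 : (C ∩ U).Nonempty) (h2 : (C \ closure U).Nonempty) :
    (C ∩ frontier U).Nonempty := by
  by_contra h
  rw [Set.not_nonempty_iff_eq_empty] at h
  have hsub : C ⊆ U ∪ (closure U)ᶜ := by
    intro x hx
    by_cases hx' : x ∈ closure U
    · rcases (closure_eq_self_union_frontier U ▸ hx' : x ∈ U ∪ frontier U) with h' | h'
      · exact Or.inl h'
      · exact absurd (Set.eq_empty_iff_forall_notMem.1 h x ⟨hx, h'⟩) (fun h => h)
    · exact Or.inr hx'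
  have := hC U (closure U)ᶜ hU (isClosed_closure.isOpen_compl) hsub h1 h2
  obtain ⟨x, -, hxU, hxc⟩ := this
  exact hxc (subset_closure hxU)

lemma unitInterval_Icc_preconnected (a b : unitInterval) :
    IsPreconnected (Set.Icc a b) := by
  rw [← Topology.IsInducing.subtypeVal.isPreconnected_image]
  have himg : (Subtype.val '' Set.Icc a b) = Set.Icc (a : ℝ) (b : ℝ) := by
    ext z
    constructor
    · rintro ⟨y, hy, rfl⟩
      exact ⟨Subtype.coe_le_coe.2 hy.1, Subtype.coe_le_coe.2 hy.2⟩
    · intro hz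
      exact ⟨⟨z, ⟨a.2.1.trans hz.1, hz.2.trans b.2.2⟩⟩,
        ⟨Subtype.coe_le_coe.1 hz.1, Subtype.coe_le_coe.1 hz.2⟩, rfl⟩
  rw [himg]
  exact isPreconnected_Icc

/-- If `U` is a nonempty open set whose closure is not all of `X` and whose
boundary is finite, then `X` is not `(|∂U| + 2)`-strongly arc connected. -/
theorem not_nsac_of_open_finite_boundary (X : Type*) [TopologicalSpace X] (U : Set X)
    (hUopen : IsOpen U) (hUne : U.Nonempty) (hUnd : closure U ≠ Set.univ)
    (hbd : (frontier U).Finite) :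
    ¬ NSac X ((frontier U).ncard + 2) := by
  intro hsac
  obtain ⟨a, ha⟩ := hUne
  obtain ⟨b, hb⟩ : ((closure U)ᶜ).Nonempty := by
    rwa [Set.nonempty_compl]
  set n := (frontier U).ncard with hn
  haveI : Fintype (frontier U) := hbd.fintype
  have hcard : Fintype.card (frontier U) = n := by
    rw [hn, ← Nat.card_coe_set_eq, Nat.card_eq_fintype_card]
  obtain ⟨e⟩ : Nonempty (Fin n ≃ frontier U) := ⟨(Fintype.equivFinOfCardEq hcard).symm⟩
  have haf : a ∉ frontier U := by
    rw [hUopen.frontier_eq]; exact fun h => h.2 ha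
  have hbf : b ∉ frontier U := fun h => hb (frontier_subset_closure h)
  have hab : a ≠ b := fun h => hb (h ▸ subset_closure ha)
  -- the test tuple
  set f : Fin n → X := fun i => (e i : X) with hf
  have hfinj : Function.Injective f := fun i j h =>
    e.injective (Subtype.ext h)
  set x : Fin (n + 2) → X := Fin.cons a (Fin.cons b f) with hx
  have hxinj : Function.Injective x := by
    rw [hx, Fin.cons_injective_iff, Fin.cons_injective_iff]
    refine ⟨?_, ?_, hfinj⟩
    · rintro ⟨i, hi⟩
      rcases Fin.eq_zero_or_eq_succ i with rfl | ⟨j, rfl⟩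
      · rw [Fin.cons_zero] at hi
        exact hab hi.symm
      · rw [Fin.cons_succ] at hi
        exact haf (hi ▸ (e j).2)
    · rintro ⟨j, hj⟩
      exact hbf (hj ▸ (e j).2)
  obtain ⟨α, t, hemb, hmono, hval⟩ := hsac x hxinj
  have h01 : (0 : Fin (n + 2)) < 1 := by
    simp [Fin.lt_def]
  have hα0 : α (t 0) = a := by
    rw [hval 0, hx]; simp
  have hα1 : α (t 1) = b := by
    have : (1 : Fin (n + 2)) = Fin.succ 0 := by
      ext; simp
    rw [hval 1, hx, this, Fin.cons_succ, Fin.cons_zero]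
  -- the arc segment from t 0 to t 1 crosses the frontier
  have hseg : IsPreconnected (α '' Set.Icc (t 0) (t 1)) :=
    (unitInterval_Icc_preconnected (t 0) (t 1)).image α hemb.continuous.continuousOn
  have hmem0 : α (t 0) ∈ α '' Set.Icc (t 0) (t 1) :=
    ⟨t 0, ⟨le_refl _, (hmono h01).le⟩, rfl⟩
  have hmem1 : α (t 1) ∈ α '' Set.Icc (t 0) (t 1) :=
    ⟨t 1, ⟨(hmono h01).le, le_refl _⟩, rfl⟩
  obtain ⟨y, ⟨⟨s, hs, hsy⟩, hyf⟩⟩ :=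
    preconnected_inter_frontier hUopen hseg
      ⟨α (t 0), hmem0, hα0 ▸ ha⟩
      ⟨α (t 1), hmem1, hα1 ▸ hb⟩
  -- y is a frontier point, so y = f j for some j, hence y = α (t j.succ.succ)
  obtain ⟨j, hj⟩ := e.surjective ⟨y, hyf⟩
  have hyval : α (t (Fin.succ (Fin.succ j))) = y := by
    rw [hval, hx, Fin.cons_succ, Fin.cons_succ]
    simp only [hf, hj]
  have hseq : s = t (Fin.succ (Fin.succ j)) := hemb.injective (hsy.trans hyval.symm)
  have h1j : (1 : Fin (n + 2)) < Fin.succ (Fin.succ j) := by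
    simp [Fin.lt_def]
  have hslt : s < t 1 := by
    rcases lt_or_eq_of_le hs.2 with h | h
    · exact h
    · exfalso
      apply hbf
      rw [← hα1, ← h, hsy]
      exact hyf
  exact absurd (hseq ▸ hslt) (not_lt.2 (hmono h1j).le)
end

section
/- If a continuum X contains a free arc, then X is not 4-strongly arc connected. -/
open Set Topology

noncomputable instance : ConditionallyCompleteLinearOrder unitInterval := by
  haveI : Inhabited ↥unitInterval := ⟨0⟩
  exact ordConnectedSubsetConditionallyCompleteLinearOrder unitInterval

noncomputable def q1 : unitInterval := ⟨1/5, by norm_num⟩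
noncomputable def q2 : unitInterval := ⟨2/5, by norm_num⟩
noncomputable def q3 : unitInterval := ⟨3/5, by norm_num⟩
noncomputable def q4 : unitInterval := ⟨4/5, by norm_num⟩

lemma hq12 : q1 < q2 := by rw [← Subtype.coe_lt_coe]; norm_num [q1, q2]
lemma hq23 : q2 < q3 := by rw [← Subtype.coe_lt_coe]; norm_num [q2, q3]
lemma hq24 : q2 < q4 := by rw [← Subtype.coe_lt_coe]; norm_num [q2, q4]
lemma hq01 : (0 : unitInterval) < q1 := by rw [← Subtype.coe_lt_coe]; norm_num [q1]
lemma hq2top : ¬ ((1:unitInterval) ≤ q2) := by rw [← Subtype.coe_le_coe]; norm_num [q2]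
lemma hq20 : q2 ≠ 0 := by intro h; have := congrArg Subtype.val h; norm_num [q2] at this
lemma hq21 : q2 ≠ 1 := by intro h; have := congrArg Subtype.val h; norm_num [q2] at this

/-- A continuous injective function on an order-connected subset of `unitInterval`
is strictly monotone or strictly antitone there. -/
lemma strictMonoOn_or_strictAntiOn_of_ordConnected {f : unitInterval → unitInterval}
    {J : Set unitInterval} (hJ : J.OrdConnected) (hc : ContinuousOn f J) (hi : InjOn f J) :
    StrictMonoOn f J ∨ StrictAntiOn f J := by
  by_cases hpair : ∃ p ∈ J, ∃ q ∈ J, p < q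
  · obtain ⟨p, hp, q, hq, hpq⟩ := hpair
    have hpqJ : Icc p q ⊆ J := hJ.out hp hq
    have hbig : ∀ x ∈ J, ∀ y ∈ J, x < y →
        (StrictMonoOn f (Icc (min p x) (max q y)) ∨
          StrictAntiOn f (Icc (min p x) (max q y))) ∧
        Icc p q ⊆ Icc (min p x) (max q y) ∧ x ∈ Icc (min p x) (max q y) ∧
        y ∈ Icc (min p x) (max q y) := by
      intro x hx y hy hxy
      have hl : min p x ∈ J := by
        rcases min_cases p x with ⟨h, _⟩ | ⟨h, _⟩ <;> rw [h] <;> assumption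
      have hu : max q y ∈ J := by
        rcases max_cases q y with ⟨h, _⟩ | ⟨h, _⟩ <;> rw [h] <;> assumption
      have hsub : Icc (min p x) (max q y) ⊆ J := hJ.out hl hu
      have hle : min p x ≤ max q y :=
        le_trans (min_le_left _ _) (le_trans hpq.le (le_max_left _ _))
      refine ⟨(hc.mono hsub).strictMonoOn_of_injOn_Icc' hle (hi.mono hsub), ?_, ?_, ?_⟩
      · exact Icc_subset_Icc (min_le_left _ _) (le_max_left _ _)
      · exact ⟨min_le_right _ _, le_trans hxy.le (le_max_right _ _)⟩
      · exact ⟨le_trans (min_le_right _ _) hxy.le, le_max_right _ _⟩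
    rcases (hc.mono hpqJ).strictMonoOn_of_injOn_Icc' hpq.le (hi.mono hpqJ) with hm | ha
    · left
      intro x hx y hy hxy
      obtain ⟨hd, hIcc, hxm, hym⟩ := hbig x hx y hy hxy
      rcases hd with hd | hd
      · exact hd hxm hym hxy
      · exact absurd (hd (hIcc ⟨le_refl p, hpq.le⟩) (hIcc ⟨hpq.le, le_refl q⟩) hpq)
          (not_lt.mpr (hm ⟨le_refl p, hpq.le⟩ ⟨hpq.le, le_refl q⟩ hpq).le)
    · right
      intro x hx y hy hxy
      obtain ⟨hd, hIcc, hxm, hym⟩ := hbig x hx y hy hxy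
      rcases hd with hd | hd
      · exact absurd (hd (hIcc ⟨le_refl p, hpq.le⟩) (hIcc ⟨hpq.le, le_refl q⟩) hpq)
          (not_lt.mpr (ha ⟨le_refl p, hpq.le⟩ ⟨hpq.le, le_refl q⟩ hpq).le)
      · exact hd hxm hym hxy
  · push_neg at hpair
    exact Or.inl fun x hx y hy hxy => absurd (hpair x hx y hy) (not_le.mpr hxy)

/-- A continuum containing a free arc (an arc which, minus its two endpoints,
is open in the space) is not `4`-strongly arc connected. -/
theorem not_four_sac_of_free_arc (X : Type*) [TopologicalSpace X] [CompactSpace X]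
    [ConnectedSpace X] [TopologicalSpace.MetrizableSpace X]
    (hfree : ∃ α : unitInterval → X, Topology.IsEmbedding α ∧
      IsOpen (Set.range α \ {α 0, α 1})) :
    ¬ NSac X 4 := by
  intro h4
  obtain ⟨α, hα, hU⟩ := hfree
  have hαi := hα.injective
  have hxinj : Function.Injective (![α q1, α q3, α q2, α q4]) := by
    intro i j hij
    fin_cases i <;> fin_cases j <;>
      first
        | rfl
        | exact absurd (congrArg Subtype.val (hαi hij)) (by norm_num [q1, q2, q3, q4])
  obtain ⟨β, t, hβ, ht, hbt⟩ := h4 _ hxinj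
  have hb0 : β (t 0) = α q1 := hbt 0
  have hb1 : β (t 1) = α q3 := hbt 1
  have hb2 : β (t 2) = α q2 := hbt 2
  have hb3 : β (t 3) = α q4 := hbt 3
  have h01 : t 0 < t 1 := ht (by decide)
  have h12 : t 1 < t 2 := ht (by decide)
  have h02 : t 0 < t 2 := ht (by decide)
  have h23 : t 2 < t 3 := ht (by decide)
  -- the free arc interior and its preimage
  set U : Set X := Set.range α \ {α 0, α 1} with hUdef
  set S : Set unitInterval := β ⁻¹' U with hSdef
  have hS : IsOpen S := hU.preimage hβ.continuous
  have hRcl : IsClosed (Set.range α) := (isCompact_range hα.continuous).isClosed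
  have hclU : closure U ⊆ Set.range α := closure_minimal diff_subset hRcl
  have hq2U : α q2 ∈ U := by
    refine ⟨mem_range_self _, ?_⟩
    simp only [mem_insert_iff, mem_singleton_iff]
    push_neg
    exact ⟨fun h => hq20 (hαi h), fun h => hq21 (hαi h)⟩
  have hτ2S : t 2 ∈ S := by
    simp only [hSdef, mem_preimage, hb2]
    exact hq2U
  set J : Set unitInterval := connectedComponentIn S (t 2) with hJdef
  have hJS : J ⊆ S := connectedComponentIn_subset _ _
  have hτ2J : t 2 ∈ J := mem_connectedComponentIn hτ2S
  have hJpre : IsPreconnected J := isPreconnected_connectedComponentIn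
  have hJord : J.OrdConnected := hJpre.ordConnected
  -- the coordinate function
  classical
  set E := hα.toHomeomorph with hE
  set f : unitInterval → unitInterval :=
    fun s => if h : β s ∈ Set.range α then E.symm ⟨β s, h⟩ else 0 with hf
  have hEval : ∀ u : unitInterval, ((E u : Set.range α) : X) = α u := fun _ => rfl
  have hfval : ∀ s u : unitInterval, β s = α u → f s = u := by
    intro s u h
    have hr : β s ∈ Set.range α := ⟨u, h.symm⟩
    simp only [hf, dif_pos hr]
    have : (⟨β s, hr⟩ : Set.range α) = E u := Subtype.ext (by rw [hEval]; exact h)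
    rw [this, Homeomorph.symm_apply_apply]
  have hval2 : ∀ s u : unitInterval, β s ∈ Set.range α → f s = u → β s = α u := by
    intro s u hr h
    simp only [hf, dif_pos hr] at h
    have : (⟨β s, hr⟩ : Set.range α) = E u := by
      rw [← h, Homeomorph.apply_symm_apply]
    have := congrArg Subtype.val this
    rwa [hEval] at this
  have hSD : S ⊆ β ⁻¹' (Set.range α) := preimage_mono diff_subset
  have hcontD : ContinuousOn f (β ⁻¹' (Set.range α)) := by
    rw [continuousOn_iff_continuous_restrict]
    have hrw : (β ⁻¹' (Set.range α)).domRestrict f =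
        fun s : (β ⁻¹' (Set.range α)) => E.symm ⟨β s, s.2⟩ :=
      funext fun s => dif_pos s.2
    rw [hrw]
    exact E.symm.continuous.comp
      (Continuous.subtype_mk (hβ.continuous.comp continuous_subtype_val) _)
  have hβclo : ∀ s ∈ closure J, β s ∈ closure U := by
    intro s hs
    have h1 : β '' J ⊆ U := image_subset_iff.mpr hJS
    have h2 : β s ∈ closure (β '' J) :=
      image_closure_subset_closure_image hβ.continuous (mem_image_of_mem β hs)
    exact closure_mono h1 h2
  have hclJD : closure J ⊆ β ⁻¹' (Set.range α) := fun s hs => hclU (hβclo s hs)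
  have hcJ : ContinuousOn f J := hcontD.mono (subset_trans hJS hSD)
  have hinjJ : InjOn f J := by
    intro s hs s' hs' h
    have hr : β s ∈ Set.range α := hSD (hJS hs)
    have hr' : β s' ∈ Set.range α := hSD (hJS hs')
    simp only [hf, dif_pos hr, dif_pos hr'] at h
    have := E.symm.injective h
    exact hβ.injective (congrArg Subtype.val this)
  have hfτ0 : f (t 0) = q1 := hfval _ _ hb0
  have hfτ1 : f (t 1) = q3 := hfval _ _ hb1
  have hfτ2 : f (t 2) = q2 := hfval _ _ hb2
  have hfτ3 : f (t 3) = q4 := hfval _ _ hb3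
  -- an order-connected neighbourhood inside J around any point of S ∩ closure J
  have compmem : ∀ s' ∈ closure J, s' ∈ S →
      ∃ b c, s' ∈ Icc b c ∧ Icc b c ∈ nhds s' ∧ Icc b c ⊆ J := by
    intro s' hscl hsS
    obtain ⟨b, c, hbc, hnb, hsub⟩ := exists_Icc_mem_subset_of_mem_nhds (hS.mem_nhds hsS)
    obtain ⟨z, hz1, hz2⟩ := mem_closure_iff_nhds.mp hscl _ hnb
    have hun : IsPreconnected (Icc b c ∪ J) :=
      IsPreconnected.union z hz1 hz2 isPreconnected_Icc hJpre
    have hsubJ : Icc b c ∪ J ⊆ J :=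
      hun.subset_connectedComponentIn (Or.inr hτ2J) (union_subset hsub hJS)
    exact ⟨b, c, hbc, hnb, fun w hw => hsubJ (Or.inl hw)⟩
  -- boundary-point argument
  have key : ∀ s' ∈ closure J, s' ∉ S → f s' ≤ q2 → t 0 ∈ J := by
    intro s' hscl hsS hfle
    have hβr : β s' ∈ Set.range α := hclU (hβclo s' hscl)
    have hend : β s' = α 0 ∨ β s' = α 1 := by
      by_contra h
      push_neg at h
      refine hsS ?_
      simp only [hSdef, mem_preimage, hUdef, mem_diff, mem_insert_iff, mem_singleton_iff]
      exact ⟨hβr, by push_neg; exact h⟩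
    have hf0 : f s' = 0 := by
      rcases hend with h | h
      · exact hfval _ _ h
      · have h1 : f s' = 1 := hfval _ _ h
        rw [h1] at hfle
        exact absurd hfle hq2top
    have hcw : ContinuousWithinAt f J s' :=
      (hcontD.continuousWithinAt (hclJD hscl)).mono (subset_trans hJS hSD)
    haveI hne : (nhdsWithin s' J).NeBot := mem_closure_iff_nhdsWithin_neBot.mp hscl
    have hev : ∀ᶠ s in nhdsWithin s' J, f s < q1 := by
      have : Filter.Tendsto f (nhdsWithin s' J) (nhds (0 : unitInterval)) := hf0 ▸ hcw
      exact this.eventually_lt_const hq01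
    obtain ⟨s0, hs0lt, hs0J⟩ := (hev.and self_mem_nhdsWithin).exists
    have himg : IsPreconnected (f '' J) := hJpre.image f hcJ
    have hq1img : q1 ∈ f '' J := by
      have h1 : f s0 ∈ f '' J := mem_image_of_mem f hs0J
      have h2 : f (t 2) ∈ f '' J := mem_image_of_mem f hτ2J
      have : Icc (f s0) (f (t 2)) ⊆ f '' J := himg.ordConnected.out h1 h2
      exact this ⟨hs0lt.le, by rw [hfτ2]; exact hq12.le⟩
    obtain ⟨s1, hs1J, hfs1⟩ := hq1img
    have : β s1 = α q1 := hval2 _ _ (hSD (hJS hs1J)) hfs1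
    have hs1 : s1 = t 0 := hβ.injective (by rw [this, ← hb0])
    rwa [hs1] at hs1J
  have hnotq32 : ¬ (q3 < q2) := not_lt.mpr hq23.le
  have hnotq42 : ¬ (q4 < q2) := not_lt.mpr hq24.le
  have hnotq21 : ¬ (q2 < q1) := not_lt.mpr hq12.le
  rcases strictMonoOn_or_strictAntiOn_of_ordConnected hJord hcJ hinjJ with hm | ha
  · -- increasing case : use least point of closure J
    obtain ⟨sL, hsL⟩ := (isClosed_closure.isCompact).exists_isLeast ⟨t 2, subset_closure hτ2J⟩
    by_cases hsS : sL ∈ S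
    · obtain ⟨b, c, hbc, hnb, hsubJ⟩ := compmem sL hsL.1 hsS
      have hsLJ : sL ∈ J := hsubJ hbc
      by_cases hbot : ∃ y, y < sL
      · have h1 : sL ∈ closure (Iio sL) := by
          rw [closure_Iio' hbot]
          exact self_mem_Iic
        obtain ⟨z, hz1, hz2⟩ := mem_closure_iff_nhds.mp h1 _ hnb
        exact absurd (hsL.2 (subset_closure (hsubJ hz1))) (not_le.mpr hz2)
      · push_neg at hbot
        have hτ1J : t 1 ∈ J := hJord.out hsLJ hτ2J ⟨hbot _, h12.le⟩
        have := hm hτ1J hτ2J h12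
        rw [hfτ1, hfτ2] at this
        exact hnotq32 this
    · have hfle : f sL ≤ q2 := by
        rcases eq_or_lt_of_le (hsL.2 (subset_closure hτ2J)) with heq | hlt
        · exact absurd (heq ▸ hτ2S) hsS
        · haveI hne : (nhdsWithin sL J).NeBot := mem_closure_iff_nhdsWithin_neBot.mp hsL.1
          have hcw : ContinuousWithinAt f J sL :=
            (hcontD.continuousWithinAt (hclJD hsL.1)).mono (subset_trans hJS hSD)
          have hev : ∀ᶠ s in nhdsWithin sL J, f s ≤ q2 := by
            have h1 : Iio (t 2) ∈ nhdsWithin sL J := nhdsWithin_le_nhds (Iio_mem_nhds hlt)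
            filter_upwards [h1, self_mem_nhdsWithin] with s hs hsJ
            rw [← hfτ2]
            exact (hm hsJ hτ2J hs).le
          exact le_of_tendsto hcw hev
      have hτ0J := key sL hsL.1 hsS hfle
      have hτ1J : t 1 ∈ J := hJord.out hτ0J hτ2J ⟨h01.le, h12.le⟩
      have := hm hτ1J hτ2J h12
      rw [hfτ1, hfτ2] at this
      exact hnotq32 this
  · -- decreasing case : use greatest point of closure J
    obtain ⟨sG, hsG⟩ := (isClosed_closure.isCompact).exists_isGreatest ⟨t 2, subset_closure hτ2J⟩
    by_cases hsS : sG ∈ S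
    · obtain ⟨b, c, hbc, hnb, hsubJ⟩ := compmem sG hsG.1 hsS
      have hsGJ : sG ∈ J := hsubJ hbc
      by_cases htop : ∃ y, sG < y
      · have h1 : sG ∈ closure (Ioi sG) := by
          rw [closure_Ioi' htop]
          exact self_mem_Ici
        obtain ⟨z, hz1, hz2⟩ := mem_closure_iff_nhds.mp h1 _ hnb
        exact absurd (hsG.2 (subset_closure (hsubJ hz1))) (not_le.mpr hz2)
      · push_neg at htop
        have hτ3J : t 3 ∈ J := hJord.out hτ2J hsGJ ⟨h23.le, htop _⟩
        have := ha hτ2J hτ3J h23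
        rw [hfτ2, hfτ3] at this
        exact hnotq42 this
    · have hfle : f sG ≤ q2 := by
        rcases eq_or_lt_of_le (hsG.2 (subset_closure hτ2J)) with heq | hlt
        · exact absurd (heq ▸ hτ2S) hsS
        · haveI hne : (nhdsWithin sG J).NeBot := mem_closure_iff_nhdsWithin_neBot.mp hsG.1
          have hcw : ContinuousWithinAt f J sG :=
            (hcontD.continuousWithinAt (hclJD hsG.1)).mono (subset_trans hJS hSD)
          have hev : ∀ᶠ s in nhdsWithin sG J, f s ≤ q2 := by
            have h1 : Ioi (t 2) ∈ nhdsWithin sG J := nhdsWithin_le_nhds (Ioi_mem_nhds hlt)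
            filter_upwards [h1, self_mem_nhdsWithin] with s hs hsJ
            rw [← hfτ2]
            exact (ha hτ2J hsJ hs).le
          exact le_of_tendsto hcw hev
      have hτ0J := key sG hsG.1 hsS hfle
      have := ha hτ0J hτ2J h02
      rw [hfτ0, hfτ2] at this
      exact hnotq21 this
end

section
/- Let X be a compact Hausdorff space, let I ⊆ ℝ be an interval containing more than one point, and let f : I → X be a continuous bijection. Then X is not 4-strongly arc connected. -/
open Set Topology

private lemma inj4_aux {α : Type*} {a b c d : α} (h1 : a ≠ b) (h2 : a ≠ c) (h3 : a ≠ d)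
    (h4 : b ≠ c) (h5 : b ≠ d) (h6 : c ≠ d) :
    Function.Injective ![a, b, c, d] := by
  intro i j hij
  fin_cases i <;> fin_cases j <;> simp_all

/-- No compact Hausdorff continuous injective image of an interval (with more than
one point) is `4`-strongly arc connected. -/
theorem not_four_sac_of_injective_image_of_interval (X : Type*) [TopologicalSpace X]
    [CompactSpace X] [T2Space X]
    (I : Set ℝ) (hI : I.OrdConnected) (hInt : I.Nontrivial)
    (f : I → X) (hf : Continuous f) (hbij : Function.Bijective f) :
    ¬ NSac X 4 := by
  classical
  intro hsac
  obtain ⟨a, haI, b, hbI, hab⟩ := hInt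
  set a₀ : ℝ := min a b with ha₀def
  set b₀ : ℝ := max a b with hb₀def
  have ha₀I : a₀ ∈ I := by
    rcases min_cases a b with ⟨h, -⟩ | ⟨h, -⟩ <;> rw [ha₀def, h] <;> assumption
  have hb₀I : b₀ ∈ I := by
    rcases max_cases a b with ⟨h, -⟩ | ⟨h, -⟩ <;> rw [hb₀def, h] <;> assumption
  have ha₀b₀ : a₀ < b₀ := min_lt_max.mpr hab
  -- compact preimages and closed images
  have hcomp : ∀ s : Set ℝ, IsCompact s → s ⊆ I → IsCompact ((↑) ⁻¹' s : Set I) := by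
    intro s hs hsI
    rw [Topology.IsEmbedding.subtypeVal.isCompact_iff]
    rwa [Subtype.image_preimage_coe, inter_eq_self_of_subset_right hsI]
  have hclim : ∀ s : Set ℝ, IsCompact s → s ⊆ I →
      IsClosed (f '' ((↑) ⁻¹' s)) := by
    intro s hs hsI
    exact ((hcomp s hs hsI).image hf).isClosed
  -- a countable set D ⊆ I such that every point of I is between two points of D
  set M : Set ℝ := {x | x ∈ I ∧ ∀ y ∈ I, y ≤ x} with hMdef
  set N : Set ℝ := {x | x ∈ I ∧ ∀ y ∈ I, x ≤ y} with hNdef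
  set D : Set ℝ := (I ∩ Set.range ((↑) : ℚ → ℝ)) ∪ M ∪ N with hDdef
  have hDI : D ⊆ I := by
    rintro x ((⟨h, -⟩ | ⟨h, -⟩) | ⟨h, -⟩) <;> exact h
  have hMc : M.Countable := by
    apply Set.Subsingleton.countable
    intro x hx y hy
    exact le_antisymm (hy.2 x hx.1) (hx.2 y hy.1)
  have hNc : N.Countable := by
    apply Set.Subsingleton.countable
    intro x hx y hy
    exact le_antisymm (hx.2 y hy.1) (hy.2 x hx.1)
  have hDc : D.Countable :=
    (((Set.countable_range _).mono inter_subset_right).union hMc).union hNc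
  have hcov : ∀ x ∈ I, ∃ p ∈ D, ∃ q ∈ D, p ≤ x ∧ x ≤ q := by
    intro x hx
    have hq : ∃ q ∈ D, x ≤ q := by
      by_cases hmax : ∀ y ∈ I, y ≤ x
      · exact ⟨x, Or.inl (Or.inr ⟨hx, hmax⟩), le_refl x⟩
      · push_neg at hmax
        obtain ⟨y, hyI, hxy⟩ := hmax
        obtain ⟨r, hr1, hr2⟩ := exists_rat_btwn hxy
        have hrI : (r : ℝ) ∈ I := hI.out hx hyI ⟨le_of_lt hr1, le_of_lt hr2⟩
        exact ⟨r, Or.inl (Or.inl ⟨hrI, ⟨r, rfl⟩⟩), le_of_lt hr1⟩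
    have hp : ∃ p ∈ D, p ≤ x := by
      by_cases hmin : ∀ y ∈ I, x ≤ y
      · exact ⟨x, Or.inr ⟨hx, hmin⟩, le_refl x⟩
      · push_neg at hmin
        obtain ⟨y, hyI, hxy⟩ := hmin
        obtain ⟨r, hr1, hr2⟩ := exists_rat_btwn hxy
        have hrI : (r : ℝ) ∈ I := hI.out hyI hx ⟨le_of_lt hr1, le_of_lt hr2⟩
        exact ⟨r, Or.inl (Or.inl ⟨hrI, ⟨r, rfl⟩⟩), le_of_lt hr2⟩
    obtain ⟨p, hp1, hp2⟩ := hp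
    obtain ⟨q, hq1, hq2⟩ := hq
    exact ⟨p, hp1, q, hq1, hp2, hq2⟩
  -- Baire category: one of the closed pieces has nonempty interior
  haveI : Countable ↥D := hDc.to_subtype
  haveI : Nonempty X := ⟨f ⟨a, haI⟩⟩
  set F : ↥D × ↥D → Set X :=
    fun pq => f '' ((↑) ⁻¹' Icc (min (pq.1 : ℝ) a₀) (max (pq.2 : ℝ) b₀)) with hFdef
  have hminI : ∀ p : ↥D, min (p : ℝ) a₀ ∈ I := by
    intro p
    rcases min_cases (p : ℝ) a₀ with ⟨h, -⟩ | ⟨h, -⟩ <;> rw [h]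
    exacts [hDI p.2, ha₀I]
  have hmaxI : ∀ q : ↥D, max (q : ℝ) b₀ ∈ I := by
    intro q
    rcases max_cases (q : ℝ) b₀ with ⟨h, -⟩ | ⟨h, -⟩ <;> rw [h]
    exacts [hDI q.2, hb₀I]
  have hJsub : ∀ p q : ↥D, Icc (min (p : ℝ) a₀) (max (q : ℝ) b₀) ⊆ I :=
    fun p q => hI.out (hminI p) (hmaxI q)
  have hFclosed : ∀ i, IsClosed (F i) :=
    fun i => hclim _ isCompact_Icc (hJsub i.1 i.2)
  have hFcover : ⋃ i, F i = univ := by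
    ext x
    simp only [mem_iUnion, mem_univ, iff_true]
    obtain ⟨y, rfl⟩ := hbij.2 x
    obtain ⟨p, hp, q, hq, hpy, hyq⟩ := hcov (y : ℝ) y.2
    refine ⟨(⟨p, hp⟩, ⟨q, hq⟩), y, ?_, rfl⟩
    exact ⟨le_trans (min_le_left _ _) hpy, le_trans hyq (le_max_left _ _)⟩
  obtain ⟨⟨p, q⟩, hUne⟩ := nonempty_interior_of_iUnion_of_closed hFclosed hFcover
  set c : ℝ := min (p : ℝ) a₀ with hcdef
  set d : ℝ := max (q : ℝ) b₀ with hddef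
  have hcd : c < d := lt_of_le_of_lt (min_le_right _ _)
    (lt_of_lt_of_le ha₀b₀ (le_max_right _ _))
  have hcdI : Icc c d ⊆ I := hJsub p q
  set U : Set X := interior (F (p, q)) with hUdef
  have hUopen : IsOpen U := isOpen_interior
  have hUF : U ⊆ F (p, q) := interior_subset
  obtain ⟨x₀, hx₀⟩ := hUne
  obtain ⟨y₀, hy₀cd, hfy₀⟩ := hUF hx₀
  -- find a small interval (u, v) whose image is inside U
  have hpreU : IsOpen (f ⁻¹' U) := hUopen.preimage hf
  have hy₀U : y₀ ∈ f ⁻¹' U := by rw [mem_preimage, hfy₀]; exact hx₀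
  obtain ⟨ε, hε, hball⟩ := Metric.isOpen_iff.mp hpreU y₀ hy₀U
  set u : ℝ := max c ((y₀ : ℝ) - ε / 2) with hudef
  set v : ℝ := min d ((y₀ : ℝ) + ε / 2) with hvdef
  have huv : u < v := by
    rcases hy₀cd with ⟨h1, h2⟩
    apply max_lt <;> apply lt_min <;> linarith
  have hIoocd : Ioo u v ⊆ Icc c d := fun s hs =>
    ⟨le_of_lt (lt_of_le_of_lt (le_max_left _ _) hs.1),
     le_of_lt (lt_of_lt_of_le hs.2 (min_le_left _ _))⟩
  have hIooI : Ioo u v ⊆ I := fun s hs => hcdI (hIoocd hs)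
  have hzoneU : ∀ (s : ℝ) (hs : s ∈ Ioo u v), f ⟨s, hIooI hs⟩ ∈ U := by
    intro s hs
    apply hball
    rw [Metric.mem_ball, Subtype.dist_eq, Real.dist_eq, abs_sub_lt_iff]
    have h1 : (y₀ : ℝ) - ε / 2 ≤ u := le_max_right _ _
    have h2 : v ≤ (y₀ : ℝ) + ε / 2 := min_le_right _ _
    constructor <;> [skip; skip] <;> rcases hs with ⟨hs1, hs2⟩ <;> linarith
  -- choose four points in (u, v)
  have hvu : (0 : ℝ) < v - u := sub_pos.mpr huv
  set t₁ : ℝ := u + (v - u) / 5 with ht₁def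
  set t₂ : ℝ := u + 2 * (v - u) / 5 with ht₂def
  set t₃ : ℝ := u + 3 * (v - u) / 5 with ht₃def
  set t₄ : ℝ := u + 4 * (v - u) / 5 with ht₄def
  have ht₁ : t₁ ∈ Ioo u v := by constructor <;> simp only [ht₁def] <;> linarith
  have ht₂ : t₂ ∈ Ioo u v := by constructor <;> simp only [ht₂def] <;> linarith
  have ht₃ : t₃ ∈ Ioo u v := by constructor <;> simp only [ht₃def] <;> linarith
  have ht₄ : t₄ ∈ Ioo u v := by constructor <;> simp only [ht₄def] <;> linarith
  have h12 : t₁ < t₂ := by simp only [ht₁def, ht₂def]; linarith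
  have h23 : t₂ < t₃ := by simp only [ht₂def, ht₃def]; linarith
  have h34 : t₃ < t₄ := by simp only [ht₃def, ht₄def]; linarith
  set T₁ : I := ⟨t₁, hIooI ht₁⟩ with hT₁def
  set T₂ : I := ⟨t₂, hIooI ht₂⟩ with hT₂def
  set T₃ : I := ⟨t₃, hIooI ht₃⟩ with hT₃def
  set T₄ : I := ⟨t₄, hIooI ht₄⟩ with hT₄def
  -- the two open sets W and Z
  set W : Set X := f '' ((↑) ⁻¹' Ioo t₂ t₄) with hWdef
  set Z : Set X := (f '' ((↑) ⁻¹' Icc t₂ t₄))ᶜ with hZdef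
  have hIcc24 : Icc t₂ t₄ ⊆ I := fun s hs =>
    hIooI ⟨lt_of_lt_of_le ht₂.1 hs.1, lt_of_le_of_lt hs.2 ht₄.2⟩
  have hZopen : IsOpen Z := (hclim _ isCompact_Icc hIcc24).isOpen_compl
  have hIoo24 : Ioo t₂ t₄ ⊆ Ioo u v := Ioo_subset_Ioo (le_of_lt ht₂.1) (le_of_lt ht₄.2)
  have hWeq : W = U \ f '' ((↑) ⁻¹' (Icc c d \ Ioo t₂ t₄)) := by
    ext x
    constructor
    · rintro ⟨y, hy, rfl⟩
      constructor
      · have h1 : (y : ℝ) ∈ Ioo u v := hIoo24 hy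
        have h2 := hzoneU (y : ℝ) h1
        have h3 : (⟨(y : ℝ), hIooI h1⟩ : I) = y := Subtype.ext rfl
        rwa [h3] at h2
      · rintro ⟨y', hy', he⟩
        have : y' = y := hbij.1 he
        subst this
        exact hy'.2 hy
    · rintro ⟨hxU, hxn⟩
      obtain ⟨y, hy, rfl⟩ := hUF hxU
      refine ⟨y, ?_, rfl⟩
      by_contra h
      exact hxn ⟨y, ⟨hy, h⟩, rfl⟩
  have hWopen : IsOpen W := by
    have hcl : IsClosed (f '' ((↑) ⁻¹' (Icc c d \ Ioo t₂ t₄))) :=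
      hclim _ (isCompact_Icc.of_isClosed_subset
        (isClosed_Icc.inter isOpen_Ioo.isClosed_compl) diff_subset) (diff_subset.trans hcdI)
    rw [hWeq, diff_eq]
    exact hUopen.inter hcl.isOpen_compl
  have hWZ : W ∩ Z = ∅ := by
    ext x
    simp only [mem_inter_iff, mem_empty_iff_false, iff_false, not_and]
    rintro ⟨y, hy, rfl⟩
    intro hz
    exact hz ⟨y, Ioo_subset_Icc_self hy, rfl⟩
  -- apply 4-sac to the points f T₁, f T₃, f T₂, f T₄
  have hfne : ∀ (S S' : I), (S : ℝ) ≠ (S' : ℝ) → f S ≠ f S' := by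
    intro S S' hne he
    exact hne (congrArg Subtype.val (hbij.1 he))
  set xv : Fin 4 → X := ![f T₁, f T₃, f T₂, f T₄] with hxvdef
  have hxinj : Function.Injective xv := by
    apply inj4_aux <;> apply hfne <;> simp only [hT₁def, hT₂def, hT₃def, hT₄def] <;>
      intro h <;> linarith [h12, h23, h34]
  obtain ⟨α, s, hemb, hsmono, hval⟩ := hsac xv hxinj
  have hαinj : Function.Injective α := hemb.injective
  have hs01 : s 0 < s 1 := hsmono (by decide : (0 : Fin 4) < 1)
  have hs12 : s 1 < s 2 := hsmono (by decide : (1 : Fin 4) < 2)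
  have hs13 : s 1 < s 3 := hsmono (by decide : (1 : Fin 4) < 3)
  -- the connected piece C from f T₁ to f T₃
  set β : ℝ → X := fun r => α (projIcc 0 1 zero_le_one r) with hβdef
  have hβcont : Continuous β := hemb.continuous.comp continuous_projIcc
  set C : Set X := β '' Icc ((s 0 : ℝ)) ((s 1 : ℝ)) with hCdef
  have hCconn : IsPreconnected C :=
    isPreconnected_Icc.image β hβcont.continuousOn
  have hβ0 : β ((s 0 : ℝ)) = α (s 0) := by
    simp only [hβdef]; rw [projIcc_val]
  have hβ1 : β ((s 1 : ℝ)) = α (s 1) := by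
    simp only [hβdef]; rw [projIcc_val]
  have hs01' : (s 0 : ℝ) ≤ (s 1 : ℝ) := Subtype.coe_le_coe.mpr (le_of_lt hs01)
  have hmem0 : α (s 0) ∈ C := ⟨(s 0 : ℝ), ⟨le_refl _, hs01'⟩, hβ0⟩
  have hmem1 : α (s 1) ∈ C := ⟨(s 1 : ℝ), ⟨hs01', le_refl _⟩, hβ1⟩
  have hCavoid : ∀ z ∈ C, z ≠ α (s 2) ∧ z ≠ α (s 3) := by
    rintro z ⟨r, hr, rfl⟩
    have hle : projIcc 0 1 zero_le_one r ≤ s 1 := by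
      have := monotone_projIcc zero_le_one hr.2
      rwa [projIcc_val] at this
    constructor <;> intro he <;> [skip; skip]
    · have := hαinj he
      rw [this] at hle
      exact absurd hle (not_le.mpr hs12)
    · have := hαinj he
      rw [this] at hle
      exact absurd hle (not_le.mpr hs13)
  have hval0 : α (s 0) = f T₁ := by rw [hval 0]; simp [hxvdef]
  have hval1 : α (s 1) = f T₃ := by rw [hval 1]; simp [hxvdef]
  have hval2 : α (s 2) = f T₂ := by rw [hval 2]; simp [hxvdef]
  have hval3 : α (s 3) = f T₄ := by rw [hval 3]; simp [hxvdef]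
  have hCW : (C ∩ W).Nonempty := by
    refine ⟨α (s 1), hmem1, ?_⟩
    rw [hval1]
    exact ⟨T₃, ⟨h23, h34⟩, rfl⟩
  have hCZ : (C ∩ Z).Nonempty := by
    refine ⟨α (s 0), hmem0, ?_⟩
    rw [hval0]
    rintro ⟨y, hy, he⟩
    have : y = T₁ := hbij.1 he
    subst this
    exact absurd hy.1 (not_le.mpr h12)
  have hCsub : C ⊆ W ∪ Z := by
    intro z hz
    obtain ⟨y, rfl⟩ := hbij.2 z
    by_cases hy : (y : ℝ) ∈ Icc t₂ t₄
    · left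
      refine ⟨y, ⟨?_, ?_⟩, rfl⟩
      · rcases lt_or_eq_of_le hy.1 with h | h
        · exact h
        · exfalso
          have hyT : y = T₂ := Subtype.ext h.symm
          apply (hCavoid _ hz).1
          rw [hval2, hyT]
      · rcases lt_or_eq_of_le hy.2 with h | h
        · exact h
        · exfalso
          have hyT : y = T₄ := Subtype.ext h
          apply (hCavoid _ hz).2
          rw [hval3, hyT]
    · right
      rintro ⟨y', hy', he⟩
      have : y' = y := hbij.1 he
      subst this
      exact hy hy'
  obtain ⟨w, -, hwW, hwZ⟩ := hCconn W Z hWopen hZopen hCsub hCW hCZ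
  have : w ∈ W ∩ Z := ⟨hwW, hwZ⟩
  rw [hWZ] at this
  exact this
end

section
/- Let X be a topological space containing a no exit arc, i.e., an arc A ⊆ X with endpoints a and b such that every arc B ⊆ X which contains both a and b and which meets A ∖ {a, b} must contain all of A. Then X is not 4-strongly arc connected. -/
open Set Topology

/-- `A` is an arc in `X` with endpoints `a` and `b`. -/
def IsArcWithEnds {X : Type*} [TopologicalSpace X] (A : Set X) (a b : X) : Prop :=
  ∃ α : unitInterval → X, Topology.IsEmbedding α ∧ Set.range α = A ∧ α 0 = a ∧ α 1 = b

/-- If a space contains a "no exit arc" `A` with endpoints `a, b` — that is, every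
arc in `X` containing both `a` and `b` and meeting `A ∖ {a, b}` must contain all
of `A` — then the space is not `4`-strongly arc connected. -/
theorem not_four_sac_of_no_exit_arc (X : Type*) [TopologicalSpace X]
    (A : Set X) (a b : X) (hA : IsArcWithEnds A a b)
    (hnoexit : ∀ B : Set X, (∃ c d, IsArcWithEnds B c d) →
      a ∈ B → b ∈ B → (B ∩ (A \ {a, b})).Nonempty → A ⊆ B) :
    ¬ NSac X 4 := by
  obtain ⟨α, hαe, hαr, hα0, hα1⟩ := hA
  intro hsac
  have hαinj := hαe.injective
  set p : unitInterval := ⟨1/3, by norm_num⟩ with hp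
  set q : unitInterval := ⟨2/3, by norm_num⟩ with hq
  have hp0 : p ≠ 0 := by simp [hp, unitInterval, Subtype.ext_iff]
  have hp1 : p ≠ 1 := by simp [hp, unitInterval, Subtype.ext_iff]
  have hq0 : q ≠ 0 := by simp [hq, unitInterval, Subtype.ext_iff]
  have hq1 : q ≠ 1 := by simp [hq, unitInterval, Subtype.ext_iff]; norm_num
  have hpq : p ≠ q := by simp [hp, hq, Subtype.ext_iff]; norm_num
  set x : Fin 4 → X := ![α p, a, α q, b] with hx
  have hxinj : Function.Injective x := by
    rw [← hα0, ← hα1] at hx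
    have : Function.Injective (![p, 0, q, 1] : Fin 4 → unitInterval) := by
      intro i j hij
      fin_cases i <;> fin_cases j <;> simp_all <;>
        first
          | rfl
          | exact absurd hij (by first | exact hp0 | exact hp1 | exact hq0 | exact hq1
                                       | exact hpq | exact hp0.symm | exact hp1.symm
                                       | exact hq0.symm | exact hq1.symm | exact hpq.symm
                                       | exact (zero_ne_one)
                                       | exact (zero_ne_one).symm)
    have hxc : x = α ∘ ![p, 0, q, 1] := by
      funext i; fin_cases i <;> simp [hx]
    rw [hxc]
    exact hαinj.comp this
  obtain ⟨β, t, hβe, ht, hβt⟩ := hsac x hxinj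
  have hβinj := hβe.injective
  have ha : a ∈ range β := ⟨t 1, by simpa [hx] using hβt 1⟩
  have hb : b ∈ range β := ⟨t 3, by simpa [hx] using hβt 3⟩
  have hm : α p ∈ range β := ⟨t 0, by simpa [hx] using hβt 0⟩
  have hmeets : (range β ∩ (A \ {a, b})).Nonempty := by
    refine ⟨α p, hm, ?_, ?_⟩
    · rw [← hαr]; exact mem_range_self p
    · simp only [mem_insert_iff, mem_singleton_iff]
      push_neg
      constructor
      · rw [← hα0]; exact fun h => hp0 (hαinj h)
      · rw [← hα1]; exact fun h => hp1 (hαinj h)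
  have hsub : A ⊆ range β :=
    hnoexit (range β) ⟨β 0, β 1, β, hβe, rfl, rfl, rfl⟩ ha hb hmeets
  -- define f = β⁻¹ ∘ α
  have hrange : ∀ s : unitInterval, ∃ u, β u = α s := by
    intro s
    have : α s ∈ range β := hsub (hαr ▸ mem_range_self s)
    exact this
  set f : unitInterval → unitInterval := fun s => Function.invFun β (α s) with hf
  have hβf : ∀ s, β (f s) = α s := fun s => Function.invFun_eq (hrange s)
  have hfc : Continuous f := by
    rw [hβe.isInducing.continuous_iff]
    have : β ∘ f = α := funext hβf
    rw [this]
    exact hαe.continuous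
  have hfinj : Function.Injective f := by
    intro s s' h
    apply hαinj
    rw [← hβf s, ← hβf s', h]
  have hf0 : f 0 = t 1 := hβinj (by rw [hβf, hα0]; exact (by simpa [hx] using (hβt 1).symm))
  have hf1 : f 1 = t 3 := hβinj (by rw [hβf, hα1]; exact (by simpa [hx] using (hβt 3).symm))
  have hfp : f p = t 0 := hβinj (by rw [hβf]; exact (by simpa [hx] using (hβt 0).symm))
  have h01 : t 0 < t 1 := ht (by decide)
  have h13 : t 1 < t 3 := ht (by decide)
  have hppos : (0 : unitInterval) < p := by
    rw [hp]; exact Subtype.mk_lt_mk.mpr (by norm_num)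
  have hplt1 : p < (1 : unitInterval) := by
    rw [hp]; exact Subtype.mk_lt_mk.mpr (by norm_num)
  -- transfer to a real function on Icc 0 1
  set g : ℝ → ℝ := fun r => (f (Set.projIcc 0 1 (by norm_num) r) : ℝ) with hg
  have hgc : Continuous g := by
    exact (continuous_subtype_val.comp hfc).comp continuous_projIcc
  have hgval : ∀ s : unitInterval, g (s : ℝ) = (f s : ℝ) := by
    intro s
    simp [hg, Set.projIcc_val]
  have hginj : Set.InjOn g (Set.Icc (0:ℝ) 1) := by
    intro r hr r' hr' h
    have : g r = (f ⟨r, hr⟩ : ℝ) := hgval ⟨r, hr⟩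
    have h' : g r' = (f ⟨r', hr'⟩ : ℝ) := hgval ⟨r', hr'⟩
    rw [this, h'] at h
    have := hfinj (Subtype.coe_injective h)
    exact congrArg Subtype.val this
  have hmem0 : (0:ℝ) ∈ Set.Icc (0:ℝ) 1 := by norm_num
  have hmemp : ((p:ℝ)) ∈ Set.Icc (0:ℝ) 1 := p.2
  have hmem1 : (1:ℝ) ∈ Set.Icc (0:ℝ) 1 := by norm_num
  have hg0 : g 0 = (t 1 : ℝ) := by
    have := hgval 0; simp only [Set.Icc.coe_zero] at this; rw [this, hf0]
  have hg1 : g 1 = (t 3 : ℝ) := by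
    have := hgval 1; simp only [Set.Icc.coe_one] at this; rw [this, hf1]
  have hgp : g p = (t 0 : ℝ) := by rw [hgval p, hfp]
  have hpposR : (0:ℝ) < (p:ℝ) := by rw [hp]; norm_num
  have hplt1R : (p:ℝ) < 1 := by rw [hp]; norm_num
  rcases ContinuousOn.strictMonoOn_of_injOn_Icc' (by norm_num : (0:ℝ) ≤ 1)
      hgc.continuousOn hginj with hmono | hanti
  · have := hmono hmem0 hmemp hpposR
    rw [hg0, hgp] at this
    exact absurd this (not_lt.mpr (Subtype.coe_le_coe.mpr h01.le))
  · have := hanti hmem0 hmem1 (by norm_num)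
    rw [hg0, hg1] at this
    exact absurd this (not_lt.mpr (Subtype.coe_le_coe.mpr h13.le))
end

section
/- Let X be a continuum with more than one point. Then X is 3-strongly arc connected if and only if for every three distinct points of X there is a subset of X containing the three points which is either a simple closed curve or a theta curve. -/
open Set Topology

/-- `S` is a simple closed curve: it is homeomorphic to the unit circle. -/
def IsSimpleClosedCurve {X : Type*} [TopologicalSpace X] (S : Set X) : Prop :=
  Nonempty (↥S ≃ₜ ↥(Metric.sphere (0 : ℂ) 1))

/-- `S` is a theta curve: the union of three arcs with the same pair of distinct
endpoints `a ≠ b`, pairwise meeting exactly in `{a, b}`. -/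
def IsThetaCurve {X : Type*} [TopologicalSpace X] (S : Set X) : Prop :=
  ∃ (a b : X) (A₁ A₂ A₃ : Set X), a ≠ b ∧
    IsArcWithEnds A₁ a b ∧ IsArcWithEnds A₂ a b ∧ IsArcWithEnds A₃ a b ∧
    A₁ ∩ A₂ = {a, b} ∧ A₁ ∩ A₃ = {a, b} ∧ A₂ ∩ A₃ = {a, b} ∧
    S = A₁ ∪ A₂ ∪ A₃


section Aux
open Complex unitInterval


abbrev 𝕊 : Type := ↥(Metric.sphere (0:ℂ) 1)

noncomputable abbrev expS (θ : ℝ) : 𝕊 :=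
  ⟨Complex.exp (θ * Complex.I), by simp [Complex.norm_exp_ofReal_mul_I]⟩

lemma expS_cont : Continuous expS :=
  Continuous.subtype_mk ((Complex.continuous_ofReal.mul continuous_const).cexp) _

lemma expS_eq_iff {a b : ℝ} : expS a = expS b ↔ ∃ n : ℤ, a = b + n * (2 * Real.pi) := by
  rw [Subtype.ext_iff]; simp only [expS]; rw [Complex.exp_eq_exp_iff_exists_int]
  constructor
  · rintro ⟨n, h⟩; exact ⟨n, by simpa using congrArg Complex.im h⟩
  · rintro ⟨n, h⟩; exact ⟨n, by push_cast [h]; ring⟩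

lemma expS_period (a : ℝ) (n : ℤ) : expS (a + n * (2*Real.pi)) = expS a :=
  expS_eq_iff.2 ⟨n, rfl⟩

lemma expS_inj_of_lt {a b : ℝ} (hab : |a - b| < 2 * Real.pi) (h : expS a = expS b) : a = b := by
  obtain ⟨n, hn⟩ := expS_eq_iff.1 h
  have hπ : (0:ℝ) < 2 * Real.pi := by positivity
  have h1 : |(n:ℝ)| * (2 * Real.pi) < 2 * Real.pi := by
    rw [hn] at hab
    calc |(n:ℝ)| * (2 * Real.pi) = |(n:ℝ) * (2*Real.pi)| := by
          rw [abs_mul, abs_of_pos hπ]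
      _ = |b + n*(2*Real.pi) - b| := by ring_nf
      _ < 2 * Real.pi := hab
  have h2 : |(n:ℝ)| < 1 := by nlinarith [abs_nonneg ((n:ℝ))]
  have h3 : n = 0 := by
    have h4 : |n| < 1 := by
      have : ((|n| : ℤ) : ℝ) < ((1:ℤ):ℝ) := by push_cast; exact h2
      exact_mod_cast this
    rcases abs_lt.1 h4 with ⟨h5, h6⟩; omega
  rw [h3] at hn; push_cast at hn; linarith

lemma expS_surj (w : 𝕊) : ∃ θ : ℝ, expS θ = w := by
  obtain ⟨θ, h⟩ := (Complex.norm_eq_one_iff (w:ℂ)).1 (by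
    have := w.2; simpa [Complex.dist_eq] using this)
  exact ⟨θ, Subtype.ext h⟩

/-- every sphere point has an angle in `Ioc θ₁ (θ₁+2π)` -/
lemma expS_surj_Ioc (θ₁ : ℝ) (w : 𝕊) : ∃ θ ∈ Ioc θ₁ (θ₁ + 2*Real.pi), expS θ = w := by
  obtain ⟨θ', h'⟩ := expS_surj w
  have hπ : (0:ℝ) < 2 * Real.pi := by positivity
  refine ⟨toIocMod hπ θ₁ θ', toIocMod_mem_Ioc hπ θ₁ θ', ?_⟩
  obtain ⟨n, hn⟩ : ∃ n : ℤ, toIocMod hπ θ₁ θ' = θ' + n * (2*Real.pi) := by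
    refine ⟨-(toIocDiv hπ θ₁ θ'), ?_⟩
    have := toIocMod_add_toIocDiv_zsmul hπ θ₁ θ'
    push_cast
    rw [zsmul_eq_mul] at this
    linarith
  rw [hn, expS_period, h']

/-- affine map from unit interval -/
noncomputable def lin (a b : ℝ) (t : unitInterval) : ℝ := (1 - t) * a + t * b

lemma lin_cont (a b : ℝ) : Continuous (lin a b) := by
  unfold lin; fun_prop

lemma lin_zero (a b : ℝ) : lin a b 0 = a := by simp [lin]
lemma lin_one (a b : ℝ) : lin a b 1 = b := by simp [lin]

lemma lin_inj {a b : ℝ} (hab : a ≠ b) : Function.Injective (lin a b) := by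
  intro s t h
  unfold lin at h
  have : (s:ℝ) = t := by
    have h2 : ((t:ℝ) - s) * (a - b) = 0 := by ring_nf; nlinarith [h]
    rcases mul_eq_zero.1 h2 with h3 | h3
    · linarith
    · exact absurd (by linarith) hab
  exact Subtype.ext this

lemma lin_dist (a b : ℝ) (s t : unitInterval) : |lin a b s - lin a b t| ≤ |a - b| := by
  have h1 : lin a b s - lin a b t = ((t:ℝ) - s) * (a - b) := by unfold lin; ring
  rw [h1, abs_mul]
  have h2 : |(t:ℝ) - s| ≤ 1 := by
    rw [abs_le]; constructor <;> [nlinarith [s.2.1, s.2.2, t.2.1, t.2.2]; nlinarith [s.2.1, s.2.2, t.2.1, t.2.2]]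
  nlinarith [abs_nonneg (a-b)]

lemma lin_mem_Icc {a b : ℝ} (h : a ≤ b) (t : unitInterval) : lin a b t ∈ Icc a b := by
  unfold lin
  constructor <;> nlinarith [t.2.1, t.2.2]

lemma lin_range {a b : ℝ} (h : a ≤ b) : range (lin a b) = Icc a b := by
  apply subset_antisymm
  · rintro _ ⟨t, rfl⟩; exact lin_mem_Icc h t
  · rintro c ⟨h1, h2⟩
    rcases eq_or_lt_of_le h with rfl | hlt
    · exact ⟨0, by simp [lin]; linarith⟩
    · have hba : (0:ℝ) < b - a := by linarith
      refine ⟨⟨(c - a)/(b - a), ⟨div_nonneg (by linarith) hba.le, by rw [div_le_one hba]; linarith⟩⟩, ?_⟩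
      unfold lin
      field_simp
      ring

/-- the sphere arc -/
noncomputable def arcS (a b : ℝ) (t : unitInterval) : 𝕊 := expS (lin a b t)

lemma arcS_cont (a b : ℝ) : Continuous (arcS a b) := expS_cont.comp (lin_cont a b)

lemma arcS_inj {a b : ℝ} (hab : a ≠ b) (hlen : |a - b| < 2*Real.pi) :
    Function.Injective (arcS a b) := by
  intro s t h
  apply lin_inj hab
  exact expS_inj_of_lt (lt_of_le_of_lt (lin_dist a b s t) hlen) h

lemma arcS_zero (a b : ℝ) : arcS a b 0 = expS a := by rw [arcS, lin_zero]
lemma arcS_one (a b : ℝ) : arcS a b 1 = expS b := by rw [arcS, lin_one]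

lemma arcS_range {a b : ℝ} (h : a ≤ b) : range (arcS a b) = expS '' Icc a b := by
  have : range (arcS a b) = expS '' (range (lin a b)) := by
    rw [← range_comp]; rfl
  rw [this, lin_range h]

lemma lin_symm (a b : ℝ) (t : unitInterval) : lin a b (unitInterval.symm t) = lin b a t := by
  unfold lin; simp [unitInterval.coe_symm_eq]; ring

lemma arcS_range_symm (a b : ℝ) : range (arcS a b) = range (arcS b a) := by
  apply subset_antisymm
  · rintro _ ⟨t, rfl⟩
    exact ⟨unitInterval.symm t, by rw [arcS, arcS, lin_symm]⟩
  · rintro _ ⟨t, rfl⟩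
    exact ⟨unitInterval.symm t, by rw [arcS, arcS, lin_symm]⟩

lemma two_pi_pos : (0:ℝ) < 2 * Real.pi := by positivity

lemma expS_add_two_pi (a : ℝ) : expS (a + 2*Real.pi) = expS a := by
  have := expS_period a 1
  push_cast at this
  simpa using this

/-- splitting the circle at two points -/
lemma sphere_split {P Q : 𝕊} (hPQ : P ≠ Q) :
    ∃ f g : unitInterval → 𝕊, Continuous f ∧ Continuous g ∧ Function.Injective f ∧
      Function.Injective g ∧ f 0 = P ∧ f 1 = Q ∧ g 0 = P ∧ g 1 = Q ∧
      range f ∪ range g = univ ∧ range f ∩ range g = {P, Q} := by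
  obtain ⟨θ₁, hθ₁⟩ := expS_surj P
  obtain ⟨θ₂, ⟨hgt, hle⟩, hθ₂⟩ := expS_surj_Ioc θ₁ Q
  have hπ := two_pi_pos
  have hlt2 : θ₂ < θ₁ + 2*Real.pi := by
    rcases lt_or_eq_of_le hle with h | h
    · exact h
    · exfalso; apply hPQ; rw [← hθ₁, ← hθ₂, h, expS_add_two_pi]
  refine ⟨arcS θ₁ θ₂, arcS (θ₁ + 2*Real.pi) θ₂, arcS_cont _ _, arcS_cont _ _,
    arcS_inj hgt.ne (by rw [abs_sub_comm, abs_of_pos (by linarith)]; linarith),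
    arcS_inj (by linarith : θ₁ + 2*Real.pi ≠ θ₂) (by rw [abs_of_pos (by linarith)]; linarith),
    by rw [arcS_zero, hθ₁], by rw [arcS_one, hθ₂],
    by rw [arcS_zero, expS_add_two_pi, hθ₁], by rw [arcS_one, hθ₂], ?_, ?_⟩
  · have h1 : range (arcS θ₁ θ₂) = expS '' Icc θ₁ θ₂ := arcS_range hgt.le
    have h2 : range (arcS (θ₁ + 2*Real.pi) θ₂) = expS '' Icc θ₂ (θ₁ + 2*Real.pi) := by
      rw [arcS_range_symm]; exact arcS_range hlt2.le
    rw [h1, h2, ← image_union, Icc_union_Icc_eq_Icc hgt.le hlt2.le]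
    apply subset_antisymm (subset_univ _)
    intro w _
    obtain ⟨θ, hmem, hθ⟩ := expS_surj_Ioc θ₁ w
    exact ⟨θ, ⟨hmem.1.le, hmem.2⟩, hθ⟩
  · have h1 : range (arcS θ₁ θ₂) = expS '' Icc θ₁ θ₂ := arcS_range hgt.le
    have h2 : range (arcS (θ₁ + 2*Real.pi) θ₂) = expS '' Icc θ₂ (θ₁ + 2*Real.pi) := by
      rw [arcS_range_symm]; exact arcS_range hlt2.le
    rw [h1, h2]
    apply subset_antisymm
    · rintro w ⟨⟨c₁, hc₁, rfl⟩, ⟨c₂, hc₂, heq⟩⟩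
      obtain ⟨n, hn⟩ := expS_eq_iff.1 heq.symm
      have hπ' : (0:ℝ) < Real.pi := Real.pi_pos
      have hb1 : (n:ℝ) * (2*Real.pi) ≤ 0 := by nlinarith [hc₁.2, hc₂.1]
      have hb2 : -(2*Real.pi) ≤ (n:ℝ) * (2*Real.pi) := by nlinarith [hc₁.1, hc₂.2]
      have hn0 : (n:ℝ) ≤ 0 := by nlinarith
      have hn1 : (-1:ℝ) ≤ (n:ℝ) := by nlinarith
      have : n = 0 ∨ n = -1 := by
        have h0 : n ≤ 0 := by exact_mod_cast hn0
        have h1 : (-1:ℤ) ≤ n := by exact_mod_cast hn1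
        omega
      simp only [mem_insert_iff, mem_singleton_iff]
      rcases this with rfl | rfl
      · right
        have hc : c₁ = θ₂ := by push_cast at hn; cases' hc₁ with _ h; cases' hc₂ with h' _; linarith
        rw [hc, hθ₂]
      · left
        have hc : c₁ = θ₁ := by
          push_cast at hn
          cases' hc₁ with h _; cases' hc₂ with _ h'
          linarith
        rw [hc, hθ₁]
    · rintro w (rfl | rfl)
      · exact ⟨⟨θ₁, ⟨le_refl _, hgt.le⟩, hθ₁⟩, ⟨θ₁ + 2*Real.pi, ⟨hlt2.le, le_refl _⟩, by rw [expS_add_two_pi, hθ₁]⟩⟩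
      · exact ⟨⟨θ₂, ⟨hgt.le, le_refl _⟩, hθ₂⟩, ⟨θ₂, ⟨le_refl _, hlt2.le⟩, hθ₂⟩⟩

lemma unitIval_lt {a b : unitInterval} (h : (a:ℝ) < (b:ℝ)) : a < b := Subtype.coe_lt_coe.1 h

/-- visiting three points in order on the sphere -/
lemma sphere_three {P Q R : 𝕊} (hPQ : P ≠ Q) (hPR : P ≠ R) (hQR : Q ≠ R) :
    ∃ f : unitInterval → 𝕊, Continuous f ∧ Function.Injective f ∧
      ∃ t₁ t₂ t₃ : unitInterval, t₁ < t₂ ∧ t₂ < t₃ ∧ f t₁ = P ∧ f t₂ = Q ∧ f t₃ = R := by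
  have hπ := two_pi_pos
  obtain ⟨θ₁, hθ₁⟩ := expS_surj P
  obtain ⟨θq, ⟨hq1, hq2'⟩, hθq⟩ := expS_surj_Ioc θ₁ Q
  obtain ⟨θr, ⟨hr1, hr2'⟩, hθr⟩ := expS_surj_Ioc θ₁ R
  have hq2 : θq < θ₁ + 2*Real.pi := by
    rcases lt_or_eq_of_le hq2' with h | h
    · exact h
    · exact absurd (by rw [← hθ₁, ← hθq, h, expS_add_two_pi]) hPQ
  have hr2 : θr < θ₁ + 2*Real.pi := by
    rcases lt_or_eq_of_le hr2' with h | h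
    · exact h
    · exact absurd (by rw [← hθ₁, ← hθr, h, expS_add_two_pi]) hPR
  have hqr : θq ≠ θr := fun h => hQR (by rw [← hθq, ← hθr, h])
  rcases lt_or_gt_of_ne hqr with hlt | hlt
  · -- counterclockwise: θ₁ < θq < θr
    refine ⟨arcS θ₁ θr, arcS_cont _ _,
      arcS_inj hr1.ne (by rw [abs_sub_comm, abs_of_pos (by linarith)]; linarith),
      0, ⟨(θq - θ₁)/(θr - θ₁), div_nonneg (by linarith) (by linarith),
        by rw [div_le_one (by linarith)]; linarith⟩, 1, ?_, ?_, ?_, ?_, ?_⟩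
    · apply unitIval_lt; show (0:ℝ) < _; exact div_pos (by linarith) (by linarith)
    · apply unitIval_lt; show _ < (1:ℝ); rw [div_lt_one (by linarith)]; linarith
    · rw [arcS_zero, hθ₁]
    · show expS _ = Q
      rw [← hθq]
      congr 1
      unfold lin
      have hne : θr - θ₁ ≠ 0 := by intro h; rw [sub_eq_zero] at h; exact hr1.ne h.symm
      field_simp
      ring
    · rw [arcS_one, hθr]
  · -- clockwise: go from θ₁ down to θr - 2π, passing θq - 2π
    have h1 : θr - 2*Real.pi < θq - 2*Real.pi := by linarith
    have h2 : θq - 2*Real.pi < θ₁ := by linarith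
    have hden : (0:ℝ) < θ₁ - (θr - 2*Real.pi) := by linarith
    refine ⟨arcS θ₁ (θr - 2*Real.pi), arcS_cont _ _,
      arcS_inj (by linarith) (by rw [abs_of_pos (by linarith)]; linarith),
      0, ⟨(θ₁ - (θq - 2*Real.pi))/(θ₁ - (θr - 2*Real.pi)), div_nonneg (by linarith) hden.le,
        by rw [div_le_one hden]; linarith⟩, 1, ?_, ?_, ?_, ?_, ?_⟩
    · apply unitIval_lt; show (0:ℝ) < _; apply div_pos (by linarith) hden
    · apply unitIval_lt; show _ < (1:ℝ); rw [div_lt_one hden]; linarith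
    · rw [arcS_zero, hθ₁]
    · show expS _ = Q
      have : expS (θq - 2*Real.pi) = Q := by
        rw [← hθq, ← expS_add_two_pi (θq - 2*Real.pi)]; ring_nf
      rw [← this]
      congr 1
      unfold lin
      have hne : θ₁ - (θr - 2*Real.pi) ≠ 0 := hden.ne'
      field_simp
      ring
    · rw [arcS_one]
      rw [← hθr, ← expS_add_two_pi (θr - 2*Real.pi)]; ring_nf



lemma sphere_coords (w : 𝕊) : (w:ℂ).re^2 + (w:ℂ).im^2 = 1 := by
  have h : ‖(w:ℂ)‖ = 1 := by
    have := w.2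
    simpa [Complex.dist_eq] using this
  have := Complex.sq_norm (w:ℂ)
  rw [h] at this
  simpa [Complex.normSq_apply, sq] using this.symm

lemma sphere_re_le (w : 𝕊) : |(w:ℂ).re| ≤ 1 := by
  nlinarith [sphere_coords w, sq_nonneg (w:ℂ).im, abs_nonneg (w:ℂ).re, _root_.sq_abs (w:ℂ).re]

noncomputable def mkS (x y : ℝ) (h : x^2 + y^2 = 1) : 𝕊 :=
  ⟨⟨x, y⟩, by
    rw [Metric.mem_sphere, Complex.dist_eq, sub_zero]
    rw [Complex.norm_def, Complex.normSq_apply]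
    simp only []
    rw [show x*x + y*y = 1 by nlinarith]
    exact Real.sqrt_one⟩

lemma mkS_coords (x y : ℝ) (h : x^2+y^2=1) : ((mkS x y h : ℂ).re = x ∧ (mkS x y h : ℂ).im = y) :=
  ⟨rfl, rfl⟩


section Glue
variable {X : Type*} [TopologicalSpace X] [T2Space X]

/-- the "latitude" parameter of a sphere point -/
noncomputable def latS (w : 𝕊) : unitInterval :=
  ⟨(1 - (w:ℂ).re)/2, by
    have := sphere_re_le w
    rw [abs_le] at this
    constructor <;> [linarith [this.2]; linarith [this.1]]⟩

lemma latS_cont : Continuous latS := by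
  apply Continuous.subtype_mk
  fun_prop

lemma latS_eq_zero {w : 𝕊} (h : latS w = 0) : (w:ℂ).re = 1 := by
  have := congrArg (Subtype.val) h
  simp [latS] at this
  linarith

lemma latS_eq_one {w : 𝕊} (h : latS w = 1) : (w:ℂ).re = -1 := by
  have := congrArg (Subtype.val) h
  simp [latS] at this
  linarith

lemma latS_inj {w w' : 𝕊} (h : latS w = latS w') : (w:ℂ).re = (w':ℂ).re := by
  have := congrArg (Subtype.val) h
  simp [latS] at this
  linarith

lemma im_eq_zero_of_re {w : 𝕊} (h : (w:ℂ).re = 1 ∨ (w:ℂ).re = -1) : (w:ℂ).im = 0 := by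
  have hc := sphere_coords w
  rcases h with h | h <;> nlinarith [sq_nonneg (w:ℂ).im]

lemma sphere_ext {w w' : 𝕊} (hre : (w:ℂ).re = (w':ℂ).re) (him : (w:ℂ).im = (w':ℂ).im) : w = w' :=
  Subtype.ext (Complex.ext hre him)

lemma sphere_im_sq {w : 𝕊} : (w:ℂ).im^2 = 1 - (w:ℂ).re^2 := by
  have := sphere_coords w; linarith

/-- gluing two arcs with common distinct endpoints into a simple closed curve -/
lemma glue_scc {A B : Set X} {P Q : X}
    (hA : IsArcWithEnds A P Q) (hB : IsArcWithEnds B P Q)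
    (hAB : A ∩ B = {P, Q}) :
    IsSimpleClosedCurve (A ∪ B) := by
  obtain ⟨f, hf, hfr, hf0, hf1⟩ := hA
  obtain ⟨g, hg, hgr, hg0, hg1⟩ := hB
  classical
  set h : 𝕊 → X := fun w => if 0 ≤ (w:ℂ).im then f (latS w) else g (latS w) with hh
  have hfg_bd : ∀ w : 𝕊, (w:ℂ).im = 0 → f (latS w) = g (latS w) := by
    intro w him
    have hre : (w:ℂ).re = 1 ∨ (w:ℂ).re = -1 := by
      have := sphere_coords w
      have h2 : (w:ℂ).re^2 = 1 := by nlinarith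
      have h3 : ((w:ℂ).re - 1) * ((w:ℂ).re + 1) = 0 := by nlinarith
      rcases mul_eq_zero.1 h3 with h | h
      · exact Or.inl (by linarith)
      · exact Or.inr (by linarith)
    rcases hre with h | h
    · have : latS w = 0 := Subtype.ext (by simp [latS, h])
      rw [this, hf0, hg0]
    · have : latS w = 1 := Subtype.ext (by simp [latS, h])
      rw [this, hf1, hg1]
  have hcont : Continuous h := by
    rw [hh]
    apply Continuous.if_le
    · exact hf.continuous.comp latS_cont
    · exact hg.continuous.comp latS_cont
    · exact continuous_const
    · exact Complex.continuous_im.comp continuous_subtype_val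
    · intro w hw
      exact hfg_bd w hw.symm
  have himP : ∀ w' : 𝕊, g (latS w') = P → (w':ℂ).im = 0 := by
    intro w' hP
    have : latS w' = 0 := hg.injective (by rw [hP, hg0])
    exact im_eq_zero_of_re (Or.inl (latS_eq_zero this))
  have himQ : ∀ w' : 𝕊, g (latS w') = Q → (w':ℂ).im = 0 := by
    intro w' hQ
    have : latS w' = 1 := hg.injective (by rw [hQ, hg1])
    exact im_eq_zero_of_re (Or.inr (latS_eq_one this))
  have himPf : ∀ w' : 𝕊, f (latS w') = P → (w':ℂ).im = 0 := by
    intro w' hP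
    have : latS w' = 0 := hf.injective (by rw [hP, hf0])
    exact im_eq_zero_of_re (Or.inl (latS_eq_zero this))
  have himQf : ∀ w' : 𝕊, f (latS w') = Q → (w':ℂ).im = 0 := by
    intro w' hQ
    have : latS w' = 1 := hf.injective (by rw [hQ, hf1])
    exact im_eq_zero_of_re (Or.inr (latS_eq_one this))
  have hinj : Function.Injective h := by
    intro w w' heq
    rw [hh] at heq
    simp only at heq
    by_cases c1 : 0 ≤ (w:ℂ).im <;> by_cases c2 : 0 ≤ (w':ℂ).im
    · rw [if_pos c1, if_pos c2] at heq
      have hre := latS_inj (hf.injective heq)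
      refine sphere_ext hre ?_
      have h1 : (w:ℂ).im^2 = (w':ℂ).im^2 := by rw [sphere_im_sq, sphere_im_sq, hre]
      calc (w:ℂ).im = Real.sqrt ((w:ℂ).im^2) := by rw [Real.sqrt_sq c1]
        _ = Real.sqrt ((w':ℂ).im^2) := by rw [h1]
        _ = (w':ℂ).im := Real.sqrt_sq c2
    · rw [if_pos c1, if_neg c2] at heq
      exfalso
      have hmem2 : f (latS w) ∈ A ∩ B := by
        refine ⟨by rw [← hfr]; exact mem_range_self _, by rw [← hgr, heq]; exact mem_range_self _⟩
      rw [hAB] at hmem2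
      simp only [mem_insert_iff, mem_singleton_iff] at hmem2
      rcases hmem2 with hP | hQ
      · exact c2 (le_of_eq (himP w' (by rw [← heq, hP])).symm)
      · exact c2 (le_of_eq (himQ w' (by rw [← heq, hQ])).symm)
    · rw [if_neg c1, if_pos c2] at heq
      exfalso
      have hmem2 : f (latS w') ∈ A ∩ B := by
        refine ⟨by rw [← hfr]; exact mem_range_self _, by rw [← hgr, ← heq]; exact mem_range_self _⟩
      rw [hAB] at hmem2
      simp only [mem_insert_iff, mem_singleton_iff] at hmem2
      rcases hmem2 with hP | hQ
      · exact c1 (le_of_eq (himP w (by rw [heq, hP])).symm)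
      · exact c1 (le_of_eq (himQ w (by rw [heq, hQ])).symm)
    · rw [if_neg c1, if_neg c2] at heq
      have hre := latS_inj (hg.injective heq)
      refine sphere_ext hre ?_
      have h1 : (w:ℂ).im^2 = (w':ℂ).im^2 := by rw [sphere_im_sq, sphere_im_sq, hre]
      push_neg at c1 c2
      have e1 : (w:ℂ).im = -Real.sqrt ((w:ℂ).im^2) := by
        rw [show ((w:ℂ).im)^2 = (-(w:ℂ).im)^2 by ring, Real.sqrt_sq (by linarith)]; ring
      have e2 : (w':ℂ).im = -Real.sqrt ((w':ℂ).im^2) := by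
        rw [show ((w':ℂ).im)^2 = (-(w':ℂ).im)^2 by ring, Real.sqrt_sq (by linarith)]; ring
      rw [e1, e2, h1]
  have hmem' : ∀ w, h w ∈ A ∪ B := by
    intro w
    rw [hh]
    simp only
    split
    · exact Or.inl (by rw [← hfr]; exact mem_range_self _)
    · exact Or.inr (by rw [← hgr]; exact mem_range_self _)
  have hsq : ∀ t : unitInterval, (1 - 2*(t:ℝ))^2 + (Real.sqrt (1 - (1 - 2*(t:ℝ))^2))^2 = 1 := by
    intro t
    rw [Real.sq_sqrt (by nlinarith [t.2.1, t.2.2])]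
    ring
  have hlat : ∀ t : unitInterval, ∀ hyp, latS (mkS (1 - 2*(t:ℝ)) (Real.sqrt (1 - (1 - 2*(t:ℝ))^2)) hyp) = t := by
    intro t hyp
    apply Subtype.ext
    show (1 - (1 - 2*(t:ℝ)))/2 = (t:ℝ)
    ring
  have hsq' : ∀ t : unitInterval, (1 - 2*(t:ℝ))^2 + (-Real.sqrt (1 - (1 - 2*(t:ℝ))^2))^2 = 1 := by
    intro t
    rw [show (-Real.sqrt (1 - (1 - 2*(t:ℝ))^2))^2 = (Real.sqrt (1 - (1 - 2*(t:ℝ))^2))^2 by ring]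
    exact hsq t
  have hlat' : ∀ t : unitInterval, ∀ hyp, latS (mkS (1 - 2*(t:ℝ)) (-Real.sqrt (1 - (1 - 2*(t:ℝ))^2)) hyp) = t := by
    intro t hyp
    apply Subtype.ext
    show (1 - (1 - 2*(t:ℝ)))/2 = (t:ℝ)
    ring
  have hsurj : ∀ p ∈ A ∪ B, ∃ w, h w = p := by
    rintro p (hp | hp)
    · rw [← hfr] at hp
      obtain ⟨t, rfl⟩ := hp
      refine ⟨mkS (1 - 2*(t:ℝ)) (Real.sqrt (1 - (1 - 2*(t:ℝ))^2)) (hsq t), ?_⟩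
      rw [hh]
      simp only
      rw [if_pos (by exact Real.sqrt_nonneg _), hlat t]
    · rw [← hgr] at hp
      obtain ⟨t, rfl⟩ := hp
      by_cases hy : Real.sqrt (1 - (1 - 2*(t:ℝ))^2) = 0
      · -- boundary: t = 0 or t = 1
        have ht01 : t = 0 ∨ t = 1 := by
          have h0 : 1 - (1 - 2*(t:ℝ))^2 = 0 := by
            have hnn : 0 ≤ 1 - (1 - 2*(t:ℝ))^2 := by nlinarith [t.2.1, t.2.2]
            rcases eq_or_lt_of_le hnn with h | h
            · exact h.symm
            · exact absurd hy (by positivity)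
          have : (t:ℝ) = 0 ∨ (t:ℝ) = 1 := by
            have : (t:ℝ) * (1 - (t:ℝ)) = 0 := by nlinarith
            rcases mul_eq_zero.1 this with h | h
            · exact Or.inl h
            · exact Or.inr (by linarith)
          rcases this with h | h
          · exact Or.inl (Subtype.ext h)
          · exact Or.inr (Subtype.ext h)
        refine ⟨mkS (1 - 2*(t:ℝ)) (Real.sqrt (1 - (1 - 2*(t:ℝ))^2)) (hsq t), ?_⟩
        rw [hh]
        simp only
        rw [if_pos (by exact Real.sqrt_nonneg _), hlat t]
        rcases ht01 with rfl | rfl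
        · rw [hf0, hg0]
        · rw [hf1, hg1]
      · refine ⟨mkS (1 - 2*(t:ℝ)) (-Real.sqrt (1 - (1 - 2*(t:ℝ))^2)) (hsq' t), ?_⟩
        rw [hh]
        simp only
        rw [if_neg, hlat' t]
        show ¬ (0 ≤ -Real.sqrt (1 - (1 - 2*(t:ℝ))^2))
        have := Real.sqrt_nonneg (1 - (1 - 2*(t:ℝ))^2)
        intro hcon
        exact hy (le_antisymm (by linarith) this)
  let e : 𝕊 ≃ ↥(A ∪ B) :=
    Equiv.ofBijective (Set.codRestrict h (A ∪ B) hmem')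
      ⟨fun a b hab => hinj (Subtype.ext_iff.1 hab),
       fun p => by obtain ⟨w, hw⟩ := hsurj p p.2; exact ⟨w, Subtype.ext hw⟩⟩
  have hce : Continuous e := Continuous.codRestrict hcont hmem'
  exact ⟨(hce.homeoOfEquivCompactToT2).symm⟩
end Glue


section ArcTools
variable {X : Type*} [TopologicalSpace X] [T2Space X]


lemma arc_emb {f : unitInterval → X} (hc : Continuous f) (hi : Function.Injective f) :
    Topology.IsEmbedding f := (hc.isClosedEmbedding hi).isEmbedding

lemma mk_arc {f : unitInterval → X} (hc : Continuous f) (hi : Function.Injective f) :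
    IsArcWithEnds (range f) (f 0) (f 1) := ⟨f, arc_emb hc hi, rfl, rfl, rfl⟩

lemma arc_reverse {A : Set X} {a b : X} (h : IsArcWithEnds A a b) : IsArcWithEnds A b a := by
  obtain ⟨f, hf, hr, h0, h1⟩ := h
  refine ⟨f ∘ unitInterval.symm,
    arc_emb (hf.continuous.comp continuous_symm)
      (hf.injective.comp (fun s t hst => by
        have := congrArg unitInterval.symm hst
        rwa [symm_symm, symm_symm] at this)), ?_, ?_, ?_⟩
  · rw [range_comp, ← hr]
    have hs : range unitInterval.symm = univ :=
      Set.eq_univ_of_forall (fun t => ⟨unitInterval.symm t, symm_symm t⟩)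
    rw [hs, image_univ]
  · show f (unitInterval.symm 0) = b; rw [symm_zero, h1]
  · show f (unitInterval.symm 1) = a; rw [symm_one, h0]

/-- affine segment inside the unit interval -/
noncomputable def seg (s t : unitInterval) (u : unitInterval) : unitInterval :=
  ⟨(1 - (u:ℝ)) * s + u * t, by
    constructor
    · nlinarith [u.2.1, u.2.2, s.2.1, t.2.1]
    · nlinarith [u.2.1, u.2.2, s.2.2, t.2.2]⟩

lemma seg_cont (s t : unitInterval) : Continuous (seg s t) := by
  apply Continuous.subtype_mk
  fun_prop

lemma seg_zero (s t : unitInterval) : seg s t 0 = s := Subtype.ext (by simp [seg])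
lemma seg_one (s t : unitInterval) : seg s t 1 = t := Subtype.ext (by simp [seg])

lemma seg_inj {s t : unitInterval} (hst : s ≠ t) : Function.Injective (seg s t) := by
  intro u v huv
  have h1 := congrArg Subtype.val huv
  simp only [seg] at h1
  have hst' : (s:ℝ) ≠ (t:ℝ) := fun h => hst (Subtype.ext h)
  apply Subtype.ext
  have h2 : ((u:ℝ) - v) * ((t:ℝ) - s) = 0 := by nlinarith [h1]
  rcases mul_eq_zero.1 h2 with h3 | h3
  · linarith
  · exact absurd (by linarith : (s:ℝ) = t) hst'

lemma seg_mem_Icc {s t : unitInterval} (h : s ≤ t) (u : unitInterval) : seg s t u ∈ Icc s t := by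
  have hst : (s:ℝ) ≤ t := h
  constructor
  · show (s:ℝ) ≤ (1 - (u:ℝ)) * s + u * t
    nlinarith [u.2.1, u.2.2]
  · show ((1 - (u:ℝ)) * s + u * t : ℝ) ≤ t
    nlinarith [u.2.1, u.2.2]

lemma seg_hits {s t c : unitInterval} (hs : s ≤ c) (hc : c ≤ t) (hst : s < t) :
    ∃ u, seg s t u = c := by
  have h1 : (0:ℝ) < (t:ℝ) - s := by
    have : (s:ℝ) < t := hst
    linarith
  refine ⟨⟨((c:ℝ) - s)/((t:ℝ) - s), div_nonneg (by have : (s:ℝ) ≤ c := hs; linarith) h1.le,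
    by rw [div_le_one h1]; have : (c:ℝ) ≤ t := hc; linarith⟩, ?_⟩
  apply Subtype.ext
  show (1 - ((c:ℝ) - s)/((t:ℝ) - s)) * s + (((c:ℝ) - s)/((t:ℝ) - s)) * t = c
  field_simp
  ring

/-- surgery: extracting a chord through a point off a closed set -/
lemma chord_lemma {C : Set X} (hC : IsClosed C) {γ : unitInterval → X}
    (hγc : Continuous γ) (hγi : Function.Injective γ) {t₀ t₁ t₂ : unitInterval}
    (h01 : t₀ < t₁) (h12 : t₁ < t₂) (h0 : γ t₀ ∈ C) (h2 : γ t₂ ∈ C) (h1 : γ t₁ ∉ C) :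
    ∃ δ : unitInterval → X, Continuous δ ∧ Function.Injective δ ∧ δ 0 ≠ δ 1 ∧
      δ 0 ∈ C ∧ δ 1 ∈ C ∧ γ t₁ ∈ range δ ∧ range δ ∩ C = {δ 0, δ 1} := by
  have hKu : IsCompact (Icc t₀ t₁ ∩ γ ⁻¹' C) :=
    (isClosed_Icc.inter (hC.preimage hγc)).isCompact
  obtain ⟨u, ⟨⟨hu0, hu1⟩, huC⟩, huub⟩ :=
    hKu.exists_isGreatest ⟨t₀, ⟨le_refl _, h01.le⟩, h0⟩
  have hKv : IsCompact (Icc t₁ t₂ ∩ γ ⁻¹' C) :=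
    (isClosed_Icc.inter (hC.preimage hγc)).isCompact
  obtain ⟨v, ⟨⟨hv1, hv2⟩, hvC⟩, hvlb⟩ :=
    hKv.exists_isLeast ⟨t₂, ⟨h12.le, le_refl _⟩, h2⟩
  have hu1' : u < t₁ := lt_of_le_of_ne hu1 (fun h => h1 (by rwa [h] at huC))
  have hv1' : t₁ < v := lt_of_le_of_ne hv1 (fun h => h1 (by rw [← h] at hvC; exact hvC))
  have huv : u < v := hu1'.trans hv1'
  refine ⟨γ ∘ seg u v, hγc.comp (seg_cont u v), hγi.comp (seg_inj huv.ne), ?_, ?_, ?_, ?_, ?_⟩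
  · show γ (seg u v 0) ≠ γ (seg u v 1)
    rw [seg_zero, seg_one]
    exact fun h => huv.ne (hγi h)
  · show γ (seg u v 0) ∈ C; rwa [seg_zero]
  · show γ (seg u v 1) ∈ C; rwa [seg_one]
  · obtain ⟨w, hw⟩ := seg_hits hu1'.le hv1'.le huv
    exact ⟨w, by rw [Function.comp_apply, hw]⟩
  · apply subset_antisymm
    · rintro w ⟨⟨s, rfl⟩, hmem⟩
      rw [Function.comp_apply] at hmem ⊢
      have hIcc := seg_mem_Icc huv.le s
      simp only [mem_insert_iff, mem_singleton_iff, Function.comp_apply, seg_zero, seg_one]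
      rcases le_or_gt (seg u v s) t₁ with hle | hlt
      · left
        have : seg u v s ≤ u := huub ⟨⟨le_trans hu0 hIcc.1, hle⟩, hmem⟩
        rw [le_antisymm this hIcc.1]
      · right
        have : v ≤ seg u v s := hvlb ⟨⟨hlt.le, le_trans hIcc.2 hv2⟩, hmem⟩
        rw [le_antisymm hIcc.2 this]
    · rintro w (rfl | rfl)
      · exact ⟨mem_range_self 0, by show γ (seg u v 0) ∈ C; rwa [seg_zero]⟩
      · exact ⟨mem_range_self 1, by show γ (seg u v 1) ∈ C; rwa [seg_one]⟩
end ArcTools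

section CircleTools
variable {X : Type*} [TopologicalSpace X] [T2Space X]

lemma scc_compact {S : Set X} (hS : IsSimpleClosedCurve S) : IsCompact S := by
  obtain ⟨φ⟩ := hS
  haveI : CompactSpace ↥S := φ.symm.compactSpace
  exact isCompact_iff_compactSpace.mpr inferInstance

lemma sphere_one_mem : (1:ℂ) ∈ Metric.sphere (0:ℂ) 1 := by simp
lemma sphere_neg_one_mem : (-1:ℂ) ∈ Metric.sphere (0:ℂ) 1 := by
  rw [Metric.mem_sphere, Complex.dist_eq]; simp

lemma scc_second_point {S : Set X} (hS : IsSimpleClosedCurve S) (y : X) :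
    ∃ w ∈ S, w ≠ y := by
  obtain ⟨φ⟩ := hS
  set w₁ : ↥S := φ.symm ⟨1, sphere_one_mem⟩
  set w₂ : ↥S := φ.symm ⟨-1, sphere_neg_one_mem⟩
  have hw : (w₁ : X) ≠ (w₂ : X) := by
    intro h
    have h2 : w₁ = w₂ := Subtype.ext h
    have h3 := φ.symm.injective h2
    have h4 := congrArg Subtype.val h3
    simp at h4
    norm_num at h4
  rcases eq_or_ne (w₁ : X) y with rfl | h
  · exact ⟨w₂, w₂.2, fun h => hw h.symm⟩
  · exact ⟨w₁, w₁.2, h⟩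

lemma scc_split {S : Set X} (hS : IsSimpleClosedCurve S) {P Q : X}
    (hP : P ∈ S) (hQ : Q ∈ S) (hPQ : P ≠ Q) :
    ∃ A B : Set X, IsArcWithEnds A P Q ∧ IsArcWithEnds B P Q ∧
      A ∪ B = S ∧ A ∩ B = {P, Q} := by
  obtain ⟨φ⟩ := hS
  have hpq : φ ⟨P, hP⟩ ≠ φ ⟨Q, hQ⟩ := fun h => hPQ (congrArg Subtype.val (φ.injective h))
  obtain ⟨f, g, hfc, hgc, hfi, hgi, hf0, hf1, hg0, hg1, hun, hint⟩ := sphere_split hpq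
  set F : unitInterval → X := fun t => ((φ.symm (f t) : ↥S) : X) with hF
  set G : unitInterval → X := fun t => ((φ.symm (g t) : ↥S) : X) with hG
  have hFc : Continuous F := continuous_subtype_val.comp (φ.symm.continuous.comp hfc)
  have hGc : Continuous G := continuous_subtype_val.comp (φ.symm.continuous.comp hgc)
  have hFi : Function.Injective F :=
    fun a b h => hfi (φ.symm.injective (Subtype.val_injective h))
  have hGi : Function.Injective G :=
    fun a b h => hgi (φ.symm.injective (Subtype.val_injective h))
  have hF0 : F 0 = P := by rw [hF]; simp only []; rw [hf0, Homeomorph.symm_apply_apply]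
  have hF1 : F 1 = Q := by rw [hF]; simp only []; rw [hf1, Homeomorph.symm_apply_apply]
  have hG0 : G 0 = P := by rw [hG]; simp only []; rw [hg0, Homeomorph.symm_apply_apply]
  have hG1 : G 1 = Q := by rw [hG]; simp only []; rw [hg1, Homeomorph.symm_apply_apply]
  have hrF : range F = Subtype.val '' (φ.symm '' (range f)) := by
    rw [hF, ← range_comp, ← range_comp]; rfl
  have hrG : range G = Subtype.val '' (φ.symm '' (range g)) := by
    rw [hG, ← range_comp, ← range_comp]; rfl
  refine ⟨range F, range G,
    ⟨F, arc_emb hFc hFi, rfl, hF0, hF1⟩, ⟨G, arc_emb hGc hGi, rfl, hG0, hG1⟩, ?_, ?_⟩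
  · rw [hrF, hrG, ← image_union, ← image_union, hun, image_univ,
      range_eq_univ.mpr φ.symm.surjective, image_univ, Subtype.range_coe]
  · have hival : Function.Injective (fun w : 𝕊 => ((φ.symm w : ↥S) : X)) :=
      fun a b h => φ.symm.injective (Subtype.val_injective h)
    have h1 : range F = (fun w : 𝕊 => ((φ.symm w : ↥S) : X)) '' range f := by
      rw [hrF, image_image]
    have h2 : range G = (fun w : 𝕊 => ((φ.symm w : ↥S) : X)) '' range g := by
      rw [hrG, image_image]
    rw [h1, h2, ← Set.image_inter hival, hint]
    rw [image_insert_eq, image_singleton]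
    simp only [Homeomorph.symm_apply_apply]
end CircleTools


section Assembly
variable {X : Type*} [TopologicalSpace X] [T2Space X]

lemma inj3 {Y : Type*} {a b c : Y} (hab : a ≠ b) (hac : a ≠ c) (hbc : b ≠ c) :
    Function.Injective ![a, b, c] := by
  intro i j h
  fin_cases i <;> fin_cases j <;> simp_all

lemma val3_0 {Y : Type*} (a b c : Y) : ![a, b, c] 0 = a := rfl
lemma val3_1 {Y : Type*} (a b c : Y) : ![a, b, c] 1 = b := rfl
lemma val3_2 {Y : Type*} (a b c : Y) : ![a, b, c] 2 = c := rfl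

lemma fin3_01 : (0 : Fin 3) < 1 := by decide
lemma fin3_12 : (1 : Fin 3) < 2 := by decide

lemma arc_mem_left {A : Set X} {a b : X} (h : IsArcWithEnds A a b) : a ∈ A := by
  obtain ⟨f, _, hr, h0, _⟩ := h
  rw [← hr, ← h0]; exact mem_range_self 0

lemma arc_mem_right {A : Set X} {a b : X} (h : IsArcWithEnds A a b) : b ∈ A := by
  obtain ⟨f, _, hr, _, h1⟩ := h
  rw [← hr, ← h1]; exact mem_range_self 1

/-- a chord attached to a circle at two points gives a theta curve -/
lemma theta_build {S : Set X} (hS : IsSimpleClosedCurve S) {δ : unitInterval → X}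
    (hδc : Continuous δ) (hδi : Function.Injective δ) (hne : δ 0 ≠ δ 1)
    (h0 : δ 0 ∈ S) (h1 : δ 1 ∈ S) (hint : range δ ∩ S = {δ 0, δ 1}) :
    IsThetaCurve (S ∪ range δ) := by
  obtain ⟨A, B, hA, hB, hun, hAB⟩ := scc_split hS h0 h1 hne
  have hAd : A ∩ range δ = {δ 0, δ 1} := by
    apply subset_antisymm
    · intro w hw
      rw [← hint]
      exact ⟨hw.2, by rw [← hun]; exact Or.inl hw.1⟩
    · rintro w (rfl | rfl)
      · exact ⟨arc_mem_left hA, mem_range_self 0⟩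
      · exact ⟨arc_mem_right hA, mem_range_self 1⟩
  have hBd : B ∩ range δ = {δ 0, δ 1} := by
    apply subset_antisymm
    · intro w hw
      rw [← hint]
      exact ⟨hw.2, by rw [← hun]; exact Or.inr hw.1⟩
    · rintro w (rfl | rfl)
      · exact ⟨arc_mem_left hB, mem_range_self 0⟩
      · exact ⟨arc_mem_right hB, mem_range_self 1⟩
  refine ⟨δ 0, δ 1, A, B, range δ, hne, hA, hB,
    ⟨δ, arc_emb hδc hδi, rfl, rfl, rfl⟩, hAB, hAd, hBd, ?_⟩
  rw [← hun]

/-- a circle containing a chord and a chosen point of the original circle -/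
lemma chord_circle {S : Set X} (hS : IsSimpleClosedCurve S) {δ : unitInterval → X}
    (hδc : Continuous δ) (hδi : Function.Injective δ) (hne : δ 0 ≠ δ 1)
    (h0 : δ 0 ∈ S) (h1 : δ 1 ∈ S) (hint : range δ ∩ S = {δ 0, δ 1})
    {y : X} (hy : y ∈ S) :
    ∃ T : Set X, IsSimpleClosedCurve T ∧ y ∈ T ∧ range δ ⊆ T := by
  obtain ⟨A, B, hA, hB, hun, hAB⟩ := scc_split hS h0 h1 hne
  have harc : IsArcWithEnds (range δ) (δ 0) (δ 1) := ⟨δ, arc_emb hδc hδi, rfl, rfl, rfl⟩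
  have hyAB : y ∈ A ∪ B := by rw [hun]; exact hy
  rcases hyAB with hyA | hyB
  · have hAd : A ∩ range δ = {δ 0, δ 1} := by
      apply subset_antisymm
      · intro w hw
        rw [← hint]
        exact ⟨hw.2, by rw [← hun]; exact Or.inl hw.1⟩
      · rintro w (rfl | rfl)
        · exact ⟨arc_mem_left hA, mem_range_self 0⟩
        · exact ⟨arc_mem_right hA, mem_range_self 1⟩
    exact ⟨A ∪ range δ, glue_scc hA harc hAd, Or.inl hyA, subset_union_right⟩
  · have hBd : B ∩ range δ = {δ 0, δ 1} := by
      apply subset_antisymm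
      · intro w hw
        rw [← hint]
        exact ⟨hw.2, by rw [← hun]; exact Or.inr hw.1⟩
      · rintro w (rfl | rfl)
        · exact ⟨arc_mem_left hB, mem_range_self 0⟩
        · exact ⟨arc_mem_right hB, mem_range_self 1⟩
    exact ⟨B ∪ range δ, glue_scc hB harc hBd, Or.inl hyB, subset_union_right⟩

/-- producing a chord through a point off a circle, using 3-strong arc connectivity -/
lemma chord_step (hsac : NSac X 3) {S : Set X} (hS : IsSimpleClosedCurve S)
    {w₁ w₂ x₀ : X} (h1 : w₁ ∈ S) (h2 : w₂ ∈ S) (hx : x₀ ∉ S) (h12 : w₁ ≠ w₂) :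
    ∃ δ : unitInterval → X, Continuous δ ∧ Function.Injective δ ∧ δ 0 ≠ δ 1 ∧
      δ 0 ∈ S ∧ δ 1 ∈ S ∧ x₀ ∈ range δ ∧ range δ ∩ S = {δ 0, δ 1} := by
  have hinj : Function.Injective ![w₁, x₀, w₂] :=
    inj3 (fun h => hx (h ▸ h1)) h12 (fun h => hx (h ▸ h2))
  obtain ⟨α, t, hemb, hmono, hval⟩ := hsac ![w₁, x₀, w₂] hinj
  have hv0 : α (t 0) = w₁ := hval 0
  have hv1 : α (t 1) = x₀ := hval 1
  have hv2 : α (t 2) = w₂ := hval 2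
  obtain ⟨δ, hc, hi, hne, h0, h1', hmem, hint⟩ :=
    chord_lemma (scc_compact hS).isClosed hemb.continuous hemb.injective
      (hmono fin3_01) (hmono fin3_12) (hv0 ▸ h1) (hv2 ▸ h2) (hv1 ▸ hx)
  exact ⟨δ, hc, hi, hne, h0, h1', hv1 ▸ hmem, hint⟩

/-- growing a circle to contain an extra point -/
lemma grow (hsac : NSac X 3) {S : Set X} (hS : IsSimpleClosedCurve S) {y : X}
    (hy : y ∈ S) (x : X) :
    ∃ T : Set X, IsSimpleClosedCurve T ∧ x ∈ T ∧ y ∈ T := by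
  by_cases hxS : x ∈ S
  · exact ⟨S, hS, hxS, hy⟩
  · obtain ⟨w, hwS, hwy⟩ := scc_second_point hS y
    obtain ⟨δ, hc, hi, hne, h0, h1, hmem, hint⟩ := chord_step hsac hS hwS hy hxS hwy
    obtain ⟨T, hT, hyT, hsub⟩ := chord_circle hS hc hi hne h0 h1 hint hy
    exact ⟨T, hT, hsub hmem, hyT⟩
end Assembly


section Forward
variable {X : Type*} [TopologicalSpace X] [T2Space X]

lemma seg_mem_Icc2 {a b s t : unitInterval} (hs : s ∈ Icc a b) (ht : t ∈ Icc a b)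
    (u : unitInterval) : seg s t u ∈ Icc a b := by
  have h1 : (a:ℝ) ≤ s := hs.1
  have h2 : (s:ℝ) ≤ b := hs.2
  have h3 : (a:ℝ) ≤ t := ht.1
  have h4 : (t:ℝ) ≤ b := ht.2
  constructor
  · show (a:ℝ) ≤ (1 - (u:ℝ)) * s + u * t
    nlinarith [u.2.1, u.2.2]
  · show ((1 - (u:ℝ)) * s + u * t : ℝ) ≤ b
    nlinarith [u.2.1, u.2.2]

lemma forward_dir (hsac : NSac X 3) {x y z : X} (hxy : x ≠ y) (hxz : x ≠ z) (hyz : y ≠ z) :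
    ∃ S : Set X, x ∈ S ∧ y ∈ S ∧ z ∈ S ∧
      (IsSimpleClosedCurve S ∨ IsThetaCurve S) := by
  -- Step 1: a base circle through y
  obtain ⟨α, t, hαe, hαm, hαv⟩ := hsac ![x, y, z] (inj3 hxy hxz hyz)
  obtain ⟨β, s, hβe, hβm, hβv⟩ := hsac ![x, z, y] (inj3 hxz hxy hyz.symm)
  have hαv0 : α (t 0) = x := hαv 0
  have hαv1 : α (t 1) = y := hαv 1
  have hαv2 : α (t 2) = z := hαv 2
  have hβv0 : β (s 0) = x := hβv 0
  have hβv1 : β (s 1) = z := hβv 1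
  have hβv2 : β (s 2) = y := hβv 2
  set B := β '' Icc (s 0) (s 1) with hB
  have hBc : IsCompact B := (isClosed_Icc.isCompact).image hβe.continuous
  have hxB : x ∈ B := ⟨s 0, ⟨le_refl _, (hβm fin3_01).le⟩, hβv0⟩
  have hzB : z ∈ B := ⟨s 1, ⟨(hβm fin3_01).le, le_refl _⟩, hβv1⟩
  have hyB : y ∉ B := by
    rintro ⟨r, hr, hrv⟩
    have : r = s 2 := hβe.injective (by rw [hrv, hβv2])
    rw [this] at hr
    exact absurd hr.2 (not_le.mpr (hβm fin3_12))
  obtain ⟨δ, hδc, hδi, hδne, hδ0, hδ1, hδy, hδint⟩ :=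
    chord_lemma hBc.isClosed hαe.continuous hαe.injective
      (hαm fin3_01) (hαm fin3_12) (hαv0 ▸ hxB) (hαv2 ▸ hzB) (hαv1 ▸ hyB)
  obtain ⟨sp, hsp, hspv⟩ := hδ0
  obtain ⟨sq, hsq, hsqv⟩ := hδ1
  set b' : unitInterval → X := β ∘ seg sp sq with hb'
  have hspq : sp ≠ sq := fun h => hδne (by rw [← hspv, ← hsqv, h])
  have hb'c : Continuous b' := hβe.continuous.comp (seg_cont _ _)
  have hb'i : Function.Injective b' := hβe.injective.comp (seg_inj hspq)
  have hb'0 : b' 0 = δ 0 := by rw [hb']; show β (seg sp sq 0) = δ 0; rw [seg_zero, hspv]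
  have hb'1 : b' 1 = δ 1 := by rw [hb']; show β (seg sp sq 1) = δ 1; rw [seg_one, hsqv]
  have hb'sub : range b' ⊆ B := by
    rintro _ ⟨u, rfl⟩
    exact ⟨seg sp sq u, seg_mem_Icc2 hsp hsq u, rfl⟩
  have harcδ : IsArcWithEnds (range δ) (δ 0) (δ 1) := ⟨δ, arc_emb hδc hδi, rfl, rfl, rfl⟩
  have harcb : IsArcWithEnds (range b') (δ 0) (δ 1) := by
    have := mk_arc hb'c hb'i
    rwa [hb'0, hb'1] at this
  have hint : range δ ∩ range b' = {δ 0, δ 1} := by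
    apply subset_antisymm
    · intro w hw
      rw [← hδint]
      exact ⟨hw.1, hb'sub hw.2⟩
    · rintro w (rfl | rfl)
      · exact ⟨mem_range_self 0, by rw [← hb'0]; exact mem_range_self 0⟩
      · exact ⟨mem_range_self 1, by rw [← hb'1]; exact mem_range_self 1⟩
  have hC₀ : IsSimpleClosedCurve (range δ ∪ range b') := glue_scc harcδ harcb hint
  have hyC₀ : y ∈ range δ ∪ range b' := Or.inl (hαv1 ▸ hδy)
  -- Step 2: grow to contain x
  obtain ⟨T, hT, hxT, hyT⟩ := grow hsac hC₀ hyC₀ x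
  -- Step 3: z
  by_cases hzT : z ∈ T
  · exact ⟨T, hxT, hyT, hzT, Or.inl hT⟩
  · obtain ⟨δ₃, hc3, hi3, hne3, h03, h13, hmem3, hint3⟩ :=
      chord_step hsac hT hxT hyT hzT hxy
    exact ⟨T ∪ range δ₃, Or.inl hxT, Or.inl hyT, Or.inr hmem3,
      Or.inr (theta_build hT hc3 hi3 hne3 h03 h13 hint3)⟩
end Forward


section Backward
variable {X : Type*} [TopologicalSpace X] [T2Space X]

lemma uI_nonneg (u : unitInterval) : (0:unitInterval) ≤ u :=
  Subtype.coe_le_coe.1 (by simpa using u.2.1)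

lemma uI_le_one (u : unitInterval) : u ≤ 1 :=
  Subtype.coe_le_coe.1 (by simpa using u.2.2)

lemma mono3 {t₁ t₂ t₃ : unitInterval} (h12 : t₁ < t₂) (h23 : t₂ < t₃) :
    StrictMono ![t₁, t₂, t₃] := by
  have h13 := h12.trans h23
  intro i j hij
  fin_cases i <;> fin_cases j <;>
    simp_all [Matrix.cons_val_zero, Matrix.cons_val_one, Matrix.head_cons] <;>
    first
      | exact h12 | exact h23 | exact h13
      | exact absurd hij (by decide)

/-- three distinct points on a circle can be visited in order -/
lemma circle_case {S : Set X} (hS : IsSimpleClosedCurve S) {x y z : X}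
    (hx : x ∈ S) (hy : y ∈ S) (hz : z ∈ S) (hxy : x ≠ y) (hxz : x ≠ z) (hyz : y ≠ z) :
    ∃ (α : unitInterval → X) (t : Fin 3 → unitInterval),
      Topology.IsEmbedding α ∧ StrictMono t ∧
        α (t 0) = x ∧ α (t 1) = y ∧ α (t 2) = z := by
  obtain ⟨φ⟩ := hS
  have h1 : φ ⟨x, hx⟩ ≠ φ ⟨y, hy⟩ := fun h => hxy (congrArg Subtype.val (φ.injective h))
  have h2 : φ ⟨x, hx⟩ ≠ φ ⟨z, hz⟩ := fun h => hxz (congrArg Subtype.val (φ.injective h))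
  have h3 : φ ⟨y, hy⟩ ≠ φ ⟨z, hz⟩ := fun h => hyz (congrArg Subtype.val (φ.injective h))
  obtain ⟨f, hfc, hfi, t₁, t₂, t₃, h12, h23, hP, hQ, hR⟩ := sphere_three h1 h2 h3
  set α : unitInterval → X := fun u => ((φ.symm (f u) : ↥S) : X) with hα
  have hαc : Continuous α := continuous_subtype_val.comp (φ.symm.continuous.comp hfc)
  have hαi : Function.Injective α :=
    fun u v h => hfi (φ.symm.injective (Subtype.val_injective h))
  refine ⟨α, ![t₁, t₂, t₃], arc_emb hαc hαi, mono3 h12 h23, ?_, ?_, ?_⟩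
  · show ((φ.symm (f t₁) : ↥S) : X) = x
    rw [hP, Homeomorph.symm_apply_apply]
  · show ((φ.symm (f t₂) : ↥S) : X) = y
    rw [hQ, Homeomorph.symm_apply_apply]
  · show ((φ.symm (f t₃) : ↥S) : X) = z
    rw [hR, Homeomorph.symm_apply_apply]

lemma trans_inj {a b c : X} (p : Path a b) (q : Path b c)
    (hp : Function.Injective p) (hq : Function.Injective q)
    (hint : ∀ u v, p u = q v → p u = b) : Function.Injective (p.trans q) := by
  intro u v h
  rw [Path.trans_apply, Path.trans_apply] at h
  split_ifs at h with h1 h2 h2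
  · have := congrArg Subtype.val (hp h)
    simp only at this
    exact Subtype.ext (by linarith)
  · have hb : p ⟨2*(u:ℝ), _⟩ = b := hint _ _ h
    have hu : (⟨2*(u:ℝ), _⟩ : unitInterval) = 1 := hp (by rw [hb, p.target])
    have hv : (⟨2*(v:ℝ)-1, _⟩ : unitInterval) = 0 := hq (by rw [← h, hb, q.source])
    have hu' := congrArg Subtype.val hu
    have hv' := congrArg Subtype.val hv
    simp only [Set.Icc.coe_one, Set.Icc.coe_zero] at hu' hv'
    exact Subtype.ext (by linarith)
  · have hb : p ⟨2*(v:ℝ), _⟩ = b := hint _ _ h.symm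
    have hu : (⟨2*(v:ℝ), _⟩ : unitInterval) = 1 := hp (by rw [hb, p.target])
    have hv : (⟨2*(u:ℝ)-1, _⟩ : unitInterval) = 0 := hq (by rw [← h.symm, hb, q.source])
    have hu' := congrArg Subtype.val hu
    have hv' := congrArg Subtype.val hv
    simp only [Set.Icc.coe_one, Set.Icc.coe_zero] at hu' hv'
    exact Subtype.ext (by linarith)
  · have := congrArg Subtype.val (hq h)
    simp only at this
    exact Subtype.ext (by linarith)

/-- routing through a theta curve when the three points are on three different strands -/
lemma theta_route {a b x y z : X} {f g h : unitInterval → X}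
    (hfc : Continuous f) (hfi : Function.Injective f)
    (hgc : Continuous g) (hgi : Function.Injective g)
    (hhc : Continuous h) (hhi : Function.Injective h)
    (hf0 : f 0 = a) (hf1 : f 1 = b) (hg0 : g 0 = a) (hg1 : g 1 = b)
    (hh0 : h 0 = a) (hh1 : h 1 = b)
    (hfg : range f ∩ range g = {a, b}) (hfh : range f ∩ range h = {a, b})
    (hgh : range g ∩ range h = {a, b})
    {r s w : unitInterval} (hx : f r = x) (hy : g s = y) (hz : h w = z)
    (hxa : x ≠ a) (hxb : x ≠ b) (hya : y ≠ a) (hza : z ≠ a) (hzb : z ≠ b) :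
    ∃ (α : unitInterval → X) (t : Fin 3 → unitInterval),
      Topology.IsEmbedding α ∧ StrictMono t ∧
        α (t 0) = x ∧ α (t 1) = y ∧ α (t 2) = z := by
  have hr0 : r ≠ 0 := fun hr => hxa (by rw [← hx, hr, hf0])
  have hr1 : r ≠ 1 := fun hr => hxb (by rw [← hx, hr, hf1])
  have hs0 : s ≠ 0 := fun hs => hya (by rw [← hy, hs, hg0])
  have hw0 : w ≠ 0 := fun hw => hza (by rw [← hz, hw, hh0])
  have hw1 : w ≠ 1 := fun hw => hzb (by rw [← hz, hw, hh1])
  set P1 : Path x a :=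
    { toFun := f ∘ seg r 0
      continuous_toFun := hfc.comp (seg_cont r 0)
      source' := by show f (seg r 0 0) = x; rw [seg_zero, hx]
      target' := by show f (seg r 0 1) = a; rw [seg_one, hf0] } with hP1
  set P2 : Path a b :=
    { toFun := g
      continuous_toFun := hgc
      source' := hg0
      target' := hg1 } with hP2
  set P3 : Path b z :=
    { toFun := h ∘ seg 1 w
      continuous_toFun := hhc.comp (seg_cont 1 w)
      source' := by show h (seg 1 w 0) = b; rw [seg_zero, hh1]
      target' := by show h (seg 1 w 1) = z; rw [seg_one, hz] } with hP3
  have hP1i : Function.Injective P1 := hfi.comp (seg_inj hr0)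
  have hP3i : Function.Injective P3 := hhi.comp (seg_inj (fun hh' => hw1 hh'.symm))
  -- membership facts
  have hP1mem : ∀ u, ∃ m ∈ Icc (0:unitInterval) r, P1 u = f m := fun u =>
    ⟨seg r 0 u, seg_mem_Icc2 ⟨uI_nonneg r, le_refl r⟩ ⟨le_refl 0, uI_nonneg r⟩ u, rfl⟩
  have hP3mem : ∀ u, ∃ m ∈ Icc w (1:unitInterval), P3 u = h m := fun u =>
    ⟨seg 1 w u, seg_mem_Icc2 ⟨uI_le_one w, le_refl 1⟩ ⟨le_refl w, uI_le_one w⟩ u, rfl⟩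
  have hrlt : r < 1 := lt_of_le_of_ne (uI_le_one r) hr1
  have hwgt : (0:unitInterval) < w := lt_of_le_of_ne (uI_nonneg w) (fun h' => hw0 h'.symm)
  -- P1 meets P2 only in a
  have hint12 : ∀ u v, P1 u = P2 v → P1 u = a := by
    intro u v huv
    obtain ⟨m, hm, hmv⟩ := hP1mem u
    have hmem : P1 u ∈ range f ∩ range g := ⟨⟨m, hmv.symm⟩, ⟨v, huv.symm⟩⟩
    rw [hfg] at hmem
    rcases hmem with hA | hB
    · exact hA
    · exfalso
      rw [mem_singleton_iff] at hB
      have : m = 1 := hfi (by rw [← hmv, hB, hf1])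
      rw [this] at hm
      exact hr1 (le_antisymm (uI_le_one r) hm.2)
  have hP12i : Function.Injective (P1.trans P2) := trans_inj P1 P2 hP1i hgi hint12
  -- (P1.trans P2) meets P3 only in b
  have hint123 : ∀ u v, (P1.trans P2) u = P3 v → (P1.trans P2) u = b := by
    intro u v huv
    obtain ⟨m3, hm3, hm3v⟩ := hP3mem v
    have hu : (P1.trans P2) u ∈ range P1 ∪ range P2 := by
      rw [← Path.trans_range]; exact mem_range_self u
    have hna : h m3 ≠ a := by
      intro hcon
      have : m3 = 0 := hhi (by rw [hcon, hh0])
      rw [this] at hm3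
      exact hw0 (le_antisymm hm3.1 (uI_nonneg w))
    rcases hu with ⟨u1, hu1⟩ | ⟨u2, hu2⟩
    · obtain ⟨m1, _, hm1v⟩ := hP1mem u1
      have hmem : (P1.trans P2) u ∈ range f ∩ range h := by
        refine ⟨⟨m1, ?_⟩, ⟨m3, ?_⟩⟩
        · rw [← hm1v, hu1]
        · rw [← hm3v, ← huv]
      rw [hfh] at hmem
      rcases hmem with hA | hB
      · exfalso; exact hna (by rw [← hm3v, ← huv, hA])
      · exact hB
    · have hmem : (P1.trans P2) u ∈ range g ∩ range h := by
        refine ⟨⟨u2, ?_⟩, ⟨m3, ?_⟩⟩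
        · rw [← hu2]; rfl
        · rw [← hm3v, ← huv]
      rw [hgh] at hmem
      rcases hmem with hA | hB
      · exfalso; exact hna (by rw [← hm3v, ← huv, hA])
      · exact hB
  have hTi : Function.Injective ((P1.trans P2).trans P3) :=
    trans_inj _ P3 hP12i hP3i hint123
  set T := (P1.trans P2).trans P3 with hT
  have hsgt : (0:ℝ) < s := by
    rcases lt_or_eq_of_le (uI_nonneg s) with h' | h'
    · exact h'
    · exact absurd h'.symm hs0
  have hsle : (s:ℝ) ≤ 1 := s.2.2
  refine ⟨T, ![0, ⟨(1 + (s:ℝ))/4, by constructor <;> nlinarith⟩, 1],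
    arc_emb T.continuous hTi, mono3 ?_ ?_, ?_, ?_, ?_⟩
  · apply unitIval_lt; show (0:ℝ) < (1 + (s:ℝ))/4; nlinarith
  · apply unitIval_lt; show ((1 + (s:ℝ))/4 : ℝ) < 1; nlinarith
  · show T 0 = x
    rw [hT, Path.source]
  · show T ⟨(1 + (s:ℝ))/4, _⟩ = y
    rw [hT, Path.trans_apply]
    rw [dif_pos (by show ((1 + (s:ℝ))/4 : ℝ) ≤ 1/2; nlinarith)]
    rw [Path.trans_apply]
    rw [dif_neg (by show ¬(2 * ((1 + (s:ℝ))/4) ≤ 1/2); push_neg; nlinarith)]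
    show g _ = y
    rw [← hy]
    congr 1
    exact Subtype.ext (by show 2 * (2 * ((1 + (s:ℝ))/4)) - 1 = s; ring)
  · show T 1 = z
    rw [hT, Path.target]
end Backward


section Final
variable {X : Type*} [TopologicalSpace X] [T2Space X]

lemma backward_dir {x y z : X} (hxy : x ≠ y) (hxz : x ≠ z) (hyz : y ≠ z)
    {S : Set X} (hx : x ∈ S) (hy : y ∈ S) (hz : z ∈ S)
    (hS : IsSimpleClosedCurve S ∨ IsThetaCurve S) :
    ∃ (α : unitInterval → X) (t : Fin 3 → unitInterval),
      Topology.IsEmbedding α ∧ StrictMono t ∧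
        α (t 0) = x ∧ α (t 1) = y ∧ α (t 2) = z := by
  rcases hS with hS | hS
  · exact circle_case hS hx hy hz hxy hxz hyz
  · obtain ⟨a, b, A₁, A₂, A₃, hab, hA1, hA2, hA3, h12, h13, h23, rfl⟩ := hS
    set strand : Fin 3 → Set X := ![A₁, A₂, A₃] with hstrand
    have harc : ∀ i, IsArcWithEnds (strand i) a b := by
      intro i
      fin_cases i
      · exact hA1
      · exact hA2
      · exact hA3
    have hinter : ∀ i j : Fin 3, i ≠ j → strand i ∩ strand j = {a, b} := by
      intro i j hij
      fin_cases i <;> fin_cases j <;>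
        first
          | exact absurd rfl hij
          | exact h12
          | exact h13
          | exact h23
          | (rw [Set.inter_comm]; first | exact h12 | exact h13 | exact h23)
    have hjmem : ∀ i, a ∈ strand i ∧ b ∈ strand i :=
      fun i => ⟨arc_mem_left (harc i), arc_mem_right (harc i)⟩
    obtain ⟨ix, hix⟩ : ∃ i, x ∈ strand i := by
      rcases hx with (h | h) | h
      exacts [⟨0, h⟩, ⟨1, h⟩, ⟨2, h⟩]
    obtain ⟨iy, hiy⟩ : ∃ i, y ∈ strand i := by
      rcases hy with (h | h) | h
      exacts [⟨0, h⟩, ⟨1, h⟩, ⟨2, h⟩]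
    obtain ⟨iz, hiz⟩ : ∃ i, z ∈ strand i := by
      rcases hz with (h | h) | h
      exacts [⟨0, h⟩, ⟨1, h⟩, ⟨2, h⟩]
    have other : ∀ i : Fin 3, ∃ j : Fin 3, i ≠ j := by
      intro i
      fin_cases i
      exacts [⟨1, by decide⟩, ⟨0, by decide⟩, ⟨0, by decide⟩]
    have fin_cover : ∀ i j : Fin 3, i ≠ j → x ∈ strand i ∪ strand j →
        y ∈ strand i ∪ strand j → z ∈ strand i ∪ strand j →
        ∃ (α : unitInterval → X) (t : Fin 3 → unitInterval),
          Topology.IsEmbedding α ∧ StrictMono t ∧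
            α (t 0) = x ∧ α (t 1) = y ∧ α (t 2) = z := by
      intro i j hij hxc hyc hzc
      exact circle_case (glue_scc (harc i) (harc j) (hinter i j hij)) hxc hyc hzc hxy hxz hyz
    by_cases hxa : x = a
    · rcases eq_or_ne iy iz with h | h
      · obtain ⟨j, hj⟩ := other iy
        exact fin_cover iy j hj (Or.inl (by rw [hxa]; exact (hjmem iy).1))
          (Or.inl hiy) (Or.inl (by rw [h]; exact hiz))
      · exact fin_cover iy iz h (Or.inl (by rw [hxa]; exact (hjmem iy).1))
          (Or.inl hiy) (Or.inr hiz)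
    by_cases hxb : x = b
    · rcases eq_or_ne iy iz with h | h
      · obtain ⟨j, hj⟩ := other iy
        exact fin_cover iy j hj (Or.inl (by rw [hxb]; exact (hjmem iy).2))
          (Or.inl hiy) (Or.inl (by rw [h]; exact hiz))
      · exact fin_cover iy iz h (Or.inl (by rw [hxb]; exact (hjmem iy).2))
          (Or.inl hiy) (Or.inr hiz)
    by_cases hya : y = a
    · rcases eq_or_ne ix iz with h | h
      · obtain ⟨j, hj⟩ := other ix
        exact fin_cover ix j hj (Or.inl hix)
          (Or.inl (by rw [hya]; exact (hjmem ix).1)) (Or.inl (by rw [h]; exact hiz))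
      · exact fin_cover ix iz h (Or.inl hix)
          (Or.inl (by rw [hya]; exact (hjmem ix).1)) (Or.inr hiz)
    by_cases hyb : y = b
    · rcases eq_or_ne ix iz with h | h
      · obtain ⟨j, hj⟩ := other ix
        exact fin_cover ix j hj (Or.inl hix)
          (Or.inl (by rw [hyb]; exact (hjmem ix).2)) (Or.inl (by rw [h]; exact hiz))
      · exact fin_cover ix iz h (Or.inl hix)
          (Or.inl (by rw [hyb]; exact (hjmem ix).2)) (Or.inr hiz)
    by_cases hza : z = a
    · rcases eq_or_ne ix iy with h | h
      · obtain ⟨j, hj⟩ := other ix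
        exact fin_cover ix j hj (Or.inl hix) (Or.inl (by rw [h]; exact hiy))
          (Or.inl (by rw [hza]; exact (hjmem ix).1))
      · exact fin_cover ix iy h (Or.inl hix) (Or.inr hiy)
          (Or.inl (by rw [hza]; exact (hjmem ix).1))
    by_cases hzb : z = b
    · rcases eq_or_ne ix iy with h | h
      · obtain ⟨j, hj⟩ := other ix
        exact fin_cover ix j hj (Or.inl hix) (Or.inl (by rw [h]; exact hiy))
          (Or.inl (by rw [hzb]; exact (hjmem ix).2))
      · exact fin_cover ix iy h (Or.inl hix) (Or.inr hiy)
          (Or.inl (by rw [hzb]; exact (hjmem ix).2))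
    by_cases hxy' : ix = iy
    · rcases eq_or_ne ix iz with h2 | h2
      · obtain ⟨j, hj⟩ := other ix
        exact fin_cover ix j hj (Or.inl hix) (Or.inl (by rw [hxy']; exact hiy))
          (Or.inl (by rw [h2]; exact hiz))
      · exact fin_cover ix iz h2 (Or.inl hix) (Or.inl (by rw [hxy']; exact hiy))
          (Or.inr hiz)
    by_cases hxz' : ix = iz
    · exact fin_cover ix iy hxy' (Or.inl hix) (Or.inr hiy)
        (Or.inl (by rw [hxz']; exact hiz))
    by_cases hyz' : iy = iz
    · exact fin_cover ix iy hxy' (Or.inl hix) (Or.inr hiy)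
        (Or.inr (by rw [hyz']; exact hiz))
    -- generic position: three different strands
    obtain ⟨f, hfe, hfr, hf0, hf1⟩ := harc ix
    obtain ⟨g, hge, hgr, hg0, hg1⟩ := harc iy
    obtain ⟨h, hhe, hhr, hh0, hh1⟩ := harc iz
    obtain ⟨r, hr⟩ : x ∈ range f := by rw [hfr]; exact hix
    obtain ⟨sy, hsy⟩ : y ∈ range g := by rw [hgr]; exact hiy
    obtain ⟨w, hw⟩ : z ∈ range h := by rw [hhr]; exact hiz
    exact theta_route hfe.continuous hfe.injective hge.continuous hge.injective
      hhe.continuous hhe.injective hf0 hf1 hg0 hg1 hh0 hh1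
      (by rw [hfr, hgr]; exact hinter ix iy hxy')
      (by rw [hfr, hhr]; exact hinter ix iz hxz')
      (by rw [hgr, hhr]; exact hinter iy iz hyz')
      hr hsy hw hxa hxb hya hza hzb
end Final

end Aux

/-- A nondegenerate continuum is `3`-strongly arc connected iff any three distinct
points lie on a simple closed curve or on a theta curve contained in the space. -/
theorem three_sac_iff_circle_or_theta (X : Type*) [TopologicalSpace X] [CompactSpace X]
    [ConnectedSpace X] [TopologicalSpace.MetrizableSpace X] [Nontrivial X] :
    NSac X 3 ↔
      ∀ x y z : X, x ≠ y → x ≠ z → y ≠ z →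
        ∃ S : Set X, x ∈ S ∧ y ∈ S ∧ z ∈ S ∧
          (IsSimpleClosedCurve S ∨ IsThetaCurve S) := by
  constructor
  · intro hsac x y z hxy hxz hyz
    exact forward_dir hsac hxy hxz hyz
  · intro H xs hinj
    have h01 : xs 0 ≠ xs 1 := fun h => absurd (hinj h) (by decide)
    have h02 : xs 0 ≠ xs 2 := fun h => absurd (hinj h) (by decide)
    have h12 : xs 1 ≠ xs 2 := fun h => absurd (hinj h) (by decide)
    obtain ⟨S, hx, hy, hz, hS⟩ := H (xs 0) (xs 1) (xs 2) h01 h02 h12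
    obtain ⟨α, t, hemb, hmono, hv0, hv1, hv2⟩ := backward_dir h01 h02 h12 hx hy hz hS
    refine ⟨α, t, hemb, hmono, ?_⟩
    intro i
    fin_cases i
    · exact hv0
    · exact hv1
    · exact hv2
end

section
/- No regular continuum with more than one point is ω-strongly arc connected: if X is a continuum with more than one point having a basis of open sets each of whose boundary is finite, then there exists n such that X is not n-sac. -/
open Set Topology

lemma cross_frontier {X : Type*} [TopologicalSpace X] {C U : Set X} (hC : IsPreconnected C)
    (hU : IsOpen U) (h1 : (C ∩ U).Nonempty) (h2 : (C \ closure U).Nonempty) :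
    (C ∩ frontier U).Nonempty := by
  by_contra h
  rw [not_nonempty_iff_eq_empty] at h
  have hdisj : Disjoint (frontier U) C := by
    rw [disjoint_comm, disjoint_iff_inter_eq_empty]; exact h
  have hclopen := isClopen_preimage_val hU hdisj
  haveI : PreconnectedSpace ↥C := Subtype.preconnectedSpace hC
  rcases isClopen_iff.1 hclopen with he | hu
  · obtain ⟨z, hzC, hzU⟩ := h1
    have : (⟨z, hzC⟩ : ↥C) ∈ (Subtype.val ⁻¹' U : Set ↥C) := hzU
    rw [he] at this; exact this
  · obtain ⟨z, hzC, hzU⟩ := h2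
    have : (⟨z, hzC⟩ : ↥C) ∈ (Subtype.val ⁻¹' U : Set ↥C) := hu ▸ mem_univ _
    exact hzU (subset_closure this)

lemma open_infinite {X : Type*} [TopologicalSpace X] [ConnectedSpace X] [T1Space X] [Nontrivial X]
    {s : Set X} (hs : IsOpen s) (hne : s.Nonempty) : s.Infinite := by
  intro hfin
  obtain ⟨x, hx⟩ := hne
  have h1 : IsOpen ({x} : Set X) := by
    have heq : ({x} : Set X) = s \ (s \ {x}) := by
      ext z
      constructor
      · rintro rfl; exact ⟨hx, fun h => h.2 rfl⟩
      · rintro ⟨hz, h⟩; by_contra hne'; exact h ⟨hz, hne'⟩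
    rw [heq]
    exact hs.sdiff ((hfin.subset diff_subset).isClosed)
  have := (isClopen_iff.1 ⟨isClosed_singleton, h1⟩).resolve_left (by simp)
  obtain ⟨y, hy⟩ := exists_ne x
  exact hy (by simpa using (this ▸ mem_univ y : y ∈ ({x} : Set X)))

lemma icc_unitInterval_eq (A B : unitInterval) :
    Icc A B = projIcc (0:ℝ) 1 zero_le_one '' Icc (A:ℝ) (B:ℝ) := by
  ext z
  simp only [mem_image, mem_Icc]
  constructor
  · rintro ⟨h1, h2⟩
    exact ⟨z, ⟨h1, h2⟩, projIcc_val zero_le_one z⟩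
  · rintro ⟨r, ⟨h1, h2⟩, rfl⟩
    constructor
    · rw [← projIcc_val zero_le_one A]; exact monotone_projIcc zero_le_one h1
    · rw [← projIcc_val zero_le_one B]; exact monotone_projIcc zero_le_one h2

lemma isPreconnected_icc_unitInterval (A B : unitInterval) : IsPreconnected (Icc A B) := by
  rw [icc_unitInterval_eq]
  exact isPreconnected_Icc.image _ (continuous_projIcc).continuousOn


/-- No regular continuum with more than one point is `ω`-strongly arc connected:
if a nondegenerate continuum has a basis of open sets with finite boundaries, then
for some `n ≥ 1` it fails to be `n`-strongly arc connected. -/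
theorem not_omega_sac_of_regular (X : Type*) [TopologicalSpace X] [CompactSpace X]
    [ConnectedSpace X] [TopologicalSpace.MetrizableSpace X] [Nontrivial X]
    (hreg : ∃ B : Set (Set X), TopologicalSpace.IsTopologicalBasis B ∧
      ∀ U ∈ B, (frontier U).Finite) :
    ∃ n : ℕ, 1 ≤ n ∧ ¬ NSac X n := by
  letI : MetricSpace X := TopologicalSpace.metrizableSpaceMetric X
  obtain ⟨B, hB, hBfin⟩ := hreg
  obtain ⟨x, y, hxy⟩ := exists_pair_ne X
  have hyc : ({y}ᶜ : Set X) ∈ 𝓝 x := isOpen_compl_singleton.mem_nhds (by simpa)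
  obtain ⟨s, hs_nhds, hs_closed, hs_sub⟩ := exists_mem_nhds_isClosed_subset hyc
  obtain ⟨U, hUB, hxU, hUs⟩ := hB.exists_subset_of_mem_open
    (mem_interior_iff_mem_nhds.2 hs_nhds) isOpen_interior
  have hUopen : IsOpen U := hB.isOpen hUB
  have hUclos : closure U ⊆ s := (closure_mono hUs).trans (closure_minimal interior_subset hs_closed)
  have hyV : y ∉ closure U := fun h => (hs_sub (hUclos h)) rfl
  have hF : (frontier U).Finite := hBfin U hUB
  haveI : Finite ↥(frontier U) := hF
  set k := Nat.card ↥(frontier U) with hk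
  refine ⟨k + 2, by omega, ?_⟩
  intro hsac
  have hUinf := open_infinite hUopen ⟨x, hxU⟩
  have hVinf := open_infinite (isOpen_compl_iff.2 isClosed_closure) ⟨y, hyV⟩
  let u : ℕ ↪ ↥U := Set.Infinite.natEmbedding _ hUinf
  let v : ℕ ↪ ↥((closure U)ᶜ) := Set.Infinite.natEmbedding _ hVinf
  set p : Fin (k + 2) → X := fun i =>
    if Even (i : ℕ) then (u ((i : ℕ)/2) : X) else (v ((i : ℕ)/2) : X) with hp
  have hpU : ∀ i : Fin (k+2), Even (i : ℕ) → p i ∈ U := by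
    intro i hi; simp only [hp, if_pos hi]; exact (u _).2
  have hpV : ∀ i : Fin (k+2), ¬ Even (i : ℕ) → p i ∉ closure U := by
    intro i hi; simp only [hp, if_neg hi]; exact (v _).2
  have hdisjUV : ∀ z : X, z ∈ U → z ∉ closure U → False := fun z h1 h2 => h2 (subset_closure h1)
  have hpinj : Function.Injective p := by
    intro i j hij
    by_cases hi : Even (i : ℕ) <;> by_cases hj : Even (j : ℕ)
    · have h1 : (u ((i:ℕ)/2) : X) = (u ((j:ℕ)/2) : X) := by
        simpa only [hp, if_pos hi, if_pos hj] using hij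
      have h2 : (i:ℕ)/2 = (j:ℕ)/2 := u.injective (Subtype.coe_injective h1)
      have hi' := Nat.even_iff.1 hi
      have hj' := Nat.even_iff.1 hj
      exact Fin.ext (by omega)
    · exact absurd (hij ▸ hpU i hi) (fun h => hdisjUV _ h (hpV j hj))
    · exact absurd (hij.symm ▸ hpU j hj) (fun h => hdisjUV _ h (hpV i hi))
    · have h1 : (v ((i:ℕ)/2) : X) = (v ((j:ℕ)/2) : X) := by
        simpa only [hp, if_neg hi, if_neg hj] using hij
      have h2 : (i:ℕ)/2 = (j:ℕ)/2 := v.injective (Subtype.coe_injective h1)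
      have hi' := Nat.odd_iff.1 (Nat.not_even_iff_odd.1 hi)
      have hj' := Nat.odd_iff.1 (Nat.not_even_iff_odd.1 hj)
      exact Fin.ext (by omega)
  obtain ⟨α, t, hemb, hmono, hvis⟩ := hsac p hpinj
  have key : ∀ i : Fin (k+1), ∃ r : unitInterval,
      t i.castSucc < r ∧ r < t i.succ ∧ α r ∈ frontier U := by
    intro i
    have hab : t i.castSucc < t i.succ := hmono Fin.castSucc_lt_succ
    set C : Set X := α '' Icc (t i.castSucc) (t i.succ) with hC
    have hCconn : IsPreconnected C :=
      (isPreconnected_icc_unitInterval _ _).image α hemb.continuous.continuousOn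
    have hmem1 : α (t i.castSucc) ∈ C := mem_image_of_mem _ (left_mem_Icc.2 hab.le)
    have hmem2 : α (t i.succ) ∈ C := mem_image_of_mem _ (right_mem_Icc.2 hab.le)
    have hcast : ((i.castSucc : Fin (k+2)) : ℕ) = (i : ℕ) := rfl
    have hsucc : ((i.succ : Fin (k+2)) : ℕ) = (i : ℕ) + 1 := rfl
    have h1 : (C ∩ U).Nonempty ∧ (C \ closure U).Nonempty := by
      by_cases hi : Even (i : ℕ)
      · refine ⟨⟨_, hmem1, ?_⟩, ⟨_, hmem2, ?_⟩⟩
        · rw [hvis]; exact hpU _ (by rw [hcast]; exact hi)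
        · rw [hvis]; exact hpV _ (by rw [hsucc]; simpa [Nat.even_add_one] using hi)
      · refine ⟨⟨_, hmem2, ?_⟩, ⟨_, hmem1, ?_⟩⟩
        · rw [hvis]; exact hpU _ (by rw [hsucc]; simpa [Nat.even_add_one] using hi)
        · rw [hvis]; exact hpV _ (by rw [hcast]; exact hi)
    obtain ⟨z, hzC, hzF⟩ := cross_frontier hCconn hUopen h1.1 h1.2
    obtain ⟨r, hr, rfl⟩ := hzC
    have hnotF : ∀ j : Fin (k+2), α (t j) ∉ frontier U := by
      intro j hj
      by_cases hje : Even (j : ℕ)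
      · have hU' : α (t j) ∈ U := (hvis j) ▸ hpU j hje
        rw [hUopen.frontier_eq] at hj
        exact hj.2 hU'
      · exact ((hvis j) ▸ hpV j hje) (frontier_subset_closure hj)
    have hne1 : r ≠ t i.castSucc := fun h => hnotF i.castSucc (h ▸ hzF)
    have hne2 : r ≠ t i.succ := fun h => hnotF i.succ (h ▸ hzF)
    exact ⟨r, lt_of_le_of_ne hr.1 (Ne.symm hne1), lt_of_le_of_ne hr.2 hne2, hzF⟩
  choose r hr1 hr2 hrF using key
  have hrmono : StrictMono r := by
    intro i j hij
    calc r i < t i.succ := hr2 i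
      _ ≤ t j.castSucc := hmono.monotone (by rw [Fin.succ_le_castSucc_iff]; exact hij)
      _ < r j := hr1 j
  have finj : Function.Injective (fun i : Fin (k+1) => (⟨α (r i), hrF i⟩ : ↥(frontier U))) := by
    intro i j hij
    exact hrmono.injective (hemb.injective (congrArg Subtype.val hij))
  have hcard := Nat.card_le_card_of_injective _ finj
  simp only [Nat.card_eq_fintype_card, Fintype.card_fin] at hcard
  have hcard' : k + 1 ≤ k := hcard
  omega
end

section
/- (ω-Gluing Lemma) Let Z be a Hausdorff topological space and let X and Y be subsets of Z with Z = X ∪ Y such that A = X ∩ Y is infinite. If X (with the subspace topology) is ω-sac⁺ with respect to A and Y (with the subspace topology) is ω-strongly arc connected, then Z is ω-strongly arc connected. -/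
open Set Topology

/-- `W` is `ω`-sac⁺ with respect to `A ⊆ W`: for every `n ≥ 1` and `n` distinct
points there is an arc visiting them in order whose image meets `A` in a finite set. -/
def OmegaSacPlus (W : Type*) [TopologicalSpace W] (A : Set W) : Prop :=
  ∀ n : ℕ, 1 ≤ n → ∀ x : Fin n → W, Function.Injective x →
    ∃ (α : unitInterval → W) (t : Fin n → unitInterval),
      Topology.IsEmbedding α ∧ StrictMono t ∧ (∀ i, α (t i) = x i) ∧
      (Set.range α ∩ A).Finite

noncomputable section OmegaGluingAux

/-- Reparametrized subarc of `g` on the window `[u,v]`, as a map from `ℝ`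
(clamped outside `[0,1]`). -/
def subArc {W : Type*} (g : unitInterval → W) (u v : unitInterval) : ℝ → W :=
  fun t => g (Set.projIcc 0 1 zero_le_one ((u:ℝ) + t * ((v:ℝ) - (u:ℝ))))

lemma subArc_cont {W : Type*} [TopologicalSpace W] {g : unitInterval → W}
    (hg : Continuous g) (u v : unitInterval) : Continuous (subArc g u v) := by
  apply hg.comp (continuous_projIcc.comp (by continuity))

lemma subArc_apply {W : Type*} (g : unitInterval → W) {u v : unitInterval} {t : ℝ}
    (huv : u ≤ v) (h0 : 0 ≤ t) (h1 : t ≤ 1) :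
    subArc g u v t = g ⟨(u:ℝ) + t * ((v:ℝ) - (u:ℝ)), by
      constructor
      · nlinarith [u.2.1, sub_nonneg.2 (Subtype.coe_le_coe.2 huv)]
      · nlinarith [v.2.2, sub_nonneg.2 (Subtype.coe_le_coe.2 huv)]⟩ := by
  unfold subArc
  rw [Set.projIcc_of_mem]
  constructor <;> nlinarith [u.2.1, v.2.2, sub_nonneg.2 (Subtype.coe_le_coe.2 huv)]

lemma subArc_zero {W : Type*} (g : unitInterval → W) {u v : unitInterval} (huv : u ≤ v) :
    subArc g u v 0 = g u := by
  rw [subArc_apply g huv le_rfl zero_le_one]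
  congr 1
  ext
  simp

lemma subArc_one {W : Type*} (g : unitInterval → W) {u v : unitInterval} (huv : u ≤ v) :
    subArc g u v 1 = g v := by
  rw [subArc_apply g huv zero_le_one le_rfl]
  congr 1
  ext
  simp

lemma subArc_eval {W : Type*} (g : unitInterval → W) {u v w : unitInterval}
    (huv : u < v) (h1 : u ≤ w) (h2 : w ≤ v) :
    subArc g u v (((w:ℝ) - (u:ℝ))/((v:ℝ) - (u:ℝ))) = g w := by
  have hvu : (0:ℝ) < (v:ℝ) - (u:ℝ) := sub_pos.2 (Subtype.coe_lt_coe.2 huv)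
  have hw1 : (u:ℝ) ≤ (w:ℝ) := Subtype.coe_le_coe.2 h1
  have hw2 : (w:ℝ) ≤ (v:ℝ) := Subtype.coe_le_coe.2 h2
  rw [subArc_apply g huv.le (div_nonneg (by linarith) hvu.le) (by rw [div_le_one hvu]; linarith)]
  congr 1
  ext
  field_simp
  ring

lemma subArc_eval_mem {W : Type*} (g : unitInterval → W) {u v w : unitInterval}
    (h1 : u < w) (h2 : w < v) :
    ((w:ℝ) - (u:ℝ))/((v:ℝ) - (u:ℝ)) ∈ Set.Ioo (0:ℝ) 1 := by
  have h1' : (u:ℝ) < (w:ℝ) := Subtype.coe_lt_coe.2 h1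
  have h2' : (w:ℝ) < (v:ℝ) := Subtype.coe_lt_coe.2 h2
  constructor
  · apply div_pos <;> linarith
  · rw [div_lt_one (by linarith)]; linarith

lemma subArc_image {W : Type*} (g : unitInterval → W) {u v : unitInterval} (huv : u < v) :
    subArc g u v '' Set.Icc 0 1 = g '' Set.Icc u v := by
  apply Set.Subset.antisymm
  · rintro _ ⟨t, ⟨h0, h1⟩, rfl⟩
    rw [subArc_apply g huv.le h0 h1]
    refine ⟨_, ?_, rfl⟩
    have hvu : (0:ℝ) ≤ (v:ℝ) - (u:ℝ) := sub_nonneg.2 (Subtype.coe_le_coe.2 huv.le)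
    constructor
    · rw [← Subtype.coe_le_coe]; simp only; nlinarith
    · rw [← Subtype.coe_le_coe]; simp only; nlinarith
  · rintro _ ⟨w, ⟨h1, h2⟩, rfl⟩
    have := subArc_eval g huv h1 h2
    refine ⟨_, ?_, this⟩
    have h1' : (u:ℝ) ≤ (w:ℝ) := Subtype.coe_le_coe.2 h1
    have h2' : (w:ℝ) ≤ (v:ℝ) := Subtype.coe_le_coe.2 h2
    have hvu : (0:ℝ) < (v:ℝ) - (u:ℝ) := sub_pos.2 (Subtype.coe_lt_coe.2 huv)
    constructor
    · exact div_nonneg (by linarith) hvu.le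
    · rw [div_le_one hvu]; linarith

lemma subArc_injOn {W : Type*} {g : unitInterval → W} (hg : Function.Injective g)
    {u v : unitInterval} (huv : u < v) :
    Set.InjOn (subArc g u v) (Set.Icc 0 1) := by
  intro t1 ⟨h10, h11⟩ t2 ⟨h20, h21⟩ h
  rw [subArc_apply g huv.le h10 h11, subArc_apply g huv.le h20 h21] at h
  have := congrArg Subtype.val (hg h)
  simp only at this
  have hvu : (0:ℝ) < (v:ℝ) - (u:ℝ) := sub_pos.2 (Subtype.coe_lt_coe.2 huv)
  have : t1 * ((v:ℝ) - (u:ℝ)) = t2 * ((v:ℝ) - (u:ℝ)) := by linarith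
  exact mul_right_cancel₀ (ne_of_gt hvu) this

end OmegaGluingAux

/-- Concatenation of finitely many arcs, glued end-to-end, whose images
meet only at consecutive junction points, yields an arc. -/
lemma concatArcs {W : Type*} [TopologicalSpace W] :
    ∀ (m : ℕ), 0 < m → ∀ (γ : ℕ → ℝ → W),
    (∀ k < m, Continuous (γ k)) →
    (∀ k < m, Set.InjOn (γ k) (Set.Icc 0 1)) →
    (∀ k, k + 1 < m → γ k 1 = γ (k+1) 0) →
    (∀ k, k + 1 < m → γ k '' Set.Icc 0 1 ∩ γ (k+1) '' Set.Icc 0 1 ⊆ {γ (k+1) 0}) →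
    (∀ k l, k + 2 ≤ l → l < m → γ k '' Set.Icc 0 1 ∩ γ l '' Set.Icc 0 1 = ∅) →
    ∃ Γ : ℝ → W, Continuous Γ ∧ Set.InjOn Γ (Set.Icc 0 1) ∧
      Γ '' Set.Icc 0 1 ⊆ ⋃ k < m, γ k '' Set.Icc 0 1 ∧
      ∀ k < m, ∀ s ∈ Set.Icc (0:ℝ) 1, Γ ((k + s)/m) = γ k s := by
  intro m
  induction m with
  | zero => omega
  | succ m IH =>
    intro _ γ hc hi hj hadj hfar
    rcases Nat.eq_zero_or_pos m with hm | hm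
    · subst hm
      refine ⟨γ 0, hc 0 (by omega), hi 0 (by omega), ?_, ?_⟩
      · intro w hw
        exact Set.mem_biUnion (by omega : (0:ℕ) < 1) hw
      · intro k hk s hs
        have hk0 : k = 0 := by omega
        subst hk0
        norm_num
    · -- m ≥ 1
      obtain ⟨Γ', hΓc, hΓi, hΓim, hΓv⟩ :=
        IH hm γ (fun k hk => hc k (by omega)) (fun k hk => hi k (by omega))
          (fun k hk => hj k (by omega)) (fun k hk => hadj k (by omega))
          (fun k l hkl hl => hfar k l hkl (by omega))
      have hm1 : (0:ℝ) < m := by exact_mod_cast hm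
      have hm1' : (0:ℝ) < (m:ℝ) + 1 := by linarith
      set c : ℝ := m / (m+1) with hc_def
      have hc0 : 0 < c := by positivity
      have hc1 : c < 1 := by rw [hc_def, div_lt_one hm1']; linarith
      set G : ℝ → W := fun t => if t ≤ c then Γ' (t * (m+1)/m) else γ m (t * (m+1) - m)
        with hG_def
      have hfrontier : Γ' (c * (m+1)/m) = γ m (c * (m+1) - m) := by
        have h1 : c * (m+1)/m = 1 := by rw [hc_def]; field_simp
        have h2 : c * (m+1) - m = 0 := by rw [hc_def]; field_simp; ring
        rw [h1, h2]
        have hv := hΓv (m-1) (by omega) 1 (by norm_num)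
        have hm1c : ((m-1:ℕ):ℝ) = (m:ℝ) - 1 := by
          have h : ((m-1:ℕ):ℝ) + 1 = (m:ℝ) := by
            have : (m-1) + 1 = m := by omega
            exact_mod_cast congrArg (Nat.cast : ℕ → ℝ) this
          linarith
        rw [hm1c] at hv
        have hcast : ((m:ℝ) - 1 + 1) / m = 1 := by field_simp; ring
        rw [hcast] at hv
        rw [hv]
        have hmm : (m-1) + 1 = m := by omega
        have := hj (m-1) (by omega)
        rwa [hmm] at this
      have hGc : Continuous G := by
        have hb1 : Continuous fun t : ℝ => t * ((m:ℝ)+1)/m :=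
          (continuous_id.mul continuous_const).div_const _
        have hb2 : Continuous fun t : ℝ => t * ((m:ℝ)+1) - m :=
          (continuous_id.mul continuous_const).sub continuous_const
        apply Continuous.if_le (hΓc.comp hb1) ((hc m (by omega)).comp hb2)
          continuous_id continuous_const
        intro t ht
        simp only [id] at ht
        subst ht
        exact hfrontier
      have harg1 : ∀ t : ℝ, 0 ≤ t → t ≤ c → t * (m+1)/m ∈ Set.Icc (0:ℝ) 1 := by
        intro t h0 h1
        constructor
        · positivity
        · rw [div_le_one hm1]
          rw [hc_def, le_div_iff₀ hm1'] at h1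
          linarith
      have harg2 : ∀ t : ℝ, c < t → t ≤ 1 → t * (m+1) - m ∈ Set.Ioc (0:ℝ) 1 := by
        intro t h0 h1
        have hcm : c * (m+1) = m := by rw [hc_def]; field_simp
        constructor
        · nlinarith
        · nlinarith
      have hmix : ∀ t1 t2, t1 ∈ Set.Icc (0:ℝ) 1 → t2 ∈ Set.Icc (0:ℝ) 1 →
          t1 ≤ c → c < t2 → G t1 = G t2 → False := by
        intro t1 t2 h1 h2 hle hgt heq
        have e1 : G t1 = Γ' (t1 * (m+1)/m) := if_pos hle
        have e2 : G t2 = γ m (t2 * (m+1) - m) := if_neg (not_le.2 hgt)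
        rw [e1, e2] at heq
        have ha1 := harg1 t1 h1.1 hle
        have ha2 := harg2 t2 hgt h2.2
        have hv : γ m (t2 * (m+1) - m) ∈ ⋃ k < m, γ k '' Set.Icc 0 1 := by
          rw [← heq]
          exact hΓim ⟨_, ha1, rfl⟩
        simp only [Set.mem_iUnion] at hv
        obtain ⟨k, hk, hvk⟩ := hv
        have hvm : γ m (t2 * (m+1) - m) ∈ γ m '' Set.Icc 0 1 :=
          ⟨_, Set.Ioc_subset_Icc_self ha2, rfl⟩
        rcases Nat.lt_or_ge (k+1) m with hk1 | hk1
        · have := hfar k m (by omega) (by omega)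
          exact absurd (Set.mem_inter hvk hvm) (by rw [this]; exact Set.notMem_empty _)
        · have hkm : k + 1 = m := by omega
          have hsub := hadj k (by omega)
          rw [hkm] at hsub
          have hmem := hsub (Set.mem_inter hvk hvm)
          simp only [Set.mem_singleton_iff] at hmem
          have h0mem : (0:ℝ) ∈ Set.Icc (0:ℝ) 1 := by norm_num
          have := hi m (by omega) (Set.Ioc_subset_Icc_self ha2) h0mem hmem
          linarith [ha2.1]
      have hGi : Set.InjOn G (Set.Icc 0 1) := by
        intro t1 h1 t2 h2 heq
        rcases le_or_gt t1 c with hle1 | hgt1 <;> rcases le_or_gt t2 c with hle2 | hgt2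
        · have e1 : G t1 = Γ' (t1 * (m+1)/m) := if_pos hle1
          have e2 : G t2 = Γ' (t2 * (m+1)/m) := if_pos hle2
          rw [e1, e2] at heq
          have heq2 := hΓi (harg1 t1 h1.1 hle1) (harg1 t2 h2.1 hle2) heq
          have hm0 : (m:ℝ) ≠ 0 := ne_of_gt hm1
          field_simp at heq2
          linarith [heq2]
        · exact absurd heq (fun h => hmix t1 t2 h1 h2 hle1 hgt2 h)
        · exact absurd heq.symm (fun h => hmix t2 t1 h2 h1 hle2 hgt1 h)
        · have e1 : G t1 = γ m (t1 * (m+1) - m) := if_neg (not_le.2 hgt1)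
          have e2 : G t2 = γ m (t2 * (m+1) - m) := if_neg (not_le.2 hgt2)
          rw [e1, e2] at heq
          have := hi m (by omega) (Set.Ioc_subset_Icc_self (harg2 t1 hgt1 h1.2))
            (Set.Ioc_subset_Icc_self (harg2 t2 hgt2 h2.2)) heq
          nlinarith
      refine ⟨G, hGc, hGi, ?_, ?_⟩
      · rintro _ ⟨t, ht, rfl⟩
        rcases le_or_gt t c with hle | hgt
        · have e1 : G t = Γ' (t * (m+1)/m) := if_pos hle
          rw [e1]
          have := hΓim ⟨_, harg1 t ht.1 hle, rfl⟩
          simp only [Set.mem_iUnion] at this ⊢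
          obtain ⟨k, hk, hmem⟩ := this
          exact ⟨k, by omega, hmem⟩
        · have e2 : G t = γ m (t * (m+1) - m) := if_neg (not_le.2 hgt)
          rw [e2]
          simp only [Set.mem_iUnion]
          exact ⟨m, by omega, ⟨_, Set.Ioc_subset_Icc_self (harg2 t hgt ht.2), rfl⟩⟩
      · intro k hk s hs
        push_cast
        rcases Nat.lt_or_ge k m with hkm | hkm
        · have hle : ((k:ℝ) + s)/((m:ℝ)+1) ≤ c := by
            rw [hc_def, div_le_div_iff₀ (by linarith) hm1']
            have hkm' : (k:ℝ) ≤ (m:ℝ) - 1 := by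
              have : (k:ℝ) + 1 ≤ (m:ℝ) := by exact_mod_cast hkm
              linarith
            nlinarith [hs.2]
          have e1 : G (((k:ℝ) + s)/((m:ℝ)+1)) = Γ' ((((k:ℝ) + s)/((m:ℝ)+1)) * ((m:ℝ)+1)/m) :=
            if_pos hle
          have harg : ((((k:ℝ) + s)/((m:ℝ)+1)) * ((m:ℝ)+1))/(m:ℝ) = ((k:ℝ) + s)/m := by
            field_simp
          have hv := hΓv k hkm s hs
          rw [e1, harg]
          exact hv
        · have hkm' : k = m := by omega
          rw [hkm']
          rcases eq_or_lt_of_le hs.1 with hs0 | hs0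
          · rw [← hs0]
            have ht : ((m:ℝ) + 0)/((m:ℝ)+1) = c := by
              rw [hc_def]; norm_num
            rw [ht]
            have e1 : G c = Γ' (c * ((m:ℝ)+1)/m) := if_pos le_rfl
            rw [e1, hfrontier]
            congr 1
            rw [hc_def]; field_simp; ring
          · have hgt : c < ((m:ℝ) + s)/((m:ℝ)+1) := by
              rw [hc_def, div_lt_div_iff₀ hm1' hm1']
              nlinarith
            have e2 : G (((m:ℝ) + s)/((m:ℝ)+1)) =
                γ m ((((m:ℝ) + s)/((m:ℝ)+1)) * ((m:ℝ)+1) - m) :=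
              if_neg (not_le.2 hgt)
            rw [e2]
            congr 1
            field_simp; ring

set_option maxHeartbeats 4000000 in
/-- (ω-Gluing Lemma) Let `Z = X ∪ Y` be Hausdorff with `A = X ∩ Y` infinite.
If `X` is `ω`-sac⁺ with respect to `A` and `Y` is `ω`-strongly arc connected,
then `Z` is `ω`-strongly arc connected. -/
theorem omega_gluing (Z : Type*) [TopologicalSpace Z] [T2Space Z] (X Y : Set Z)
    (hunion : X ∪ Y = Set.univ) (hinf : (X ∩ Y).Infinite)
    (hX : OmegaSacPlus ↥X (Subtype.val ⁻¹' (X ∩ Y)))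
    (hY : ∀ n : ℕ, 1 ≤ n → NSac ↥Y n) :
    ∀ n : ℕ, 1 ≤ n → NSac Z n := by
  intro n hn z hz
  classical
  -- fresh points in A = X ∩ Y avoiding the z's
  have hinfd : ((X ∩ Y) \ Set.range z).Infinite := hinf.diff (Set.finite_range z)
  set fe := hinfd.natEmbedding with hfe_def
  set f : ℕ → Z := fun k => (fe k : Z) with hf_def
  have hfinj : Function.Injective f := fun a b h => fe.injective (Subtype.ext h)
  have hfXY : ∀ k, f k ∈ X ∩ Y := fun k => ((fe k).2).1
  have hfz : ∀ k i, f k ≠ z i := by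
    intro k i h
    exact ((fe k).2).2 ⟨i, h.symm⟩
  -- the visiting sequence for the X-side arc
  have hdiv3 : ∀ k : Fin (3*n), (k:ℕ)/3 < n := by
    intro k
    have := k.isLt
    omega
  set xv : Fin (3*n) → Z := fun k =>
    if (k:ℕ) % 3 = 1 ∧ z ⟨(k:ℕ)/3, hdiv3 k⟩ ∈ X then z ⟨(k:ℕ)/3, hdiv3 k⟩
    else f (k:ℕ) with hxv_def
  have hxvX : ∀ k, xv k ∈ X := by
    intro k
    rw [hxv_def]
    dsimp only
    split
    · next h => exact h.2
    · exact (hfXY _).1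
  set x : Fin (3*n) → ↥X := fun k => ⟨xv k, hxvX k⟩ with hx_def
  have hxinj : Function.Injective x := by
    intro j k h
    have h' : xv j = xv k := congrArg Subtype.val h
    rw [hxv_def] at h'
    simp only at h'
    split at h' <;> split at h'
    · next h1 _ h2 =>
      have := hz h'
      have : (j:ℕ)/3 = (k:ℕ)/3 := by
        have := congrArg Fin.val this
        simpa using this
      have hj := j.isLt; have hk := k.isLt
      apply Fin.ext
      omega
    · next h1 h2 => exact absurd h'.symm (hfz _ _)
    · next h1 h2 => exact absurd h' (hfz _ _)
    · next h1 h2 => exact Fin.ext (hfinj h')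
  obtain ⟨α, τ, hαemb, hτ, hατ, hFfin⟩ := hX (3*n) (by omega) x hxinj
  -- total re-indexing of visit times
  set τ' : ℕ → unitInterval := fun j => τ ⟨min j (3*n-1), by omega⟩ with hτ'_def
  have hτ'lt : ∀ {j k : ℕ}, j < k → k < 3*n → τ' j < τ' k := by
    intro j k hjk hk
    apply hτ
    rw [Fin.mk_lt_mk]
    omega
  have hτ'val : ∀ (j : ℕ) (h : j < 3*n), (α (τ' j) : Z) = xv ⟨j, h⟩ := by
    intro j h
    rw [hτ'_def]
    simp only [min_eq_left (by omega : j ≤ 3*n-1)]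
    exact congrArg Subtype.val (hατ ⟨j, h⟩)
  have hval0 : ∀ (i : ℕ), i < n → (α (τ' (3*i)) : Z) = f (3*i) := by
    intro i h
    rw [hτ'val (3*i) (by omega), hxv_def]
    simp only
    rw [if_neg]
    rintro ⟨h1, -⟩
    omega
  have hval1 : ∀ (i : ℕ) (h : i < n),
      (α (τ' (3*i+1)) : Z) = if z ⟨i, h⟩ ∈ X then z ⟨i, h⟩ else f (3*i+1) := by
    intro i h
    rw [hτ'val (3*i+1) (by omega), hxv_def]
    simp only
    have hdiv : (3*i+1)/3 = i := by omega
    have hmod : (3*i+1) % 3 = 1 := by omega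
    split
    · next hc =>
      rw [if_pos]
      · exact congrArg z (Fin.ext hdiv)
      · obtain ⟨-, hc2⟩ := hc
        convert hc2 using 2
        exact (Fin.ext hdiv.symm)
    · next hc =>
      rw [if_neg]
      intro hmem
      exact hc ⟨hmod, by convert hmem using 2; exact Fin.ext hdiv⟩
  have hval2 : ∀ (i : ℕ), i < n → (α (τ' (3*i+2)) : Z) = f (3*i+2) := by
    intro i h
    rw [hτ'val (3*i+2) (by omega), hxv_def]
    simp only
    rw [if_neg]
    rintro ⟨h1, -⟩
    omega
  -- the Y-side data
  set sF : Finset (Fin n) := Finset.univ.filter (fun i => z i ∉ X) with hsF_def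
  have hsF_mem : ∀ i : Fin n, i ∈ sF ↔ z i ∉ X := by
    intro i
    rw [hsF_def, Finset.mem_filter]
    simp
  set m' : ℕ := sF.card with hm'_def
  set en : Fin m' ≃o {i // i ∈ sF} := sF.orderIsoOfFin rfl with hen_def
  have hm'n : m' ≤ n := by
    rw [hm'_def]
    exact le_trans (Finset.card_le_card (Finset.filter_subset _ _)) (by simp)
  -- the finite contact set of α with A, and the forbidden set D
  set F : Set Z := Subtype.val '' (Set.range α ∩ (Subtype.val ⁻¹' (X ∩ Y))) with hF_def
  have hFfin' : F.Finite := hFfin.image _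
  set U : Set Z := ⋃ i ∈ sF, {f (3*(i:ℕ)), f (3*(i:ℕ)+2)} with hU_def
  set D : Set Z := (F \ U) ∪ {f (3*n)} with hD_def
  have hDfin : D.Finite := (hFfin'.subset Set.diff_subset).union (Set.finite_singleton _)
  set p'' : ℕ := hDfin.toFinset.card with hp''_def
  set enD : Fin p'' ≃ {x // x ∈ hDfin.toFinset} := hDfin.toFinset.equivFin.symm with henD_def
  have hp''pos : 1 ≤ p'' := by
    rw [hp''_def]
    exact Finset.card_pos.2 ⟨f (3*n), by rw [Set.Finite.mem_toFinset, hD_def]; right; rfl⟩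
  set M : ℕ := 3*m' + p'' with hM_def
  have hM1 : 1 ≤ M := by omega
  have henDD : ∀ jj : Fin p'', ((enD jj : {x // x ∈ hDfin.toFinset}) : Z) ∈ D :=
    fun jj => (Set.Finite.mem_toFinset hDfin).1 (enD jj).2
  have hDsub : D ⊆ (X ∩ Y) := by
    rw [hD_def]
    rintro q (⟨hq, -⟩ | hq)
    · rw [hF_def] at hq
      obtain ⟨w, ⟨-, hw2⟩, rfl⟩ := hq
      exact hw2
    · rw [hq]
      exact hfXY _
  have hzY : ∀ i : Fin n, z i ∉ X → z i ∈ Y := by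
    intro i hi
    have hxy : z i ∈ X ∪ Y := by rw [hunion]; trivial
    exact hxy.resolve_left hi
  set yv : Fin M → Z := fun k =>
    if hk : (k:ℕ) < 3*m' then
      (if (k:ℕ) % 3 = 0 then f (3*((en ⟨(k:ℕ)/3, by omega⟩ : {i // i ∈ sF}) : Fin n))
       else if (k:ℕ) % 3 = 1 then z ((en ⟨(k:ℕ)/3, by omega⟩ : {i // i ∈ sF}) : Fin n)
       else f (3*((en ⟨(k:ℕ)/3, by omega⟩ : {i // i ∈ sF}) : Fin n)+2))
    else (enD ⟨(k:ℕ) - 3*m', by have := k.isLt; omega⟩ : Z) with hyv_def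
  have hyvY : ∀ k, yv k ∈ Y := by
    intro k
    rw [hyv_def]
    dsimp only
    split
    · split
      · exact (hfXY _).2
      · split
        · apply hzY
          exact (hsF_mem _).1 (en _).2
        · exact (hfXY _).2
    · exact (hDsub (henDD _)).2
  set y : Fin M → ↥Y := fun k => ⟨yv k, hyvY k⟩ with hy_def
  have henc : ∀ j k : Fin m', ((en j : {i // i ∈ sF}) : Fin n) = ((en k : {i // i ∈ sF}) : Fin n) → j = k := by
    intro j k h
    exact en.injective (Subtype.ext h)
  have hzX_f : ∀ (i : Fin n) (k : ℕ), z i ≠ f k := fun i k h => (hfz k i) h.symm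
  have hD_f : ∀ (q : Z), q ∈ D → ∀ i ∈ sF, q ≠ f (3*(i:ℕ)) ∧ q ≠ f (3*(i:ℕ)+2) := by
    intro q hq i hi
    rw [hD_def] at hq
    rcases hq with ⟨-, hq2⟩ | hq
    · constructor <;> intro h <;> apply hq2 <;> rw [hU_def] <;>
        simp only [Set.mem_iUnion, Set.mem_insert_iff, Set.mem_singleton_iff]
      · exact ⟨i, hi, Or.inl h⟩
      · exact ⟨i, hi, Or.inr h⟩
    · rw [Set.mem_singleton_iff] at hq
      subst hq
      have hin : (i:ℕ) < n := i.isLt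
      constructor <;> intro h <;> have := hfinj h <;> omega
  have hD_z : ∀ (q : Z), q ∈ D → ∀ i : Fin n, z i ∉ X → q ≠ z i := by
    intro q hq i hi h
    subst h
    exact hi (hDsub hq).1
  have hsmem : ∀ (l : Fin m'), ((en l : {i // i ∈ sF}) : Fin n) ∈ sF := fun l => (en l).2
  have hyinj : Function.Injective y := by
    intro j k h
    have h' : yv j = yv k := congrArg Subtype.val h
    rw [hyv_def] at h'
    dsimp only at h'
    by_cases hj3 : (j:ℕ) < 3*m' <;> by_cases hk3 : (k:ℕ) < 3*m'
    · rw [dif_pos hj3, dif_pos hk3] at h'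
      have hjm : (j:ℕ)%3 = 0 ∨ (j:ℕ)%3 = 1 ∨ (j:ℕ)%3 = 2 := by omega
      have hkm : (k:ℕ)%3 = 0 ∨ (k:ℕ)%3 = 1 ∨ (k:ℕ)%3 = 2 := by omega
      rcases hjm with hjr | hjr | hjr <;> rcases hkm with hkr | hkr | hkr <;>
        rw [hjr, hkr] at h' <;> norm_num at h'
      -- (0,0)
      · have e2 : (j:ℕ)/3 = (k:ℕ)/3 := congrArg Fin.val (en.injective (Subtype.ext
          (Fin.ext (Nat.eq_of_mul_eq_mul_left (show 0 < 3 by norm_num) (hfinj h')))))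
        exact Fin.ext (by omega)
      -- (0,1)
      · exact absurd h' (hfz _ _)
      -- (0,2)
      · have := hfinj h'
        omega
      -- (1,0)
      · exact absurd h'.symm (hfz _ _)
      -- (1,1)
      · have e2 : (j:ℕ)/3 = (k:ℕ)/3 := congrArg Fin.val (en.injective (Subtype.ext (hz h')))
        exact Fin.ext (by omega)
      -- (1,2)
      · exact absurd h'.symm (hfz _ _)
      -- (2,0)
      · have := hfinj h'
        omega
      -- (2,1)
      · exact absurd h' (hfz _ _)
      -- (2,2)
      · have e2 : (j:ℕ)/3 = (k:ℕ)/3 := congrArg Fin.val (en.injective (Subtype.ext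
          (Fin.ext (Nat.eq_of_mul_eq_mul_left (show 0 < 3 by norm_num)
            (Nat.add_right_cancel (hfinj h'))))))
        exact Fin.ext (by omega)
    · rw [dif_pos hj3, dif_neg hk3] at h'
      exfalso
      have hjm : (j:ℕ)%3 = 0 ∨ (j:ℕ)%3 = 1 ∨ (j:ℕ)%3 = 2 := by omega
      rcases hjm with hjr | hjr | hjr <;> rw [hjr] at h' <;> norm_num at h'
      · exact (hD_f _ (henDD _) _ (hsmem _)).1 h'.symm
      · exact (hD_z _ (henDD _) _ ((hsF_mem _).1 (hsmem _))) h'.symm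
      · exact (hD_f _ (henDD _) _ (hsmem _)).2 h'.symm
    · rw [dif_neg hj3, dif_pos hk3] at h'
      exfalso
      have hkm : (k:ℕ)%3 = 0 ∨ (k:ℕ)%3 = 1 ∨ (k:ℕ)%3 = 2 := by omega
      rcases hkm with hkr | hkr | hkr <;> rw [hkr] at h' <;> norm_num at h'
      · exact (hD_f _ (henDD _) _ (hsmem _)).1 h'
      · exact (hD_z _ (henDD _) _ ((hsF_mem _).1 (hsmem _))) h'
      · exact (hD_f _ (henDD _) _ (hsmem _)).2 h'
    · rw [dif_neg hj3, dif_neg hk3] at h'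
      have := congrArg Fin.val (enD.injective (Subtype.ext h'))
      have hj := j.isLt
      have hk := k.isLt
      apply Fin.ext
      simp only at this
      omega
  obtain ⟨β, σ, hβemb, hσ, hβσ⟩ := hY M hM1 y hyinj
  set σ' : ℕ → unitInterval := fun j => σ ⟨min j (M-1), by omega⟩ with hσ'_def
  have hσ'lt : ∀ {j k : ℕ}, j < k → k < M → σ' j < σ' k := by
    intro j k hjk hk
    apply hσ
    rw [Fin.mk_lt_mk]
    omega
  have hσ'val : ∀ (j : ℕ) (h : j < M), (β (σ' j) : Z) = yv ⟨j, h⟩ := by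
    intro j h
    rw [hσ'_def]
    simp only [min_eq_left (by omega : j ≤ M-1)]
    exact congrArg Subtype.val (hβσ ⟨j, h⟩)
  -- total versions of z and the enumeration of sF
  set z'' : ℕ → Z := fun j => z ⟨min j (n-1), by omega⟩ with hz''_def
  have hz''eq : ∀ (i:ℕ) (h : i < n), z'' i = z ⟨i, h⟩ := by
    intro i h
    rw [hz''_def]
    simp only [min_eq_left (by omega : i ≤ n-1)]
  set ee : ℕ → ℕ := fun l => if h : l < m' then (((en ⟨l, h⟩ : {i // i ∈ sF}) : Fin n) : ℕ) else 0
    with hee_def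
  have hee_eq : ∀ (l:ℕ) (h : l < m'), ee l = (((en ⟨l, h⟩ : {i // i ∈ sF}) : Fin n) : ℕ) := by
    intro l h
    rw [hee_def]
    simp only [dif_pos h]
  have hee_lt_n : ∀ (l:ℕ), l < m' → ee l < n := by
    intro l h
    rw [hee_eq l h]
    exact (((en ⟨l, h⟩ : {i // i ∈ sF}) : Fin n)).isLt
  have hee_mono : ∀ l1 l2 : ℕ, l1 < l2 → l2 < m' → ee l1 < ee l2 := by
    intro l1 l2 h12 h2
    rw [hee_eq l1 (by omega), hee_eq l2 h2]
    have : (⟨l1, by omega⟩ : Fin m') < ⟨l2, h2⟩ := by rw [Fin.mk_lt_mk]; exact h12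
    have := en.strictMono this
    exact this
  have hee_notX : ∀ (l:ℕ) (h : l < m'), z'' (ee l) ∉ X := by
    intro l h
    have hlt := hee_lt_n l h
    rw [hz''eq _ hlt]
    have heq : (⟨ee l, hlt⟩ : Fin n) = ((en ⟨l, h⟩ : {i // i ∈ sF}) : Fin n) :=
      Fin.ext (hee_eq l h)
    rw [heq]
    exact (hsF_mem _).1 (en ⟨l, h⟩).2
  set eei : ℕ → ℕ := fun j =>
    if h : (⟨min j (n-1), by omega⟩ : Fin n) ∈ sF then
      ((en.symm ⟨⟨min j (n-1), by omega⟩, h⟩ : Fin m') : ℕ)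
    else 0 with heei_def
  have heei_spec : ∀ (j : ℕ) (h : j < n), z'' j ∉ X → eei j < m' ∧ ee (eei j) = j := by
    intro j h hj
    rw [hz''eq j h] at hj
    have hmem : (⟨min j (n-1), by omega⟩ : Fin n) ∈ sF := by
      rw [hsF_mem]
      have heq : (⟨min j (n-1), by omega⟩ : Fin n) = ⟨j, h⟩ :=
        Fin.ext (by simp only; omega)
      rw [heq]
      exact hj
    rw [heei_def]
    simp only [dif_pos hmem]
    set l : Fin m' := en.symm ⟨⟨min j (n-1), by omega⟩, hmem⟩ with hl_def
    refine ⟨l.isLt, ?_⟩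
    rw [hee_eq _ (by exact l.isLt)]
    have : en ⟨(l:ℕ), l.isLt⟩ = en l := congrArg en (Fin.eta _ _)
    rw [this, hl_def]
    simp only [OrderIso.apply_symm_apply]
    rw [min_eq_left (by omega : j ≤ n-1)]
  -- values of β at the designated visit times, in ℕ-indexed form
  have hyval' : ∀ (l : ℕ) (h : l < m'),
      (β (σ' (3*l)) : Z) = f (3 * ee l) ∧
      (β (σ' (3*l+1)) : Z) = z'' (ee l) ∧
      (β (σ' (3*l+2)) : Z) = f (3 * ee l + 2) := by
    intro l h
    have h0 : 3*l < M := by omega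
    have h1 : 3*l+1 < M := by omega
    have h2 : 3*l+2 < M := by omega
    rw [hσ'val _ h0, hσ'val _ h1, hσ'val _ h2, hyv_def]
    dsimp only
    rw [dif_pos (show 3*l < 3*m' by omega), dif_pos (show 3*l+1 < 3*m' by omega),
      dif_pos (show 3*l+2 < 3*m' by omega)]
    rw [if_pos (show (3*l) % 3 = 0 by omega)]
    rw [if_neg (show ¬ (3*l+1) % 3 = 0 by omega), if_pos (show (3*l+1) % 3 = 1 by omega)]
    rw [if_neg (show ¬ (3*l+2) % 3 = 0 by omega), if_neg (show ¬ (3*l+2) % 3 = 1 by omega)]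
    simp only [show (3*l)/3 = l from by omega, show (3*l+1)/3 = l from by omega,
      show (3*l+2)/3 = l from by omega]
    have hnn : ∀ hh : l < m', (⟨l, hh⟩ : Fin m') = ⟨l, h⟩ := fun _ => rfl
    have hee' := hee_eq l h
    refine ⟨by rw [hee'], ?_, by rw [hee']⟩
    have heq2 : (⟨ee l, hee_lt_n l h⟩ : Fin n) = ((en ⟨l, h⟩ : {i // i ∈ sF}) : Fin n) :=
      Fin.ext (hee_eq l h)
    rw [hz''eq _ (hee_lt_n l h), heq2]
  have hyvalD : ∀ (jj : Fin p''), (β (σ' (3*m'+(jj:ℕ))) : Z) = (enD jj : Z) := by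
    intro jj
    have hjj : 3*m'+(jj:ℕ) < M := by have := jj.isLt; omega
    rw [hσ'val _ hjj, hyv_def]
    dsimp only
    rw [dif_neg (show ¬ (3*m'+(jj:ℕ)) < 3*m' by omega)]
    congr 1
    apply congrArg
    apply Fin.ext
    simp only
    omega
  -- values of α, in ℕ-indexed form
  have hval1' : ∀ (i : ℕ) (h : i < n),
      (α (τ' (3*i+1)) : Z) = if z'' i ∈ X then z'' i else f (3*i+1) := by
    intro i h
    rw [hval1 i h, hz''eq i h]
  -- the two inclusions ια, ιβ
  set ια : unitInterval → Z := fun t => ((α t : ↥X) : Z) with hια_def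
  set ιβ : unitInterval → Z := fun t => ((β t : ↥Y) : Z) with hιβ_def
  have hιαc : Continuous ια := continuous_subtype_val.comp hαemb.continuous
  have hιαi : Function.Injective ια := Subtype.val_injective.comp hαemb.injective
  have hιβc : Continuous ιβ := continuous_subtype_val.comp hβemb.continuous
  have hιβi : Function.Injective ιβ := Subtype.val_injective.comp hβemb.injective
  -- the key avoidance claim: a β-window meets the image of α only in its endpoints
  have hH2 : ∀ (l : ℕ), l < m' → ∀ q : Z,
      q ∈ ιβ '' Set.Icc (σ' (3*l)) (σ' (3*l+2)) → q ∈ Set.range ια →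
      q = f (3 * ee l) ∨ q = f (3 * ee l + 2) := by
    intro l hl q hqβ hqα
    obtain ⟨w, hw, hwq⟩ := hqβ
    obtain ⟨u, huq⟩ := hqα
    have hqX : q ∈ X := by rw [hια_def] at huq; rw [← huq]; exact (α u).2
    have hqY : q ∈ Y := by rw [hιβ_def] at hwq; rw [← hwq]; exact (β w).2
    have hqF : q ∈ F := by
      rw [hF_def]
      refine ⟨α u, ⟨Set.mem_range_self u, ?_⟩, huq⟩
      show ια u ∈ X ∩ Y
      rw [huq]
      exact ⟨hqX, hqY⟩
    by_cases hqU : q ∈ U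
    · -- q is one of the designated junction points: find which one
      rw [hU_def] at hqU
      simp only [Set.mem_iUnion, Set.mem_insert_iff, Set.mem_singleton_iff] at hqU
      obtain ⟨j, hj, hqj⟩ := hqU
      have hjX : z'' (j:ℕ) ∉ X := by
        rw [hz''eq _ j.isLt]
        exact (hsF_mem j).1 hj
      obtain ⟨hjm', hjee⟩ := heei_spec (j:ℕ) j.isLt hjX
      have hwin : ∀ (pos : ℕ), pos < M → w = σ' pos → 3*l ≤ pos ∧ pos ≤ 3*l+2 := by
        intro pos hpos hw'
        subst hw'
        constructor
        · by_contra hc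
          have : σ' pos < σ' (3*l) := hσ'lt (by omega) (by omega)
          exact absurd hw.1 (not_le.2 this)
        · by_contra hc
          have : σ' (3*l+2) < σ' pos := hσ'lt (by omega) hpos
          exact absurd hw.2 (not_le.2 this)
      rcases hqj with hqj | hqj
      · -- q = f (3j); the visit of β to f(3j) is at position 3 * eei j
        have hv := (hyval' (eei (j:ℕ)) hjm').1
        rw [hjee] at hv
        have hweq : w = σ' (3 * eei (j:ℕ)) := by
          apply hιβi
          rw [hwq, hqj]
          exact (show ιβ (σ' (3 * eei (j:ℕ))) = f (3*(j:ℕ)) from hv).symm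
        have hrange := hwin _ (by omega) hweq
        have : eei (j:ℕ) = l := by omega
        left
        rw [hqj, ← hjee, this]
      · have hv := (hyval' (eei (j:ℕ)) hjm').2.2
        rw [hjee] at hv
        have hweq : w = σ' (3 * eei (j:ℕ) + 2) := by
          apply hιβi
          rw [hwq, hqj]
          exact (show ιβ (σ' (3 * eei (j:ℕ) + 2)) = f (3*(j:ℕ)+2) from hv).symm
        have hrange := hwin _ (by omega) hweq
        have : eei (j:ℕ) = l := by omega
        right
        rw [hqj, ← hjee, this]
    · -- q ∈ D, so the visit of β to q is beyond all windows: contradiction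
      exfalso
      have hqD : q ∈ D := by rw [hD_def]; left; exact ⟨hqF, hqU⟩
      have hqT : q ∈ hDfin.toFinset := (Set.Finite.mem_toFinset hDfin).2 hqD
      set jq : Fin p'' := enD.symm ⟨q, hqT⟩ with hjq_def
      have hv := hyvalD jq
      rw [hjq_def] at hv
      simp only [Equiv.apply_symm_apply] at hv
      have hweq : w = σ' (3*m' + (jq:ℕ)) := by
        apply hιβi
        rw [hwq]
        exact (show ιβ (σ' (3*m' + (jq:ℕ))) = q from hv).symm
      have hlt : σ' (3*l+2) < σ' (3*m' + (jq:ℕ)) := by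
        apply hσ'lt (by omega)
        have := jq.isLt
        omega
      rw [← hweq] at hlt
      exact absurd hw.2 (not_le.2 hlt)
  -- the pieces of the final arc
  set γp : ℕ → ℝ → Z := fun k =>
    if k < 2*n-1 then
      if k % 2 = 0 then
        if z'' (k/2) ∈ X then subArc ια (τ' (3*(k/2))) (τ' (3*(k/2)+2))
        else subArc ιβ (σ' (3 * eei (k/2))) (σ' (3 * eei (k/2) + 2))
      else subArc ια (τ' (3*(k/2)+2)) (τ' (3*(k/2)+3))
    else fun _ => z'' 0 with hγp_def
  have hγpA : ∀ k, k < 2*n-1 → k % 2 = 0 → z'' (k/2) ∈ X →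
      γp k = subArc ια (τ' (3*(k/2))) (τ' (3*(k/2)+2)) := by
    intro k hk hke hzX
    rw [hγp_def]
    simp only [if_pos hk, if_pos hke, if_pos hzX]
  have hγpB : ∀ k, k < 2*n-1 → k % 2 = 0 → z'' (k/2) ∉ X →
      γp k = subArc ιβ (σ' (3 * eei (k/2))) (σ' (3 * eei (k/2) + 2)) := by
    intro k hk hke hzX
    rw [hγp_def]
    simp only [if_pos hk, if_pos hke, if_neg hzX]
  have hγpC : ∀ k, k < 2*n-1 → k % 2 = 1 →
      γp k = subArc ια (τ' (3*(k/2)+2)) (τ' (3*(k/2)+3)) := by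
    intro k hk hke
    rw [hγp_def]
    simp only [if_pos hk, if_neg (show ¬ k % 2 = 0 by omega)]
  -- division bounds
  have hdivb : ∀ k, k < 2*n-1 → k % 2 = 0 → k/2 < n := by intro k h1 h2; omega
  have hdivb' : ∀ k, k < 2*n-1 → k % 2 = 1 → k/2 + 1 < n := by intro k h1 h2; omega
  -- helper: intersections of two windows on α
  have hαα : ∀ (aL aR bL bR : ℕ), aL < aR → aR ≤ bL → bL < bR → bR < 3*n →
      (ια '' Set.Icc (τ' aL) (τ' aR)) ∩ (ια '' Set.Icc (τ' bL) (τ' bR)) ⊆ {ια (τ' bL)} := by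
    intro aL aR bL bR h1 h2 h3 h4
    rw [← Set.image_inter hιαi, Set.Icc_inter_Icc]
    rintro q ⟨t, ht, rfl⟩
    have h5 : τ' aR ≤ τ' bL := by
      rcases Nat.eq_or_lt_of_le h2 with h | h
      · subst h; exact le_rfl
      · exact (hτ'lt h (by omega)).le
    have h6 : t = τ' bL := by
      apply le_antisymm
      · exact le_trans ht.2 (le_trans inf_le_left h5)
      · exact le_trans le_sup_right ht.1
    rw [h6]
    rfl
  have hααfar : ∀ (aL aR bL bR : ℕ), aL < aR → aR < bL → bL < bR → bR < 3*n →
      (ια '' Set.Icc (τ' aL) (τ' aR)) ∩ (ια '' Set.Icc (τ' bL) (τ' bR)) = ∅ := by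
    intro aL aR bL bR h1 h2 h3 h4
    rw [← Set.image_inter hιαi, Set.Icc_inter_Icc]
    have h5 : τ' aR < τ' bL := hτ'lt h2 (by omega)
    rw [Set.Icc_eq_empty, Set.image_empty]
    intro hcon
    have : τ' bL ≤ τ' aR := le_trans le_sup_right (le_trans hcon inf_le_left)
    exact absurd this (not_le.2 h5)
  have hββfar : ∀ (aL aR bL bR : ℕ), aL < aR → aR < bL → bL < bR → bR < M →
      (ιβ '' Set.Icc (σ' aL) (σ' aR)) ∩ (ιβ '' Set.Icc (σ' bL) (σ' bR)) = ∅ := by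
    intro aL aR bL bR h1 h2 h3 h4
    rw [← Set.image_inter hιβi, Set.Icc_inter_Icc]
    have h5 : σ' aR < σ' bL := hσ'lt h2 (by omega)
    rw [Set.Icc_eq_empty, Set.image_empty]
    intro hcon
    have : σ' bL ≤ σ' aR := le_trans le_sup_right (le_trans hcon inf_le_left)
    exact absurd this (not_le.2 h5)
  -- helper: a visit point of α outside a window is not in the window's image
  have houtα : ∀ (bL bR j0 : ℕ), bL ≤ bR → bR < 3*n → j0 < 3*n → (j0 < bL ∨ bR < j0) →
      ια (τ' j0) ∉ ια '' Set.Icc (τ' bL) (τ' bR) := by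
    rintro bL bR j0 h1 h2 h3 h4 ⟨t, ht, hteq⟩
    have h5 : t = τ' j0 := hιαi hteq
    subst h5
    rcases h4 with h4 | h4
    · have : τ' j0 < τ' bL := hτ'lt h4 (by omega)
      exact absurd ht.1 (not_le.2 this)
    · have : τ' bR < τ' j0 := hτ'lt h4 h3
      exact absurd ht.2 (not_le.2 this)
  -- description of each piece
  have hdesc : ∀ k, k < 2*n-1 →
      (∃ aL aR : ℕ, γp k '' Set.Icc 0 1 = ια '' Set.Icc (τ' aL) (τ' aR) ∧ aL < aR ∧ aR < 3*n ∧
         3*(k/2) ≤ aL ∧ ((k%2 = 0 ∧ aL = 3*(k/2) ∧ aR = 3*(k/2)+2) ∨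
                          (k%2 = 1 ∧ aL = 3*(k/2)+2 ∧ aR = 3*(k/2)+3)))
      ∨ (∃ lb : ℕ, k%2 = 0 ∧ lb < m' ∧ ee lb = k/2 ∧
         γp k '' Set.Icc 0 1 = ιβ '' Set.Icc (σ' (3*lb)) (σ' (3*lb+2))) := by
    intro k hk
    rcases Nat.even_or_odd k with hke | hko
    · have hke' : k % 2 = 0 := Nat.even_iff.1 hke
      by_cases hzX : z'' (k/2) ∈ X
      · left
        refine ⟨3*(k/2), 3*(k/2)+2, ?_, by omega, by omega, by omega, Or.inl ⟨hke', rfl, rfl⟩⟩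
        rw [hγpA k hk hke' hzX]
        exact subArc_image ια (hτ'lt (by omega) (by omega))
      · right
        obtain ⟨hlb, heq⟩ := heei_spec (k/2) (by omega) hzX
        refine ⟨eei (k/2), hke', hlb, heq, ?_⟩
        rw [hγpB k hk hke' hzX]
        exact subArc_image ιβ (hσ'lt (by omega) (by omega))
    · have hko' : k % 2 = 1 := Nat.odd_iff.1 hko
      left
      refine ⟨3*(k/2)+2, 3*(k/2)+3, ?_, by omega, by omega, by omega, Or.inr ⟨hko', rfl, rfl⟩⟩
      rw [hγpC k hk hko']
      exact subArc_image ια (hτ'lt (by omega) (by omega))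
  -- endpoint values of the pieces
  have hend_even0 : ∀ k, k < 2*n-1 → k % 2 = 0 → γp k 0 = f (3*(k/2)) := by
    intro k hk hke
    by_cases hzX : z'' (k/2) ∈ X
    · rw [hγpA k hk hke hzX, subArc_zero ια (hτ'lt (by omega) (by omega)).le]
      exact hval0 _ (by omega)
    · obtain ⟨hlb, heq⟩ := heei_spec (k/2) (by omega) hzX
      rw [hγpB k hk hke hzX, subArc_zero ιβ (hσ'lt (by omega) (by omega)).le]
      have := (hyval' (eei (k/2)) hlb).1
      rw [heq] at this
      exact this
  have hend_even1 : ∀ k, k < 2*n-1 → k % 2 = 0 → γp k 1 = f (3*(k/2)+2) := by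
    intro k hk hke
    by_cases hzX : z'' (k/2) ∈ X
    · rw [hγpA k hk hke hzX, subArc_one ια (hτ'lt (by omega) (by omega)).le]
      exact hval2 _ (by omega)
    · obtain ⟨hlb, heq⟩ := heei_spec (k/2) (by omega) hzX
      rw [hγpB k hk hke hzX, subArc_one ιβ (hσ'lt (by omega) (by omega)).le]
      have := (hyval' (eei (k/2)) hlb).2.2
      rw [heq] at this
      exact this
  have hend_odd0 : ∀ k, k < 2*n-1 → k % 2 = 1 → γp k 0 = f (3*(k/2)+2) := by
    intro k hk hko
    rw [hγpC k hk hko, subArc_zero ια (hτ'lt (by omega) (by omega)).le]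
    exact hval2 _ (by omega)
  have hend_odd1 : ∀ k, k < 2*n-1 → k % 2 = 1 → γp k 1 = f (3*(k/2)+3) := by
    intro k hk hko
    rw [hγpC k hk hko, subArc_one ια (hτ'lt (by omega) (by omega)).le]
    have := hval0 (k/2+1) (by omega)
    rw [show 3*(k/2+1) = 3*(k/2)+3 by omega] at this
    exact this
  -- continuity and injectivity of the pieces
  have hcontp : ∀ k < 2*n-1, Continuous (γp k) := by
    intro k hk
    rcases Nat.even_or_odd k with hke | hko
    · have hke' : k % 2 = 0 := Nat.even_iff.1 hke
      by_cases hzX : z'' (k/2) ∈ X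
      · rw [hγpA k hk hke' hzX]; exact subArc_cont hιαc _ _
      · rw [hγpB k hk hke' hzX]; exact subArc_cont hιβc _ _
    · rw [hγpC k hk (Nat.odd_iff.1 hko)]; exact subArc_cont hιαc _ _
  have hinjp : ∀ k < 2*n-1, Set.InjOn (γp k) (Set.Icc 0 1) := by
    intro k hk
    rcases Nat.even_or_odd k with hke | hko
    · have hke' : k % 2 = 0 := Nat.even_iff.1 hke
      by_cases hzX : z'' (k/2) ∈ X
      · rw [hγpA k hk hke' hzX]
        exact subArc_injOn hιαi (hτ'lt (by omega) (by omega))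
      · obtain ⟨hlb, heq⟩ := heei_spec (k/2) (by omega) hzX
        rw [hγpB k hk hke' hzX]
        exact subArc_injOn hιβi (hσ'lt (by omega) (by omega))
    · have hko' : k % 2 = 1 := Nat.odd_iff.1 hko
      rw [hγpC k hk hko']
      exact subArc_injOn hιαi (hτ'lt (by omega) (by omega))
  -- junctions
  have hjunp : ∀ k, k+1 < 2*n-1 → γp k 1 = γp (k+1) 0 := by
    intro k hk
    rcases Nat.even_or_odd k with hke | hko
    · have hke' : k % 2 = 0 := Nat.even_iff.1 hke
      rw [hend_even1 k (by omega) hke', hend_odd0 (k+1) hk (by omega)]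
      exact congrArg f (by omega)
    · have hko' : k % 2 = 1 := Nat.odd_iff.1 hko
      rw [hend_odd1 k (by omega) hko', hend_even0 (k+1) hk (by omega)]
      exact congrArg f (by omega)
  -- adjacent pieces meet only in the junction point
  have hadjp : ∀ k, k+1 < 2*n-1 →
      γp k '' Set.Icc 0 1 ∩ γp (k+1) '' Set.Icc 0 1 ⊆ {γp (k+1) 0} := by
    intro k hk1
    rcases Nat.even_or_odd k with hke | hko
    · -- k even, k+1 odd
      have hke' : k % 2 = 0 := Nat.even_iff.1 hke
      have hko1 : (k+1) % 2 = 1 := by omega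
      have hdiv : (k+1)/2 = k/2 := by omega
      have himC : γp (k+1) '' Set.Icc 0 1
          = ια '' Set.Icc (τ' (3*(k/2)+2)) (τ' (3*(k/2)+3)) := by
        rw [hγpC (k+1) hk1 hko1, hdiv]
        exact subArc_image ια (hτ'lt (by omega) (by omega))
      have hj0 : γp (k+1) 0 = f (3*(k/2)+2) := by
        rw [hend_odd0 (k+1) hk1 hko1, hdiv]
      by_cases hzX : z'' (k/2) ∈ X
      · have himA' : γp k '' Set.Icc 0 1
            = ια '' Set.Icc (τ' (3*(k/2))) (τ' (3*(k/2)+2)) := by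
          rw [hγpA k (by omega) hke' hzX]
          exact subArc_image ια (hτ'lt (by omega) (by omega))
        rintro q ⟨hq1, hq2⟩
        rw [himA'] at hq1
        rw [himC] at hq2
        have := hαα (3*(k/2)) (3*(k/2)+2) (3*(k/2)+2) (3*(k/2)+3)
          (by omega) (by omega) (by omega) (by omega) ⟨hq1, hq2⟩
        rw [Set.mem_singleton_iff] at this ⊢
        rw [this, hj0]
        exact hval2 _ (by omega)
      · obtain ⟨hlb, heqee⟩ := heei_spec (k/2) (by omega) hzX
        have himB' : γp k '' Set.Icc 0 1
            = ιβ '' Set.Icc (σ' (3*eei (k/2))) (σ' (3*eei (k/2)+2)) := by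
          rw [hγpB k (by omega) hke' hzX]
          exact subArc_image ιβ (hσ'lt (by omega) (by omega))
        rintro q ⟨hq1, hq2⟩
        rw [himB'] at hq1
        rw [himC] at hq2
        have hqr : q ∈ Set.range ια := Set.image_subset_range _ _ hq2
        have hH := hH2 (eei (k/2)) hlb q hq1 hqr
        rw [heqee] at hH
        rcases hH with hqv | hqv
        · exfalso
          have hvq : ια (τ' (3*(k/2))) = f (3*(k/2)) := hval0 _ (by omega)
          rw [hqv, ← hvq] at hq2
          exact houtα (3*(k/2)+2) (3*(k/2)+3) (3*(k/2)) (by omega) (by omega)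
            (by omega) (by omega) hq2
        · rw [Set.mem_singleton_iff, hqv, hj0]
    · -- k odd, k+1 even
      have hko' : k % 2 = 1 := Nat.odd_iff.1 hko
      have hke1 : (k+1) % 2 = 0 := by omega
      have hdiv : (k+1)/2 = k/2+1 := by omega
      have himC' : γp k '' Set.Icc 0 1
          = ια '' Set.Icc (τ' (3*(k/2)+2)) (τ' (3*(k/2)+3)) := by
        rw [hγpC k (by omega) hko']
        exact subArc_image ια (hτ'lt (by omega) (by omega))
      have hj0 : γp (k+1) 0 = f (3*(k/2)+3) := by
        rw [hend_even0 (k+1) hk1 hke1, hdiv]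
        exact congrArg f (by omega)
      by_cases hzX : z'' ((k+1)/2) ∈ X
      · have himA' : γp (k+1) '' Set.Icc 0 1
            = ια '' Set.Icc (τ' (3*(k/2)+3)) (τ' (3*(k/2)+5)) := by
          rw [hγpA (k+1) hk1 hke1 hzX, hdiv, show 3*(k/2+1)+2 = 3*(k/2)+5 by omega,
            show 3*(k/2+1) = 3*(k/2)+3 by omega]
          exact subArc_image ια (hτ'lt (by omega) (by omega))
        rintro q ⟨hq1, hq2⟩
        rw [himC'] at hq1
        rw [himA'] at hq2
        have := hαα (3*(k/2)+2) (3*(k/2)+3) (3*(k/2)+3) (3*(k/2)+5)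
          (by omega) (by omega) (by omega) (by omega) ⟨hq1, hq2⟩
        rw [Set.mem_singleton_iff] at this ⊢
        rw [this, hj0]
        have := hval0 (k/2+1) (by omega)
        rw [show 3*(k/2+1) = 3*(k/2)+3 by omega] at this
        exact this
      · obtain ⟨hlb, heqee⟩ := heei_spec ((k+1)/2) (by omega) hzX
        have himB' : γp (k+1) '' Set.Icc 0 1
            = ιβ '' Set.Icc (σ' (3*eei ((k+1)/2))) (σ' (3*eei ((k+1)/2)+2)) := by
          rw [hγpB (k+1) hk1 hke1 hzX]
          exact subArc_image ιβ (hσ'lt (by omega) (by omega))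
        rintro q ⟨hq1, hq2⟩
        rw [himC'] at hq1
        rw [himB'] at hq2
        have hqr : q ∈ Set.range ια := Set.image_subset_range _ _ hq1
        have hH := hH2 (eei ((k+1)/2)) hlb q hq2 hqr
        rw [heqee] at hH
        rcases hH with hqv | hqv
        · rw [Set.mem_singleton_iff, hqv, hj0]
          exact congrArg f (by omega)
        · exfalso
          have hvq : ια (τ' (3*((k+1)/2)+2)) = f (3*((k+1)/2)+2) := hval2 _ (by omega)
          rw [hqv, ← hvq] at hq1
          exact houtα (3*(k/2)+2) (3*(k/2)+3) (3*((k+1)/2)+2) (by omega) (by omega)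
            (by omega) (by omega) hq1
  -- far pieces are disjoint
  have hfarp : ∀ k l, k+2 ≤ l → l < 2*n-1 →
      γp k '' Set.Icc 0 1 ∩ γp l '' Set.Icc 0 1 = ∅ := by
    intro k l hkl hl
    rw [Set.eq_empty_iff_forall_notMem]
    rintro q ⟨hq1, hq2⟩
    rcases hdesc k (by omega) with ⟨aL, aR, hima, ha1, ha2, ha3, ha4⟩ |
        ⟨lb, hk0, hlb, heeb, himb⟩ <;>
      rcases hdesc l hl with ⟨bL, bR, himb2, hb1, hb2, hb3, hb4⟩ |
        ⟨lb2, hl0, hlb2, heeb2, himb3⟩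
    · -- α, α
      rw [hima] at hq1
      rw [himb2] at hq2
      have hsep : aR < bL := by
        rcases ha4 with ⟨hp, he1, he2⟩ | ⟨hp, he1, he2⟩ <;>
          rcases hb4 with ⟨hp', he1', he2'⟩ | ⟨hp', he1', he2'⟩ <;> omega
      have := hααfar aL aR bL bR ha1 hsep hb1 hb2
      rw [Set.eq_empty_iff_forall_notMem] at this
      exact this q ⟨hq1, hq2⟩
    · -- α, β
      rw [hima] at hq1
      rw [himb3] at hq2
      have hqr : q ∈ Set.range ια := Set.image_subset_range _ _ hq1
      have hH := hH2 lb2 hlb2 q hq2 hqr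
      rw [heeb2] at hH
      rcases hH with hqv | hqv
      · have hvq : ια (τ' (3*(l/2))) = f (3*(l/2)) := hval0 _ (by omega)
        rw [hqv, ← hvq] at hq1
        refine houtα aL aR (3*(l/2)) (by omega) (by omega) (by omega) ?_ hq1
        right
        rcases ha4 with ⟨hp, he1, he2⟩ | ⟨hp, he1, he2⟩ <;> omega
      · have hvq : ια (τ' (3*(l/2)+2)) = f (3*(l/2)+2) := hval2 _ (by omega)
        rw [hqv, ← hvq] at hq1
        refine houtα aL aR (3*(l/2)+2) (by omega) (by omega) (by omega) ?_ hq1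
        right
        rcases ha4 with ⟨hp, he1, he2⟩ | ⟨hp, he1, he2⟩ <;> omega
    · -- β, α
      rw [himb] at hq1
      rw [himb2] at hq2
      have hqr : q ∈ Set.range ια := Set.image_subset_range _ _ hq2
      have hH := hH2 lb hlb q hq1 hqr
      rw [heeb] at hH
      rcases hH with hqv | hqv
      · have hvq : ια (τ' (3*(k/2))) = f (3*(k/2)) := hval0 _ (by omega)
        rw [hqv, ← hvq] at hq2
        refine houtα bL bR (3*(k/2)) (by omega) (by omega) (by omega) ?_ hq2
        left
        rcases hb4 with ⟨hp, he1, he2⟩ | ⟨hp, he1, he2⟩ <;> omega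
      · have hvq : ια (τ' (3*(k/2)+2)) = f (3*(k/2)+2) := hval2 _ (by omega)
        rw [hqv, ← hvq] at hq2
        refine houtα bL bR (3*(k/2)+2) (by omega) (by omega) (by omega) ?_ hq2
        left
        rcases hb4 with ⟨hp, he1, he2⟩ | ⟨hp, he1, he2⟩ <;> omega
    · -- β, β
      rw [himb] at hq1
      rw [himb3] at hq2
      have hlbs : lb < lb2 := by
        by_contra hc
        push_neg at hc
        rcases Nat.eq_or_lt_of_le hc with hc' | hc'
        · subst hc'
          omega
        · have := hee_mono lb2 lb hc' hlb
          omega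
      have := hββfar (3*lb) (3*lb+2) (3*lb2) (3*lb2+2) (by omega) (by omega) (by omega)
        (by omega)
      rw [Set.eq_empty_iff_forall_notMem] at this
      exact this q ⟨hq1, hq2⟩
  -- concatenate everything
  obtain ⟨Γ, hΓc, hΓi, hΓim, hΓv⟩ :=
    concatArcs (2*n-1) (by omega) γp hcontp hinjp hjunp hadjp hfarp
  set Γ' : unitInterval → Z := fun t => Γ (t : ℝ) with hΓ'_def
  have hΓ'c : Continuous Γ' := hΓc.comp continuous_subtype_val
  have hΓ'i : Function.Injective Γ' := by
    intro t1 t2 h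
    exact Subtype.ext (hΓi t1.2 t2.2 h)
  have hΓ'emb : Topology.IsEmbedding Γ' := (hΓ'c.isClosedEmbedding hΓ'i).isEmbedding
  -- the local visiting parameters
  have key : ∀ i : Fin n, ∃ s : ℝ, 0 < s ∧ s < 1 ∧ γp (2*(i:ℕ)) s = z i := by
    intro i
    have hin := i.isLt
    have his : (2*(i:ℕ)) < 2*n-1 := by omega
    have hke : (2*(i:ℕ)) % 2 = 0 := by omega
    have hdiv : (2*(i:ℕ))/2 = (i:ℕ) := by omega
    have hzzi : z'' (i:ℕ) = z i := by rw [hz''eq _ hin]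
    by_cases hzX : z'' (i:ℕ) ∈ X
    · have h1 : τ' (3*(i:ℕ)) < τ' (3*(i:ℕ)+1) := hτ'lt (by omega) (by omega)
      have h2 : τ' (3*(i:ℕ)+1) < τ' (3*(i:ℕ)+2) := hτ'lt (by omega) (by omega)
      refine ⟨((τ' (3*(i:ℕ)+1) : ℝ) - ((τ' (3*(i:ℕ)) : unitInterval) : ℝ))
          / (((τ' (3*(i:ℕ)+2) : unitInterval) : ℝ) - ((τ' (3*(i:ℕ)) : unitInterval) : ℝ)),
        ?_, ?_, ?_⟩
      · exact (subArc_eval_mem ια h1 h2).1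
      · exact (subArc_eval_mem ια h1 h2).2
      · have hzX2 : z'' ((2*(i:ℕ))/2) ∈ X := by rw [hdiv]; exact hzX
        rw [hγpA (2*(i:ℕ)) his hke hzX2, hdiv]
        rw [subArc_eval ια (h1.trans h2) h1.le h2.le]
        have hv := hval1' (i:ℕ) hin
        rw [if_pos hzX] at hv
        rw [show ια (τ' (3*(i:ℕ)+1)) = z'' (i:ℕ) from hv, hzzi]
    · obtain ⟨hlb, heq⟩ := heei_spec (i:ℕ) hin hzX
      have h1 : σ' (3*eei (i:ℕ)) < σ' (3*eei (i:ℕ)+1) := hσ'lt (by omega) (by omega)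
      have h2 : σ' (3*eei (i:ℕ)+1) < σ' (3*eei (i:ℕ)+2) := hσ'lt (by omega) (by omega)
      refine ⟨((σ' (3*eei (i:ℕ)+1) : ℝ) - ((σ' (3*eei (i:ℕ)) : unitInterval) : ℝ))
          / (((σ' (3*eei (i:ℕ)+2) : unitInterval) : ℝ) - ((σ' (3*eei (i:ℕ)) : unitInterval) : ℝ)),
        ?_, ?_, ?_⟩
      · exact (subArc_eval_mem ιβ h1 h2).1
      · exact (subArc_eval_mem ιβ h1 h2).2
      · have hzX2 : z'' ((2*(i:ℕ))/2) ∉ X := by rw [hdiv]; exact hzX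
        rw [hγpB (2*(i:ℕ)) his hke hzX2, hdiv]
        rw [subArc_eval ιβ (h1.trans h2) h1.le h2.le]
        have hv := (hyval' (eei (i:ℕ)) hlb).2.1
        rw [heq] at hv
        rw [show ιβ (σ' (3*eei (i:ℕ)+1)) = z'' (i:ℕ) from hv, hzzi]
  choose locs hlocs1 hlocs2 hlocs3 using key
  have hden : (0:ℝ) < ((2*n-1 : ℕ) : ℝ) := by
    have : (1:ℕ) ≤ 2*n-1 := by omega
    exact_mod_cast Nat.lt_of_lt_of_le Nat.zero_lt_one this
  have htmem : ∀ i : Fin n, (((2*(i:ℕ) : ℕ) : ℝ) + locs i)/((2*n-1 : ℕ) : ℝ) ∈ unitInterval := by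
    intro i
    have hin := i.isLt
    have h1 := hlocs1 i
    have h2 := hlocs2 i
    constructor
    · apply div_nonneg _ hden.le
      positivity
    · rw [div_le_one hden]
      have : ((2*(i:ℕ) : ℕ) : ℝ) + 1 ≤ ((2*n-1 : ℕ) : ℝ) := by
        have : (2*(i:ℕ) : ℕ) + 1 ≤ 2*n-1 := by omega
        exact_mod_cast this
      linarith
  set tfin : Fin n → unitInterval :=
    fun i => ⟨(((2*(i:ℕ) : ℕ) : ℝ) + locs i)/((2*n-1 : ℕ) : ℝ), htmem i⟩ with htfin_def
  have htmono : StrictMono tfin := by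
    intro i j hij
    rw [htfin_def]
    show ((((2*(i:ℕ) : ℕ) : ℝ) + locs i)/((2*n-1 : ℕ) : ℝ) : ℝ)
      < (((2*(j:ℕ) : ℕ) : ℝ) + locs j)/((2*n-1 : ℕ) : ℝ)
    rw [div_lt_div_iff₀ hden hden]
    have hij' : (i:ℕ) < (j:ℕ) := hij
    have hc : ((2*(i:ℕ) : ℕ) : ℝ) + 2 ≤ ((2*(j:ℕ) : ℕ) : ℝ) := by
      have : (2*(i:ℕ) : ℕ) + 2 ≤ (2*(j:ℕ) : ℕ) := by omega
      exact_mod_cast this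
    have h1 := hlocs2 i
    have h2 := hlocs1 j
    nlinarith
  refine ⟨Γ', tfin, hΓ'emb, htmono, ?_⟩
  intro i
  have hin := i.isLt
  have hvisit := hΓv (2*(i:ℕ)) (by omega) (locs i) ⟨(hlocs1 i).le, (hlocs2 i).le⟩
  have : Γ' (tfin i) = Γ ((((2*(i:ℕ) : ℕ) : ℝ) + locs i)/((2*n-1 : ℕ) : ℝ)) := rfl
  rw [this]
  rw [hvisit]
  exact hlocs3 i
end
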